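/- arXiv:1310.4760 — 14 statements merged into one kernel-verified Lean document; each statement's English description precedes it below -/
import Mathlib

section
/- A complex N×N matrix A is invertible with ‖A⁻¹‖ ≤ κ if and only if A + B is invertible for every matrix B with ‖B‖ < κ⁻¹. -/
noncomputable section

/-- A complex N×N matrix (as an operator on ℂᴺ) is invertible with ‖A⁻¹‖ ≤ κ iff
A + B is invertible for every B with ‖B‖ < κ⁻¹. -/
theorem stmt_0 (N : ℕ) (A : EuclideanSpace ℂ (Fin N) →L[ℂ] EuclideanSpace ℂ (Fin N))
    (κ : ℝ) (hκ : 0 < κ) :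
    (IsUnit A ∧ ‖Ring.inverse A‖ ≤ κ) ↔
      ∀ B : EuclideanSpace ℂ (Fin N) →L[ℂ] EuclideanSpace ℂ (Fin N),
        ‖B‖ < κ⁻¹ → IsUnit (A + B) := by
  constructor
  · rintro ⟨hA, hnorm⟩ B hB
    have h1 : ‖-(Ring.inverse A * B)‖ < 1 := by
      rw [norm_neg]
      calc ‖Ring.inverse A * B‖ ≤ ‖Ring.inverse A‖ * ‖B‖ := norm_mul_le _ _
        _ ≤ κ * ‖B‖ := by gcongr
        _ < κ * κ⁻¹ := (mul_lt_mul_iff_right₀ hκ).2 hB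
        _ = 1 := mul_inv_cancel₀ hκ.ne'
    have key : A + B = A * (1 + Ring.inverse A * B) := by
      rw [mul_add, mul_one, ← mul_assoc, Ring.mul_inverse_cancel A hA, one_mul]
    rw [key]
    exact hA.mul ⟨Units.oneSub _ h1, by rw [Units.val_oneSub, sub_neg_eq_add]⟩
  · intro h
    have hA : IsUnit A := by
      have := h 0 (by rw [norm_zero]; exact inv_pos.2 hκ)
      simpa using this
    refine ⟨hA, ?_⟩
    by_contra hc
    obtain ⟨x, hx⟩ := not_forall.1
      (mt (ContinuousLinearMap.opNorm_le_iff hκ.le).2 hc)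
    push_neg at hx
    set u := Ring.inverse A x with hu
    have hAu : A u = x := by
      rw [hu, ← ContinuousLinearMap.mul_apply, Ring.mul_inverse_cancel A hA,
        ContinuousLinearMap.one_apply]
    have hunorm : 0 < ‖u‖ := lt_of_le_of_lt (by positivity) hx
    have hune : u ≠ 0 := norm_pos_iff.1 hunorm
    have hxne : x ≠ 0 := fun hx0 => hune (by rw [hu, hx0, map_zero])
    have hxnorm : 0 < ‖x‖ := norm_pos_iff.2 hxne
    set B := (innerSL ℂ u).smulRight ((-(((‖u‖ : ℂ))^2)⁻¹) • x) with hBdef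
    have hBnorm : ‖B‖ < κ⁻¹ := by
      rw [hBdef, ContinuousLinearMap.norm_smulRight_apply, innerSL_apply_norm,
        norm_smul]
      have : ‖(-(((‖u‖ : ℂ))^2)⁻¹)‖ = (‖u‖^2)⁻¹ := by
        rw [norm_neg, norm_inv]
        norm_cast
        simp [abs_of_nonneg (norm_nonneg u)]
      rw [this, show ‖u‖ * ((‖u‖^2)⁻¹ * ‖x‖) = ‖x‖ / ‖u‖ by
        field_simp]
      rw [div_lt_iff₀ hunorm, inv_mul_eq_div, lt_div_iff₀ hκ]
      calc ‖x‖ * κ = κ * ‖x‖ := mul_comm _ _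
        _ < ‖u‖ := hx
    have hABu : (A + B) u = 0 := by
      have hin : (innerSL ℂ u) u = ((‖u‖ : ℂ))^2 := by
        simp
      rw [ContinuousLinearMap.add_apply, hAu, hBdef,
        ContinuousLinearMap.smulRight_apply, hin, smul_smul]
      rw [mul_neg, mul_inv_cancel₀ (by exact_mod_cast pow_ne_zero 2 (by exact_mod_cast hunorm.ne' : (‖u‖:ℂ) ≠ 0))]
      simp
    obtain ⟨e, he⟩ := h B hBnorm
    apply hune
    have hinv : e.inv ((A + B) u) = u := by
      rw [← he, ← ContinuousLinearMap.mul_apply, e.inv_val,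
        ContinuousLinearMap.one_apply]
    rw [← hinv, hABu, map_zero]
end
end

section
/- If a square matrix A satisfies ‖exp(itA)‖ ≤ C for all real t, then every eigenvalue of A is real. -/
noncomputable section

lemma exp_apply_eigenvector {E : Type*} [NormedAddCommGroup E] [NormedSpace ℂ E]
    [CompleteSpace E] (B : E →L[ℂ] E) (v : E) (μ : ℂ) (hv : B v = μ • v) :
    (NormedSpace.exp B) v = Complex.exp μ • v := by
  have hpow : ∀ n : ℕ, (B ^ n) v = μ ^ n • v := by
    intro n
    induction n with
    | zero => simp
    | succ n ih =>
      rw [pow_succ, pow_succ]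
      simp [ContinuousLinearMap.mul_apply, ih, hv, smul_smul, mul_comm]
  have hsum : Summable fun n : ℕ => ((n.factorial : ℂ)⁻¹) • B ^ n :=
    NormedSpace.expSeries_summable' (𝕂 := ℂ) B
  rw [NormedSpace.exp_eq_tsum (𝕂 := ℂ)]
  have h1 : (∑' n : ℕ, ((n.factorial : ℂ)⁻¹) • B ^ n) v
      = ∑' n : ℕ, (((n.factorial : ℂ)⁻¹) • B ^ n) v :=
    (ContinuousLinearMap.apply ℂ E v).map_tsum hsum
  calc ((fun x : E →L[ℂ] E => ∑' n : ℕ, ((n.factorial : ℂ)⁻¹) • x ^ n) B) v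
      = ∑' n : ℕ, (((n.factorial : ℂ)⁻¹) • B ^ n) v := h1
    _ = ∑' n : ℕ, (((n.factorial : ℂ)⁻¹) * μ ^ n) • v := by
        simp only [ContinuousLinearMap.coe_smul', Pi.smul_apply, hpow, smul_smul]
    _ = (∑' n : ℕ, ((n.factorial : ℂ)⁻¹) * μ ^ n) • v :=
        Summable.tsum_smul_const (NormedSpace.expSeries_summable' (𝕂 := ℂ) μ) v
    _ = Complex.exp μ • v := by
        congr 1
        rw [Complex.exp_eq_exp_ℂ, NormedSpace.exp_eq_tsum (𝕂 := ℂ)]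
        simp [smul_eq_mul]

/-- If ‖exp(itA)‖ ≤ C for all real t, then every eigenvalue of A is real. -/
theorem stmt_2 (N : ℕ) (A : EuclideanSpace ℂ (Fin N) →L[ℂ] EuclideanSpace ℂ (Fin N))
    (C : ℝ)
    (h : ∀ t : ℝ, ‖NormedSpace.exp ((t : ℂ) • Complex.I • A)‖ ≤ C) :
    ∀ μ : ℂ,
      Module.End.HasEigenvalue
        (A : EuclideanSpace ℂ (Fin N) →ₗ[ℂ] EuclideanSpace ℂ (Fin N)) μ → μ.im = 0 := by
  intro μ hμ
  obtain ⟨v, hv⟩ := hμ.exists_hasEigenvector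
  have hv0 : v ≠ 0 := hv.right
  have hAv : A v = μ • v := hv.apply_eq_smul
  by_contra him
  have hvpos : 0 < ‖v‖ := norm_pos_iff.mpr hv0
  have key : ∀ t : ℝ, Real.exp (-(t * μ.im)) ≤ C := by
    intro t
    have hBv : ((t : ℂ) • Complex.I • A) v = ((t : ℂ) * (Complex.I * μ)) • v := by
      simp [ContinuousLinearMap.smul_apply, hAv, smul_smul, mul_assoc]
    have hexp := exp_apply_eigenvector ((t : ℂ) • Complex.I • A) v _ hBv
    have hnorm : ‖(NormedSpace.exp ((t : ℂ) • Complex.I • A)) v‖ ≤ C * ‖v‖ := by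
      calc ‖(NormedSpace.exp ((t : ℂ) • Complex.I • A)) v‖
          ≤ ‖NormedSpace.exp ((t : ℂ) • Complex.I • A)‖ * ‖v‖ :=
            ContinuousLinearMap.le_opNorm _ v
        _ ≤ C * ‖v‖ := by gcongr; exact h t
    rw [hexp, norm_smul, Complex.norm_exp] at hnorm
    have hre : ((t : ℂ) * (Complex.I * μ)).re = -(t * μ.im) := by
      simp [Complex.mul_re]
    rw [hre] at hnorm
    exact le_of_mul_le_mul_right hnorm hvpos
  -- choose t making -(t * μ.im) arbitrarily large
  have hC1 : (1 : ℝ) ≤ C := by simpa using key 0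
  set t₀ : ℝ := -(Real.log (C + 1) + 1) / μ.im with ht₀
  have := key t₀
  have htval : -(t₀ * μ.im) = Real.log (C + 1) + 1 := by
    rw [ht₀]
    field_simp
  rw [htval] at this
  have hCpos : (0 : ℝ) < C + 1 := by linarith
  have : C + 1 < Real.exp (Real.log (C + 1) + 1) := by
    rw [Real.exp_add, Real.exp_log hCpos]
    nlinarith [Real.exp_one_gt_d9, hCpos]
  linarith [key t₀, this, htval ▸ key t₀]
end
end

section
/- If ‖exp(itA)‖ ≤ C for all t ∈ ℝ, then all eigenvalues of A are real and semi-simple, and each spectral projector Π satisfies ‖Π‖ ≤ C. -/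
set_option maxHeartbeats 1000000

noncomputable section

namespace Stmt4Aux

variable {N : ℕ}

local notation "Sp" => EuclideanSpace ℂ (Fin N)

/-- scalar factor `e^{-iμt}` -/
def φ (μ : ℂ) (t : ℝ) : ℂ := Complex.exp (-(Complex.I * μ) * (t : ℂ))

/-- the semigroup `e^{itA}` -/
def Ex (A : Sp →L[ℂ] Sp) (t : ℝ) : Sp →L[ℂ] Sp :=
  NormedSpace.exp ((t : ℂ) • Complex.I • A)

/-- `g A μ z t = e^{-iμt} e^{itA} z` -/
def g (A : Sp →L[ℂ] Sp) (μ : ℂ) (z : Sp) (t : ℝ) : Sp := φ μ t • Ex A t z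

lemma exp_eig (L : Sp →L[ℂ] Sp) (c : ℂ) (v : Sp) (hv : L v = c • v) :
    NormedSpace.exp L v = Complex.exp c • v := by
  have hpow : ∀ n : ℕ, (L ^ n) v = c ^ n • v := by
    intro n
    induction n with
    | zero => simp
    | succ n ih =>
      rw [pow_succ, ContinuousLinearMap.mul_apply, hv, map_smul, ih, smul_smul, ← pow_succ']
  have hsum : Summable (fun n : ℕ => ((n.factorial : ℂ))⁻¹ • L ^ n) :=
    NormedSpace.expSeries_summable' L
  have hsumc : Summable (fun n : ℕ => ((n.factorial : ℂ))⁻¹ • c ^ n) :=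
    NormedSpace.expSeries_summable' c
  have h1 : NormedSpace.exp L v = ∑' n : ℕ, ((n.factorial : ℂ))⁻¹ • (L ^ n) v := by
    rw [NormedSpace.exp_eq_tsum ℂ]
    simpa using (ContinuousLinearMap.apply ℂ Sp v).map_tsum hsum
  rw [h1]
  have h2 : ∀ n : ℕ, ((n.factorial : ℂ))⁻¹ • (L ^ n) v
      = (((n.factorial : ℂ))⁻¹ • c ^ n) • v := by
    intro n; rw [hpow, smul_smul, smul_eq_mul]
  rw [tsum_congr h2, hsumc.tsum_smul_const]
  congr 1
  rw [Complex.exp_eq_exp_ℂ, NormedSpace.exp_eq_tsum ℂ]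

lemma Ex_eig (A : Sp →L[ℂ] Sp) (μ : ℂ) (v : Sp) (hv : A v = μ • v) (t : ℝ) :
    Ex A t v = Complex.exp ((t : ℂ) * (Complex.I * μ)) • v := by
  apply exp_eig
  rw [ContinuousLinearMap.smul_apply, ContinuousLinearMap.smul_apply, hv,
    smul_smul, smul_smul, mul_assoc]

lemma g_eig (A : Sp →L[ℂ] Sp) (μ : ℂ) (v : Sp) (hv : A v = μ • v) (t : ℝ) :
    g A μ v t = v := by
  rw [g, Ex_eig A μ v hv t, φ, smul_smul, ← Complex.exp_add]
  have : -(Complex.I * μ) * (t : ℂ) + (t : ℂ) * (Complex.I * μ) = 0 := by ring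
  rw [this, Complex.exp_zero, one_smul]

lemma g_cont (A : Sp →L[ℂ] Sp) (μ : ℂ) (z : Sp) : Continuous (g A μ z) := by
  have h1 : Continuous fun t : ℝ => (t : ℂ) • Complex.I • A :=
    Complex.continuous_ofReal.smul continuous_const
  have h2 : Continuous fun t : ℝ => Ex A t :=
    by let +nondep : NormedAlgebra ℚ (Sp →L[ℂ] Sp) := .restrictScalars ℚ ℂ _
       exact (NormedSpace.exp_continuous (𝔸 := Sp →L[ℂ] Sp)).comp h1
  have h3 : Continuous fun t : ℝ => φ μ t :=
    Complex.continuous_exp.comp (continuous_const.mul Complex.continuous_ofReal)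
  exact h3.smul (h2.clm_apply continuous_const)

lemma g_deriv (A : Sp →L[ℂ] Sp) (μ : ℂ) (z : Sp) (t : ℝ) :
    HasDerivAt (g A μ z) (Complex.I • g A μ ((A - μ • 1) z) t) t := by
  set B : Sp →L[ℂ] Sp := Complex.I • A with hB
  have hE : HasDerivAt (fun u : ℝ => NormedSpace.exp ((u : ℂ) • B))
      (NormedSpace.exp ((t : ℂ) • B) * B) t := by
    have := hasDerivAt_exp_smul_const (𝕂 := ℝ) B t
    exact this
  have hEz : HasDerivAt (fun u : ℝ => Ex A u z)
      ((NormedSpace.exp ((t : ℂ) • B) * B) z) t := by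
    have := ((ContinuousLinearMap.apply ℂ Sp z).restrictScalars
      ℝ).hasFDerivAt.comp_hasDerivAt t hE
    exact this
  have hφ : HasDerivAt (fun u : ℝ => φ μ u)
      (Complex.exp (-(Complex.I * μ) * (t : ℂ)) * (-(Complex.I * μ))) t := by
    have h1 : HasDerivAt (fun s : ℂ => Complex.exp (-(Complex.I * μ) * s))
        (Complex.exp (-(Complex.I * μ) * (t : ℂ)) * (-(Complex.I * μ))) (t : ℂ) := by
      simpa using ((hasDerivAt_id ((t : ℝ) : ℂ)).const_mul (-(Complex.I * μ))).cexp
    exact h1.comp_ofReal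
  have := hφ.smul hEz
  simp only [g, φ, Ex] at this ⊢
  refine this.congr_deriv ?_
  have hmul : (NormedSpace.exp ((t : ℂ) • B) * B) z
      = NormedSpace.exp ((t : ℂ) • B) (Complex.I • A z) := by
    rw [ContinuousLinearMap.mul_apply, hB, ContinuousLinearMap.smul_apply]
  rw [hmul]
  have happ : (A - μ • 1) z = A z - μ • z := by
    simp [ContinuousLinearMap.sub_apply]
  rw [happ, map_sub, map_smul, map_smul]
  set w₁ := NormedSpace.exp ((t : ℂ) • B) (A z)
  set w₂ := NormedSpace.exp ((t : ℂ) • B) z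
  set a := Complex.exp (-(Complex.I * μ) * (t : ℂ))
  module

lemma g_integral (A : Sp →L[ℂ] Sp) (μ : ℂ) (z : Sp) (T : ℝ) :
    ∫ t in (0:ℝ)..T, g A μ ((A - μ • 1) z) t = (-Complex.I) • (g A μ z T - z) := by
  have hderiv : ∀ t ∈ Set.uIcc (0:ℝ) T,
      HasDerivAt (g A μ z) (Complex.I • g A μ ((A - μ • 1) z) t) t :=
    fun t _ => g_deriv A μ z t
  have hint : IntervalIntegrable (fun t => Complex.I • g A μ ((A - μ • 1) z) t)
      MeasureTheory.volume 0 T :=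
    (Continuous.intervalIntegrable (u := fun t => Complex.I • g A μ ((A - μ • 1) z) t)
      ((g_cont A μ _).const_smul Complex.I) 0 T)
  have h0 : g A μ z 0 = z := by
    have hz0 : ((0:ℝ) : ℂ) • Complex.I • A = 0 := by
      rw [Complex.ofReal_zero]
      exact zero_smul ℂ (Complex.I • A)
    rw [g, φ, Ex, hz0, NormedSpace.exp_zero, ContinuousLinearMap.one_apply,
      Complex.ofReal_zero, mul_zero, Complex.exp_zero, one_smul]
  have := intervalIntegral.integral_eq_sub_of_hasDerivAt hderiv hint
  rw [intervalIntegral.integral_smul, h0] at this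
  rw [← this, smul_smul]
  norm_num

lemma norm_Ex_le (A : Sp →L[ℂ] Sp) (C : ℝ)
    (h : ∀ t : ℝ, ‖NormedSpace.exp ((t : ℂ) • Complex.I • A)‖ ≤ C)
    (x : Sp) (t : ℝ) : ‖Ex A t x‖ ≤ C * ‖x‖ :=
  le_trans ((Ex A t).le_opNorm x)
    (mul_le_mul_of_nonneg_right (h t) (norm_nonneg x))

lemma norm_φ (μ : ℂ) (hμ : μ.im = 0) (t : ℝ) : ‖φ μ t‖ = 1 := by
  rw [φ, Complex.norm_exp]
  have : (-(Complex.I * μ) * (t : ℂ)).re = μ.im * t := by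
    simp [Complex.mul_re, Complex.mul_im]
  rw [this, hμ]
  simp

lemma g_norm_le (A : Sp →L[ℂ] Sp) (C : ℝ) (μ : ℂ)
    (h : ∀ t : ℝ, ‖NormedSpace.exp ((t : ℂ) • Complex.I • A)‖ ≤ C)
    (hμ : μ.im = 0) (x : Sp) (t : ℝ) : ‖g A μ x t‖ ≤ C * ‖x‖ := by
  rw [g, norm_smul, norm_φ μ hμ, one_mul]
  exact norm_Ex_le A C h x t

lemma key_bound (A : Sp →L[ℂ] Sp) (C : ℝ) (μ : ℂ)
    (h : ∀ t : ℝ, ‖NormedSpace.exp ((t : ℂ) • Complex.I • A)‖ ≤ C)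
    (hμ : μ.im = 0) (z : Sp) (T : ℝ) :
    ‖∫ t in (0:ℝ)..T, g A μ ((A - μ • 1) z) t‖ ≤ (C + 1) * ‖z‖ := by
  rw [g_integral, norm_smul]
  have : ‖-Complex.I‖ = 1 := by simp
  rw [this, one_mul]
  calc ‖g A μ z T - z‖ ≤ ‖g A μ z T‖ + ‖z‖ := norm_sub_le _ _
    _ ≤ C * ‖z‖ + ‖z‖ := by linarith [g_norm_le A C μ h hμ z T]
    _ = (C + 1) * ‖z‖ := by ring

end Stmt4Aux

open Stmt4Aux

/-- If ‖exp(itA)‖ ≤ C for all t ∈ ℝ, then every eigenvalue of A is real and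
semi-simple, and every spectral projector (projection onto the eigenspace along
the range of A - μ) has norm at most C. -/
theorem stmt_4 (N : ℕ) (A : EuclideanSpace ℂ (Fin N) →L[ℂ] EuclideanSpace ℂ (Fin N))
    (C : ℝ)
    (h : ∀ t : ℝ, ‖NormedSpace.exp ((t : ℂ) • Complex.I • A)‖ ≤ C) :
    ∀ μ : ℂ,
      Module.End.HasEigenvalue
        (A : EuclideanSpace ℂ (Fin N) →ₗ[ℂ] EuclideanSpace ℂ (Fin N)) μ →
      μ.im = 0 ∧
      LinearMap.ker ((A - μ • 1 : EuclideanSpace ℂ (Fin N) →L[ℂ] EuclideanSpace ℂ (Fin N)) : EuclideanSpace ℂ (Fin N) →ₗ[ℂ] EuclideanSpace ℂ (Fin N)) ⊓ LinearMap.range ((A - μ • 1 : EuclideanSpace ℂ (Fin N) →L[ℂ] EuclideanSpace ℂ (Fin N)) : EuclideanSpace ℂ (Fin N) →ₗ[ℂ] EuclideanSpace ℂ (Fin N)) = ⊥ ∧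
      ∀ Pr : EuclideanSpace ℂ (Fin N) →L[ℂ] EuclideanSpace ℂ (Fin N),
        Pr * Pr = Pr →
        LinearMap.range (Pr : EuclideanSpace ℂ (Fin N) →ₗ[ℂ] EuclideanSpace ℂ (Fin N)) = LinearMap.ker ((A - μ • 1 : EuclideanSpace ℂ (Fin N) →L[ℂ] EuclideanSpace ℂ (Fin N)) : EuclideanSpace ℂ (Fin N) →ₗ[ℂ] EuclideanSpace ℂ (Fin N)) →
        LinearMap.ker (Pr : EuclideanSpace ℂ (Fin N) →ₗ[ℂ] EuclideanSpace ℂ (Fin N)) = LinearMap.range ((A - μ • 1 : EuclideanSpace ℂ (Fin N) →L[ℂ] EuclideanSpace ℂ (Fin N)) : EuclideanSpace ℂ (Fin N) →ₗ[ℂ] EuclideanSpace ℂ (Fin N)) →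
        ‖Pr‖ ≤ C := by
  intro μ hμ
  obtain ⟨v, hv⟩ := hμ.exists_hasEigenvector
  have hv0 : v ≠ 0 := hv.right
  have hvA : A v = μ • v := hv.apply_eq_smul
  have hvnorm : 0 < ‖v‖ := norm_pos_iff.mpr hv0
  -- the basic exponential bound on eigenvectors
  have hexp : ∀ t : ℝ, Real.exp (-(t * μ.im)) ≤ C := by
    intro t
    have h1 : ‖Ex A t v‖ ≤ C * ‖v‖ := norm_Ex_le A C h v t
    rw [Ex_eig A μ v hvA t, norm_smul, Complex.norm_exp] at h1
    have h2 : ((t : ℂ) * (Complex.I * μ)).re = -(t * μ.im) := by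
      simp [Complex.mul_re, Complex.mul_im]
    rw [h2] at h1
    exact le_of_mul_le_mul_right h1 hvnorm
  have hC1 : (1 : ℝ) ≤ C := by simpa using hexp 0
  -- eigenvalue is real
  have him : μ.im = 0 := by
    by_contra him
    have ht := hexp (-(Real.log (C + 1)) / μ.im)
    rw [div_mul_cancel₀ _ him] at ht
    rw [neg_neg, Real.exp_log (by linarith)] at ht
    linarith
  refine ⟨him, ?_, ?_⟩
  · -- semisimplicity
    rw [eq_bot_iff]
    intro w hw
    obtain ⟨hwker, hwrange⟩ := Submodule.mem_inf.mp hw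
    obtain ⟨z, hz⟩ := hwrange
    have hwA : A w = μ • w := by
      have := LinearMap.mem_ker.mp hwker
      have h1 : A w - μ • w = 0 := by
        simpa [ContinuousLinearMap.sub_apply] using this
      linear_combination (norm := module) h1
    have hgconst : ∀ t : ℝ, g A μ ((A - μ • 1) z) t = w := by
      intro t
      rw [show (A - μ • 1) z = w from hz]
      exact g_eig A μ w hwA t
    have hbig : ∀ T : ℝ, T • w = ∫ t in (0:ℝ)..T, g A μ ((A - μ • 1) z) t := by
      intro T
      rw [intervalIntegral.integral_congr (fun t _ => (hgconst t))]
      rw [intervalIntegral.integral_const, sub_zero]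
    have hnorm : ∀ T : ℝ, 0 ≤ T → T * ‖w‖ ≤ (C + 1) * ‖z‖ := by
      intro T hT
      have := key_bound A C μ h him z T
      rw [← hbig T, norm_smul, Real.norm_eq_abs, abs_of_nonneg hT] at this
      exact this
    have hw0 : ‖w‖ = 0 := by
      by_contra hw0
      have hwpos : 0 < ‖w‖ := lt_of_le_of_ne (norm_nonneg w) (Ne.symm hw0)
      set T := ((C + 1) * ‖z‖ + 1) / ‖w‖ with hT
      have hTpos : 0 ≤ T := by positivity
      have := hnorm T hTpos
      rw [hT, div_mul_cancel₀ _ (ne_of_gt hwpos)] at this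
      linarith
    simpa using norm_eq_zero.mp hw0
  · -- projector bound
    intro Pr hPr hrange hker
    refine Pr.opNorm_le_bound (by linarith) (fun x => ?_)
    -- u = Pr x is in the kernel of A - μ
    have huker : Pr x ∈ LinearMap.ker ((A - μ • 1 : EuclideanSpace ℂ (Fin N) →L[ℂ] EuclideanSpace ℂ (Fin N)) : EuclideanSpace ℂ (Fin N) →ₗ[ℂ] EuclideanSpace ℂ (Fin N)) := by
      rw [← hrange]; exact LinearMap.mem_range_self _ x
    have huA : A (Pr x) = μ • Pr x := by
      have h1 : (A - μ • 1) (Pr x) = 0 := LinearMap.mem_ker.mp huker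
      have h2 : A (Pr x) - μ • Pr x = 0 := by
        simpa [ContinuousLinearMap.sub_apply] using h1
      linear_combination (norm := module) h2
    -- x - Pr x is in the range of A - μ
    have hwrange : x - Pr x ∈ LinearMap.range ((A - μ • 1 : EuclideanSpace ℂ (Fin N) →L[ℂ] EuclideanSpace ℂ (Fin N)) : EuclideanSpace ℂ (Fin N) →ₗ[ℂ] EuclideanSpace ℂ (Fin N)) := by
      rw [← hker, LinearMap.mem_ker, map_sub]
      have : Pr (Pr x) = Pr x := by
        have := congrFun (congrArg (fun (f : EuclideanSpace ℂ (Fin N) →L[ℂ]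
          EuclideanSpace ℂ (Fin N)) => (f : EuclideanSpace ℂ (Fin N) →
          EuclideanSpace ℂ (Fin N))) hPr) x
        simpa [ContinuousLinearMap.mul_apply] using this
      rw [ContinuousLinearMap.coe_coe, this, sub_self]
    obtain ⟨z, hz⟩ := hwrange
    have hdecomp : ∀ t : ℝ, g A μ x t = Pr x + g A μ ((A - μ • 1) z) t := by
      intro t
      have hx : x = Pr x + (x - Pr x) := by abel
      calc g A μ x t = φ μ t • Ex A t (Pr x + (x - Pr x)) := by rw [← hx]; rfl
        _ = φ μ t • Ex A t (Pr x) + φ μ t • Ex A t (x - Pr x) := by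
            rw [map_add, smul_add]
        _ = Pr x + g A μ ((A - μ • 1) z) t := by
            rw [show (A - μ • 1) z = x - Pr x from hz]
            congr 1
            exact g_eig A μ (Pr x) huA t
    have hint : ∀ T : ℝ, T • Pr x
        = (∫ t in (0:ℝ)..T, g A μ x t) - ∫ t in (0:ℝ)..T, g A μ ((A - μ • 1) z) t := by
      intro T
      have h1 : (∫ t in (0:ℝ)..T, g A μ x t)
          = (∫ t in (0:ℝ)..T, (Pr x : EuclideanSpace ℂ (Fin N)))
            + ∫ t in (0:ℝ)..T, g A μ ((A - μ • 1) z) t := by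
        rw [← intervalIntegral.integral_add (intervalIntegrable_const)
          ((g_cont A μ _).intervalIntegrable 0 T)]
        exact intervalIntegral.integral_congr (fun t _ => hdecomp t)
      rw [h1, intervalIntegral.integral_const, sub_zero]
      abel
    have hbound : ∀ T : ℝ, 0 < T → ‖Pr x‖ ≤ C * ‖x‖ + (C + 1) * ‖z‖ / T := by
      intro T hT
      have h1 : ‖(∫ t in (0:ℝ)..T, g A μ x t)‖ ≤ C * ‖x‖ * |T - 0| :=
        intervalIntegral.norm_integral_le_of_norm_le_const
          (fun s _ => g_norm_le A C μ h him x s)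
      rw [sub_zero, abs_of_pos hT] at h1
      have h2 := key_bound A C μ h him z T
      have h3 : T * ‖Pr x‖ ≤ C * ‖x‖ * T + (C + 1) * ‖z‖ := by
        have h4 : ‖T • Pr x‖ ≤ C * ‖x‖ * T + (C + 1) * ‖z‖ := by
          rw [hint T]
          calc ‖(∫ t in (0:ℝ)..T, g A μ x t) - ∫ t in (0:ℝ)..T, g A μ ((A - μ • 1) z) t‖
              ≤ ‖(∫ t in (0:ℝ)..T, g A μ x t)‖
                + ‖∫ t in (0:ℝ)..T, g A μ ((A - μ • 1) z) t‖ := norm_sub_le _ _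
            _ ≤ C * ‖x‖ * T + (C + 1) * ‖z‖ := add_le_add h1 h2
        rwa [norm_smul, Real.norm_eq_abs, abs_of_pos hT] at h4
      have h5 : ‖Pr x‖ ≤ (C * ‖x‖ * T + (C + 1) * ‖z‖) / T := by
        rw [le_div_iff₀ hT]
        linarith [h3]
      calc ‖Pr x‖ ≤ (C * ‖x‖ * T + (C + 1) * ‖z‖) / T := h5
        _ = C * ‖x‖ + (C + 1) * ‖z‖ / T := by field_simp
    have hlim : Filter.Tendsto (fun T : ℝ => C * ‖x‖ + (C + 1) * ‖z‖ / T)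
        Filter.atTop (nhds (C * ‖x‖ + 0)) :=
      tendsto_const_nhds.add (Filter.Tendsto.div_atTop tendsto_const_nhds Filter.tendsto_id)
    rw [add_zero] at hlim
    refine ge_of_tendsto hlim ?_
    filter_upwards [Filter.eventually_gt_atTop 0] with T hT using hbound T hT
end
end

section
/- If A is a diagonalizable matrix with real eigenvalues λⱼ and spectral projectors Πⱼ bounded by C, then S = Σⱼ Πⱼ* Πⱼ is a Hermitian matrix satisfying S ≥ N⁻¹ Id, ‖S‖ ≤ N C², and S A is Hermitian. -/
noncomputable section

set_option maxHeartbeats 1000000 in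
/-- If A = Σ λⱼ Πⱼ is diagonalizable with (distinct) real eigenvalues and nonzero
spectral projectors bounded by C, then S = Σ Πⱼ* Πⱼ is Hermitian, S ≥ N⁻¹ Id,
‖S‖ ≤ N C², and S A is Hermitian. -/
theorem stmt_5 (N m : ℕ)
    (A : EuclideanSpace ℂ (Fin N) →L[ℂ] EuclideanSpace ℂ (Fin N))
    (lam : Fin m → ℝ)
    (P : Fin m → (EuclideanSpace ℂ (Fin N) →L[ℂ] EuclideanSpace ℂ (Fin N)))
    (C : ℝ) (hC : 0 < C)
    (hdist : Function.Injective lam)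
    (hsum : ∑ j, P j = 1)
    (hprojmul : ∀ j k, P j * P k = if j = k then P j else 0)
    (hne : ∀ j, P j ≠ 0)
    (hbound : ∀ j, ‖P j‖ ≤ C)
    (hA : A = ∑ j, ((lam j : ℂ)) • P j)
    (S : EuclideanSpace ℂ (Fin N) →L[ℂ] EuclideanSpace ℂ (Fin N))
    (hS : S = ∑ j, ContinuousLinearMap.adjoint (P j) * P j) :
    IsSelfAdjoint S ∧
    (∀ u : EuclideanSpace ℂ (Fin N),
        ((N : ℝ))⁻¹ * ‖u‖ ^ 2 ≤ (inner ℂ u (S u) : ℂ).re) ∧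
    ‖S‖ ≤ (N : ℝ) * C ^ 2 ∧
    IsSelfAdjoint (S * A) := by
  classical
  -- m ≤ N
  have hmN : m ≤ N := by
    have hex : ∀ j, ∃ w : EuclideanSpace ℂ (Fin N), P j w ≠ 0 := by
      intro j
      by_contra h
      push_neg at h
      exact hne j (ContinuousLinearMap.ext fun w => by simpa using h w)
    choose w hw using hex
    have key : ∀ j i, P j (P i (w i)) = if j = i then P j (w j) else 0 := by
      intro j i
      have := ContinuousLinearMap.ext_iff.mp (hprojmul j i) (w i)
      rw [ContinuousLinearMap.mul_apply] at this
      by_cases h : j = i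
      · subst h; simpa using this
      · simpa [h] using this
    have hli : LinearIndependent ℂ (fun j => P j (w j)) := by
      rw [linearIndependent_iff']
      intro s g hg j hj
      have h2 := congrArg (P j) hg
      rw [map_sum, map_zero] at h2
      have h3 : ∑ i ∈ s, g i • P j (P i (w i)) = 0 := by
        simpa [map_smul] using h2
      rw [Finset.sum_congr rfl (fun i _ => by rw [key j i])] at h3
      simp only [smul_ite, smul_zero, Finset.sum_ite_eq, hj, if_true] at h3
      exact (smul_eq_zero.mp h3).resolve_right (hw j)
    simpa using hli.fintype_card_le_finrank
  have hre : ∀ u : EuclideanSpace ℂ (Fin N),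
      (inner ℂ u (S u) : ℂ).re = ∑ j, ‖P j u‖ ^ 2 := by
    intro u
    rw [hS]
    simp only [ContinuousLinearMap.sum_apply, inner_sum, ContinuousLinearMap.mul_apply,
      ContinuousLinearMap.adjoint_inner_right, inner_self_eq_norm_sq_to_K]
    simp [← Complex.ofReal_pow]
  have hterm : ∀ j, IsSelfAdjoint (ContinuousLinearMap.adjoint (P j) * P j) := by
    intro j
    show star _ = _
    rw [star_mul, ContinuousLinearMap.star_eq_adjoint,
      ContinuousLinearMap.star_eq_adjoint, ContinuousLinearMap.adjoint_adjoint]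
  have hsa : IsSelfAdjoint S := by
    rw [hS]
    exact Finset.sum_induction _ _ (fun a b ha hb => IsSelfAdjoint.add (R := (EuclideanSpace ℂ (Fin N) →L[ℂ] EuclideanSpace ℂ (Fin N))) ha hb)
      (IsSelfAdjoint.zero (EuclideanSpace ℂ (Fin N) →L[ℂ] EuclideanSpace ℂ (Fin N))) (fun j _ => hterm j)
  refine ⟨hsa, ?_, ?_, ?_⟩
  · intro u
    rw [hre u]
    have h1 : ‖u‖ ≤ ∑ j, ‖P j u‖ := by
      calc ‖u‖ = ‖∑ j, P j u‖ := by
            rw [← ContinuousLinearMap.sum_apply, hsum]; rfl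
        _ ≤ ∑ j, ‖P j u‖ := norm_sum_le _ _
    have h2 : ‖u‖ ^ 2 ≤ (m : ℝ) * ∑ j, ‖P j u‖ ^ 2 := by
      calc ‖u‖ ^ 2 ≤ (∑ j, ‖P j u‖) ^ 2 := by
            apply pow_le_pow_left₀ (norm_nonneg u) h1
        _ ≤ (m : ℝ) * ∑ j, ‖P j u‖ ^ 2 := by
            simpa using sq_sum_le_card_mul_sum_sq (s := Finset.univ)
              (f := fun j => ‖P j u‖)
    have hS2 : (0 : ℝ) ≤ ∑ j, ‖P j u‖ ^ 2 := Finset.sum_nonneg fun j _ => by positivity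
    calc ((N : ℝ))⁻¹ * ‖u‖ ^ 2 ≤ ((N : ℝ))⁻¹ * ((N : ℝ) * ∑ j, ‖P j u‖ ^ 2) := by
          apply mul_le_mul_of_nonneg_left _ (by positivity)
          exact h2.trans (mul_le_mul_of_nonneg_right (by exact_mod_cast hmN) hS2)
      _ = (((N : ℝ))⁻¹ * (N : ℝ)) * ∑ j, ‖P j u‖ ^ 2 := by ring
      _ ≤ 1 * ∑ j, ‖P j u‖ ^ 2 := by
          apply mul_le_mul_of_nonneg_right _ hS2
          rcases Nat.eq_zero_or_pos N with h | h
          · simp [h]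
          · rw [inv_mul_cancel₀ (by positivity)]
      _ = ∑ j, ‖P j u‖ ^ 2 := one_mul _
  · rw [hS]
    calc ‖∑ j, ContinuousLinearMap.adjoint (P j) * P j‖
        ≤ ∑ j, ‖ContinuousLinearMap.adjoint (P j) * P j‖ := norm_sum_le _ _
      _ ≤ ∑ j : Fin m, C ^ 2 := by
          apply Finset.sum_le_sum
          intro j _
          show ‖(ContinuousLinearMap.adjoint (P j)).comp (P j)‖ ≤ C ^ 2
          rw [ContinuousLinearMap.norm_adjoint_comp_self]
          calc ‖P j‖ * ‖P j‖ ≤ C * C :=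
                mul_le_mul (hbound j) (hbound j) (norm_nonneg _) hC.le
            _ = C ^ 2 := (sq C).symm
      _ = (m : ℝ) * C ^ 2 := by simp [mul_comm]
      _ ≤ (N : ℝ) * C ^ 2 := by
          apply mul_le_mul_of_nonneg_right _ (by positivity)
          exact_mod_cast hmN
  · have hSA : S * A = ∑ j, (lam j : ℂ) • (ContinuousLinearMap.adjoint (P j) * P j) := by
      rw [hS, hA, Finset.sum_mul]
      apply Finset.sum_congr rfl
      intro j _
      rw [Finset.mul_sum]
      rw [Finset.sum_eq_single j]
      · rw [mul_smul_comm, mul_assoc, hprojmul j j, if_pos rfl]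
      · intro k _ hk
        rw [mul_smul_comm, mul_assoc, hprojmul j k, if_neg (Ne.symm hk), mul_zero, smul_zero]
      · intro h; exact absurd (Finset.mem_univ j) h
    rw [hSA]
    refine Finset.sum_induction _ _ (fun a b ha hb => IsSelfAdjoint.add (R := (EuclideanSpace ℂ (Fin N) →L[ℂ] EuclideanSpace ℂ (Fin N))) ha hb)
      (IsSelfAdjoint.zero (EuclideanSpace ℂ (Fin N) →L[ℂ] EuclideanSpace ℂ (Fin N))) (fun j _ => ?_)
    show star _ = _
    rw [star_smul, hterm j, Complex.star_def, Complex.conj_ofReal]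
end
end

section
/- Suppose S is a Hermitian positive definite matrix with S ≥ c·Id and ‖S‖ ≤ C, and SA is Hermitian. Then for every complex λ with Im λ ≠ 0, A − λ·Id is invertible and ‖(A − λ·Id)⁻¹‖ ≤ (C/c)|Im λ|⁻¹. -/
noncomputable section

/-- If S is Hermitian with c·Id ≤ S, ‖S‖ ≤ C, and SA is Hermitian, then for
Im λ ≠ 0, A - λ·Id is invertible with ‖(A - λ·Id)⁻¹‖ ≤ (C/c)|Im λ|⁻¹. -/
theorem stmt_6 (N : ℕ)
    (A S : EuclideanSpace ℂ (Fin N) →L[ℂ] EuclideanSpace ℂ (Fin N))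
    (c C : ℝ) (hc : 0 < c) (hcC : c ≤ C)
    (hSsa : IsSelfAdjoint S)
    (hSpos : ∀ u : EuclideanSpace ℂ (Fin N), c * ‖u‖ ^ 2 ≤ (inner ℂ u (S u) : ℂ).re)
    (hSnorm : ‖S‖ ≤ C)
    (hSA : IsSelfAdjoint (S * A)) :
    ∀ z : ℂ, z.im ≠ 0 →
      IsUnit (A - z • 1) ∧
      ‖Ring.inverse (A - z • 1)‖ ≤ (C / c) * |z.im|⁻¹ := by
  intro z hz
  set E := EuclideanSpace ℂ (Fin N)
  set T : E →L[ℂ] E := A - z • 1 with hT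
  have him_pos : 0 < |z.im| := abs_pos.mpr hz
  have key : ∀ u : E, c * |z.im| * ‖u‖ ≤ C * ‖T u‖ := by
    intro u
    have hSu_im : (inner ℂ u (S u) : ℂ).im = 0 := by
      have h := hSsa.isSymmetric u u
      have h2 : (starRingEnd ℂ) (inner ℂ u (S u) : ℂ) = inner ℂ u (S u) := by
        rw [inner_conj_symm]; exact h
      exact Complex.conj_eq_iff_im.mp h2
    have hSAu_im : (inner ℂ u ((S * A) u) : ℂ).im = 0 := by
      have h := hSA.isSymmetric u u
      have h2 : (starRingEnd ℂ) (inner ℂ u ((S * A) u) : ℂ) = inner ℂ u ((S * A) u) := by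
        rw [inner_conj_symm]; exact h
      exact Complex.conj_eq_iff_im.mp h2
    have hexp : (inner ℂ u (S (T u)) : ℂ)
        = inner ℂ u ((S * A) u) - z * (inner ℂ u (S u) : ℂ) := by
      have : S (T u) = (S * A) u - z • S u := by
        simp [hT, ContinuousLinearMap.mul_apply, map_sub, map_smul]
      rw [this, inner_sub_right, inner_smul_right]
    have him : (inner ℂ u (S (T u)) : ℂ).im = -(z.im * (inner ℂ u (S u) : ℂ).re) := by
      rw [hexp]
      rw [ContinuousLinearMap.mul_apply] at hSAu_im
      simp [Complex.sub_im, Complex.mul_im, hSAu_im, hSu_im, ContinuousLinearMap.mul_apply]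
    have hre_nonneg : 0 ≤ (inner ℂ u (S u) : ℂ).re :=
      le_trans (by positivity) (hSpos u)
    have h1 : c * |z.im| * ‖u‖ ^ 2 ≤ |(inner ℂ u (S (T u)) : ℂ).im| := by
      rw [him, abs_neg, abs_mul, abs_of_nonneg hre_nonneg]
      calc c * |z.im| * ‖u‖ ^ 2 = |z.im| * (c * ‖u‖ ^ 2) := by ring
        _ ≤ |z.im| * (inner ℂ u (S u) : ℂ).re :=
            mul_le_mul_of_nonneg_left (hSpos u) (abs_nonneg _)
    have h2 : |(inner ℂ u (S (T u)) : ℂ).im| ≤ ‖(inner ℂ u (S (T u)) : ℂ)‖ :=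
      Complex.abs_im_le_norm _
    have h3 : ‖(inner ℂ u (S (T u)) : ℂ)‖ ≤ ‖u‖ * (C * ‖T u‖) := by
      calc ‖(inner ℂ u (S (T u)) : ℂ)‖ ≤ ‖u‖ * ‖S (T u)‖ := norm_inner_le_norm _ _
        _ ≤ ‖u‖ * (C * ‖T u‖) := by
            apply mul_le_mul_of_nonneg_left _ (norm_nonneg _)
            calc ‖S (T u)‖ ≤ ‖S‖ * ‖T u‖ := S.le_opNorm _
              _ ≤ C * ‖T u‖ := mul_le_mul_of_nonneg_right hSnorm (norm_nonneg _)
    have h4 : c * |z.im| * ‖u‖ ^ 2 ≤ ‖u‖ * (C * ‖T u‖) := le_trans h1 (le_trans h2 h3)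
    rcases eq_or_lt_of_le (norm_nonneg u) with h0 | h0
    · rw [← h0, mul_zero]; exact mul_nonneg (by linarith) (norm_nonneg _)
    · have := h4
      rw [sq] at this
      have h5 : c * |z.im| * ‖u‖ * ‖u‖ ≤ C * ‖T u‖ * ‖u‖ := by
        calc c * |z.im| * ‖u‖ * ‖u‖ = c * |z.im| * (‖u‖ * ‖u‖) := by ring
          _ ≤ ‖u‖ * (C * ‖T u‖) := this
          _ = C * ‖T u‖ * ‖u‖ := by ring
      exact le_of_mul_le_mul_right h5 h0
  have hinj : Function.Injective T := by
    intro u v huv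
    have h : T (u - v) = 0 := by simp [map_sub, huv]
    have := key (u - v)
    rw [h, norm_zero, mul_zero] at this
    have : ‖u - v‖ ≤ 0 := by
      by_contra hcon
      push_neg at hcon
      nlinarith [mul_pos (mul_pos hc him_pos) hcon]
    have : u - v = 0 := by
      rw [← norm_le_zero_iff]; exact this
    exact sub_eq_zero.mp this
  have hsurj : Function.Surjective (T : E →ₗ[ℂ] E) :=
    (LinearMap.injective_iff_surjective (f := (T : E →ₗ[ℂ] E))).mp hinj
  let e : E ≃ₗ[ℂ] E := LinearEquiv.ofBijective (T : E →ₗ[ℂ] E) ⟨hinj, hsurj⟩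
  let e' : E ≃L[ℂ] E := e.toContinuousLinearEquiv
  have hTinv : ∀ v : E, T (e'.symm v) = v := fun v => e.apply_symm_apply v
  have hinvT : ∀ v : E, (e'.symm : E →L[ℂ] E) (T v) = v := fun v => e.symm_apply_apply v
  let U : (E →L[ℂ] E)ˣ :=
    ⟨T, (e'.symm : E →L[ℂ] E),
      ContinuousLinearMap.ext fun v => by
        simpa [ContinuousLinearMap.mul_apply] using hTinv v,
      ContinuousLinearMap.ext fun v => by
        simpa [ContinuousLinearMap.mul_apply] using hinvT v⟩
  refine ⟨⟨U, rfl⟩, ?_⟩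
  have hR : Ring.inverse T = ((e'.symm : E →L[ℂ] E)) := by
    rw [show T = (U : E →L[ℂ] E) from rfl, Ring.inverse_unit]; rfl
  rw [hR]
  apply ContinuousLinearMap.opNorm_le_bound _
    (mul_nonneg (div_nonneg (by linarith) hc.le) (inv_nonneg.mpr (abs_nonneg _)))
  intro v
  have hk := key (e'.symm v)
  rw [hTinv v] at hk
  have hpos : 0 < c * |z.im| := mul_pos hc him_pos
  rw [show C / c * |z.im|⁻¹ * ‖v‖ = (C * ‖v‖) / (c * |z.im|) by field_simp]
  rw [le_div_iff₀ hpos]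
  simp only [ContinuousLinearEquiv.coe_coe]
  nlinarith [hk]
end
end

section
/- If for every λ with Im λ ≠ 0 the resolvent bound ‖(A − λ Id)⁻¹‖ ≤ C |Im λ|⁻¹ holds, then every eigenvalue of A is real and semi-simple, and each spectral projector Π of A satisfies ‖Π‖ ≤ C. -/
set_option maxHeartbeats 1000000
noncomputable section

/-- If the resolvent bound ‖(A - λ)⁻¹‖ ≤ C|Im λ|⁻¹ holds off the real axis, then
all eigenvalues of A are real and semi-simple, with spectral projectors of norm ≤ C. -/
theorem stmt_7 (N : ℕ) (A : EuclideanSpace ℂ (Fin N) →L[ℂ] EuclideanSpace ℂ (Fin N))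
    (C : ℝ)
    (h : ∀ z : ℂ, z.im ≠ 0 →
      IsUnit (A - z • 1) ∧ ‖Ring.inverse (A - z • 1)‖ ≤ C * |z.im|⁻¹) :
    ∀ μ : ℂ,
      Module.End.HasEigenvalue
        (A : EuclideanSpace ℂ (Fin N) →ₗ[ℂ] EuclideanSpace ℂ (Fin N)) μ →
      μ.im = 0 ∧
      LinearMap.ker ((A - μ • 1 : EuclideanSpace ℂ (Fin N) →L[ℂ] EuclideanSpace ℂ (Fin N)) : EuclideanSpace ℂ (Fin N) →ₗ[ℂ] EuclideanSpace ℂ (Fin N)) ⊓ LinearMap.range ((A - μ • 1 : EuclideanSpace ℂ (Fin N) →L[ℂ] EuclideanSpace ℂ (Fin N)) : EuclideanSpace ℂ (Fin N) →ₗ[ℂ] EuclideanSpace ℂ (Fin N)) = ⊥ ∧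
      ∀ Pr : EuclideanSpace ℂ (Fin N) →L[ℂ] EuclideanSpace ℂ (Fin N),
        Pr * Pr = Pr →
        LinearMap.range (Pr : EuclideanSpace ℂ (Fin N) →ₗ[ℂ] EuclideanSpace ℂ (Fin N)) = LinearMap.ker ((A - μ • 1 : EuclideanSpace ℂ (Fin N) →L[ℂ] EuclideanSpace ℂ (Fin N)) : EuclideanSpace ℂ (Fin N) →ₗ[ℂ] EuclideanSpace ℂ (Fin N)) →
        LinearMap.ker (Pr : EuclideanSpace ℂ (Fin N) →ₗ[ℂ] EuclideanSpace ℂ (Fin N)) = LinearMap.range ((A - μ • 1 : EuclideanSpace ℂ (Fin N) →L[ℂ] EuclideanSpace ℂ (Fin N)) : EuclideanSpace ℂ (Fin N) →ₗ[ℂ] EuclideanSpace ℂ (Fin N)) →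
        ‖Pr‖ ≤ C := by
  intro μ hμ
  classical
  set E := EuclideanSpace ℂ (Fin N)
  have hC : 0 ≤ C := by
    have h1 := (h Complex.I (by simp)).2
    have h0 : (0:ℝ) ≤ ‖Ring.inverse (A - Complex.I • 1)‖ := norm_nonneg _
    simpa using h0.trans h1
  have hinj : ∀ z : ℂ, z.im ≠ 0 → Function.Injective (A - z • (1 : E →L[ℂ] E)) := by
    intro z hz a b hab
    obtain ⟨hu, -⟩ := h z hz
    have h1 : Ring.inverse (A - z • 1) * (A - z • 1) = 1 := Ring.inverse_mul_cancel _ hu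
    have ha := DFunLike.congr_fun h1 a
    have hb := DFunLike.congr_fun h1 b
    simp only [ContinuousLinearMap.mul_apply, ContinuousLinearMap.one_apply] at ha hb
    rw [← ha, ← hb, hab]
  obtain ⟨v₀, hv₀⟩ := hμ.exists_hasEigenvector
  have hAv₀ : A v₀ - μ • v₀ = 0 := by
    have h1 := hv₀.apply_eq_smul
    simp only [ContinuousLinearMap.coe_coe] at h1
    rw [h1]; simp
  have hμim : μ.im = 0 := by
    by_contra him
    refine hv₀.right (hinj μ him ?_)
    simp [ContinuousLinearMap.sub_apply, ContinuousLinearMap.smul_apply,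
      ContinuousLinearMap.one_apply, hAv₀]
  -- key resolvent facts at z = μ + ε i
  have key : ∀ ε : ℝ, 0 < ε → ∃ R : E →L[ℂ] E,
      ‖R‖ * ε ≤ C ∧ ∀ x : E, R (A x - μ • x - ((ε:ℂ) * Complex.I) • x) = x := by
    intro ε hε
    set z : ℂ := μ + (ε:ℂ) * Complex.I with hzdef
    have hzim : z.im = ε := by simp [hzdef, hμim]
    have hz : z.im ≠ 0 := by rw [hzim]; exact hε.ne'
    obtain ⟨hu, hn⟩ := h z hz
    refine ⟨Ring.inverse (A - z • 1), ?_, ?_⟩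
    · rw [hzim, abs_of_pos hε] at hn
      calc ‖Ring.inverse (A - z • 1)‖ * ε ≤ (C * ε⁻¹) * ε :=
            mul_le_mul_of_nonneg_right hn hε.le
        _ = C := by field_simp
    · intro x
      have h1 : Ring.inverse (A - z • 1) * (A - z • 1) = 1 := Ring.inverse_mul_cancel _ hu
      have h2 := DFunLike.congr_fun h1 x
      simp only [ContinuousLinearMap.mul_apply, ContinuousLinearMap.one_apply,
        ContinuousLinearMap.sub_apply, ContinuousLinearMap.smul_apply] at h2
      rw [hzdef, add_smul, ← sub_sub] at h2
      exact h2
  -- semisimplicity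
  have hss : LinearMap.ker ((A - μ • (1:E →L[ℂ] E) : E →L[ℂ] E) : E →ₗ[ℂ] E) ⊓ LinearMap.range ((A - μ • (1:E →L[ℂ] E) : E →L[ℂ] E) : E →ₗ[ℂ] E) = ⊥ := by
    rw [eq_bot_iff]
    rintro v ⟨hvk, hvr⟩
    obtain ⟨w, hw⟩ := hvr
    simp only [Submodule.mem_bot]
    have hker : A v - μ • v = 0 := by
      have h1 := LinearMap.mem_ker.mp hvk
      simpa [ContinuousLinearMap.sub_apply, ContinuousLinearMap.smul_apply,
        ContinuousLinearMap.one_apply] using h1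
    have hrange : A w - μ • w = v := by
      simpa [ContinuousLinearMap.sub_apply, ContinuousLinearMap.smul_apply,
        ContinuousLinearMap.one_apply] using hw
    have hb : ∀ ε : ℝ, 0 < ε → ‖v‖ ≤ ε * ((1 + C) * ‖w‖) := by
      intro ε hε
      obtain ⟨R, hRn, hR⟩ := key ε hε
      set c : ℂ := (ε:ℂ) * Complex.I with hc
      have hcnorm : ‖c‖ = ε := by
        simp [hc, abs_of_pos hε]
      have h1 : v = -(c • R v) := by
        have h2 := hR v
        rw [hker, zero_sub, map_neg, map_smul] at h2
        exact h2.symm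
      have h2 : R v = w + c • R w := by
        have h3 := hR w
        rw [hrange, map_sub, map_smul] at h3
        exact (eq_add_of_sub_eq h3)
      have h4 : v = -(c • w + c • (c • R w)) := by rw [h1, h2, smul_add]
      have h5 : ‖v‖ ≤ ε * ‖w‖ + ε * (ε * ‖R w‖) := by
        rw [h4, norm_neg]
        refine (norm_add_le _ _).trans ?_
        simp [norm_smul, hcnorm]
      have hRw : ‖R w‖ ≤ ‖R‖ * ‖w‖ := R.le_opNorm w
      nlinarith [norm_nonneg w, norm_nonneg (R w), norm_nonneg R,
        mul_le_mul_of_nonneg_left hRw hε.le,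
        mul_le_mul_of_nonneg_right hRn (norm_nonneg w)]
    have hv0 : ‖v‖ ≤ 0 := by
      refine le_of_forall_pos_le_add ?_
      intro δ hδ
      have hK : (0:ℝ) ≤ (1 + C) * ‖w‖ := by positivity
      have hε : 0 < δ / ((1 + C) * ‖w‖ + 1) := by positivity
      have h1 := hb _ hε
      rw [zero_add]
      refine h1.trans ?_
      rw [div_mul_eq_mul_div, mul_comm]
      rw [div_le_iff₀ (by positivity)]
      nlinarith
    simpa using le_antisymm hv0 (norm_nonneg v)
  refine ⟨hμim, hss, ?_⟩
  intro Pr hPr hPrange hPker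
  refine ContinuousLinearMap.opNorm_le_bound _ hC ?_
  intro x
  have hvker : A (Pr x) - μ • (Pr x) = 0 := by
    have hmem : Pr x ∈ LinearMap.range (Pr : E →ₗ[ℂ] E) := ⟨x, rfl⟩
    rw [hPrange] at hmem
    simpa [ContinuousLinearMap.sub_apply, ContinuousLinearMap.smul_apply,
      ContinuousLinearMap.one_apply] using LinearMap.mem_ker.mp hmem
  have hwmem : x - Pr x ∈ LinearMap.range ((A - μ • (1 : E →L[ℂ] E) : E →L[ℂ] E) : E →ₗ[ℂ] E) := by
    rw [← hPker, LinearMap.mem_ker]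
    have h1 := DFunLike.congr_fun hPr x
    simp only [ContinuousLinearMap.mul_apply] at h1
    rw [map_sub, ContinuousLinearMap.coe_coe, h1, sub_self]
  obtain ⟨u, hu⟩ := hwmem
  have hur : A u - μ • u = x - Pr x := by
    simpa [ContinuousLinearMap.sub_apply, ContinuousLinearMap.smul_apply,
      ContinuousLinearMap.one_apply] using hu
  have hb : ∀ ε : ℝ, 0 < ε → ‖Pr x‖ ≤ C * ‖x‖ + ε * ((1 + C) * ‖u‖) := by
    intro ε hε
    obtain ⟨R, hRn, hR⟩ := key ε hε
    set c : ℂ := (ε:ℂ) * Complex.I with hc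
    have hcnorm : ‖c‖ = ε := by simp [hc, abs_of_pos hε]
    -- R (Pr x)
    have h1 : Pr x = -(c • R (Pr x)) := by
      have h2 := hR (Pr x)
      rw [hvker, zero_sub, map_neg, map_smul] at h2
      exact h2.symm
    -- R (x - Pr x)
    have h2 : R (x - Pr x) = u + c • R u := by
      have h3 := hR u
      rw [hur, map_sub, map_smul] at h3
      exact (eq_add_of_sub_eq h3)
    have h3 : R x = R (Pr x) + R (x - Pr x) := by rw [← map_add]; congr 1; abel
    have h4 : Pr x = -(c • R x) + c • u + c • (c • R u) := by
      linear_combination (norm := module) h1 + c • h3 + c • h2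
    have h5 : ‖Pr x‖ ≤ ε * ‖R x‖ + ε * ‖u‖ + ε * (ε * ‖R u‖) := by
      rw [h4]
      refine (norm_add₃_le).trans ?_
      simp [norm_smul, hcnorm]
    have hRx : ‖R x‖ ≤ ‖R‖ * ‖x‖ := R.le_opNorm x
    have hRu : ‖R u‖ ≤ ‖R‖ * ‖u‖ := R.le_opNorm u
    nlinarith [norm_nonneg x, norm_nonneg u, norm_nonneg R,
      mul_le_mul_of_nonneg_left hRx hε.le,
      mul_le_mul_of_nonneg_left hRu hε.le,
      mul_le_mul_of_nonneg_right hRn (norm_nonneg x),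
      mul_le_mul_of_nonneg_right hRn (norm_nonneg u)]
  refine le_of_forall_pos_le_add ?_
  intro δ hδ
  have hε : 0 < δ / ((1 + C) * ‖u‖ + 1) := by positivity
  have h1 := hb _ hε
  refine h1.trans ?_
  have hK : (0:ℝ) ≤ (1 + C) * ‖u‖ := by positivity
  have h2 : δ / ((1 + C) * ‖u‖ + 1) * ((1 + C) * ‖u‖) ≤ δ := by
    rw [div_mul_eq_mul_div, div_le_iff₀ (by positivity)]
    nlinarith
  linarith
end
end

section
/- Let L and S be matrices with SL Hermitian, and J invertible with Re(SJu, u) ≥ c|u|² for all u ∈ ker L, where c > 0. Then 0 is a semi-simple eigenvalue of J⁻¹L, i.e., ker(L) ∩ J⁻¹(range L) = {0}. -/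
noncomputable section

/-- If SL is Hermitian, J invertible and Re(SJu,u) ≥ c|u|² on ker L, then 0 is a
semi-simple eigenvalue of J⁻¹L: ker L ∩ J⁻¹(range L) = {0}. -/
theorem stmt_9 (N : ℕ)
    (L S J : EuclideanSpace ℂ (Fin N) →L[ℂ] EuclideanSpace ℂ (Fin N))
    (c : ℝ) (hc : 0 < c) (hJ : IsUnit J)
    (hSL : IsSelfAdjoint (S * L))
    (hpos : ∀ u ∈ LinearMap.ker (L : EuclideanSpace ℂ (Fin N) →ₗ[ℂ] EuclideanSpace ℂ (Fin N)), c * ‖u‖ ^ 2 ≤ (inner ℂ (S (J u)) u : ℂ).re) :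
    LinearMap.ker (L : EuclideanSpace ℂ (Fin N) →ₗ[ℂ] EuclideanSpace ℂ (Fin N)) ⊓
      (LinearMap.range (L : EuclideanSpace ℂ (Fin N) →ₗ[ℂ] EuclideanSpace ℂ (Fin N))).comap
        (J : EuclideanSpace ℂ (Fin N) →ₗ[ℂ] EuclideanSpace ℂ (Fin N)) = ⊥ := by
  rw [eq_bot_iff]
  intro u hu
  obtain ⟨hu1, hu2⟩ := hu
  simp only [Submodule.mem_comap, LinearMap.mem_range, ContinuousLinearMap.coe_coe] at hu2
  obtain ⟨v, hv⟩ := hu2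
  have hsym := ContinuousLinearMap.isSelfAdjoint_iff_isSymmetric.mp hSL
  have hLu : L u = 0 := hu1
  have hzero : (inner ℂ (S (J u)) u : ℂ) = 0 := by
    have : S (J u) = (S * L) v := by
      rw [ContinuousLinearMap.mul_apply]; exact congrArg S hv.symm
    rw [this]
    have h2 := hsym v u
    simp only [ContinuousLinearMap.coe_coe] at h2
    rw [h2]
    simp [ContinuousLinearMap.mul_apply, hLu]
  have := hpos u hu1
  rw [hzero] at this
  simp only [Complex.zero_re] at this
  have hn : ‖u‖ ^ 2 ≤ 0 := by nlinarith [sq_nonneg ‖u‖]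
  have : ‖u‖ = 0 := by nlinarith [norm_nonneg u]
  simpa using norm_eq_zero.mp this
end
end

section
/- Let L, S, J be matrices with SL Hermitian, J invertible, and Re(SJu, u) ≥ c|u|² for all u ∈ ker L. Then the spectral projector Π onto ker L along J⁻¹(range L) satisfies Π* S J Π = Π* S J and ‖Π‖ ≤ ‖SJ‖/c. -/
noncomputable section

/-- If SL is Hermitian, J invertible and Re(SJu,u) ≥ c|u|² on ker L, then the
projector Pr onto ker L along J⁻¹(range L) satisfies Pr* S J Pr = Pr* S J and
‖Pr‖ ≤ ‖SJ‖/c. -/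
theorem stmt_10 (N : ℕ)
    (L S J : EuclideanSpace ℂ (Fin N) →L[ℂ] EuclideanSpace ℂ (Fin N))
    (c : ℝ) (hc : 0 < c) (hJ : IsUnit J)
    (hSL : IsSelfAdjoint (S * L))
    (hpos : ∀ u ∈ LinearMap.ker (L : EuclideanSpace ℂ (Fin N) →ₗ[ℂ] EuclideanSpace ℂ (Fin N)), c * ‖u‖ ^ 2 ≤ (inner ℂ (S (J u)) u : ℂ).re)
    (Pr : EuclideanSpace ℂ (Fin N) →L[ℂ] EuclideanSpace ℂ (Fin N))
    (hPr : Pr * Pr = Pr)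
    (hPrange : LinearMap.range (Pr : EuclideanSpace ℂ (Fin N) →ₗ[ℂ] EuclideanSpace ℂ (Fin N)) = LinearMap.ker (L : EuclideanSpace ℂ (Fin N) →ₗ[ℂ] EuclideanSpace ℂ (Fin N)))
    (hPker : LinearMap.ker (Pr : EuclideanSpace ℂ (Fin N) →ₗ[ℂ] EuclideanSpace ℂ (Fin N)) =
      (LinearMap.range (L : EuclideanSpace ℂ (Fin N) →ₗ[ℂ] EuclideanSpace ℂ (Fin N))).comap
        (J : EuclideanSpace ℂ (Fin N) →ₗ[ℂ] EuclideanSpace ℂ (Fin N))) :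
    ContinuousLinearMap.adjoint Pr * (S * J * Pr) =
        ContinuousLinearMap.adjoint Pr * (S * J) ∧
      ‖Pr‖ ≤ ‖S * J‖ / c := by
  have hPk : ∀ x, Pr x ∈ LinearMap.ker (L : EuclideanSpace ℂ (Fin N) →ₗ[ℂ] EuclideanSpace ℂ (Fin N)) := by
    intro x
    rw [← hPrange]
    exact LinearMap.mem_range_self _ x
  have hLP : ∀ x, L (Pr x) = 0 := fun x => (LinearMap.mem_ker).mp (hPk x)
  -- key orthogonality: for w in range L, ⟪S w, Pr y⟫ = 0
  have key : ∀ w ∈ LinearMap.range (L : EuclideanSpace ℂ (Fin N) →ₗ[ℂ] EuclideanSpace ℂ (Fin N)), ∀ y, (inner ℂ (S w) (Pr y) : ℂ) = 0 := by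
    rintro w ⟨v, rfl⟩ y
    have h1 : (inner ℂ (S ((L : EuclideanSpace ℂ (Fin N) →ₗ[ℂ] EuclideanSpace ℂ (Fin N)) v)) (Pr y) : ℂ) = inner ℂ ((S * L) v) (Pr y) := rfl
    rw [h1, ← ContinuousLinearMap.adjoint_inner_right, hSL.adjoint_eq]
    have : (S * L) (Pr y) = S (L (Pr y)) := rfl
    rw [this, hLP, map_zero, inner_zero_right]
  -- J (x - Pr x) ∈ range L
  have hJr : ∀ x, J (x - Pr x) ∈ LinearMap.range (L : EuclideanSpace ℂ (Fin N) →ₗ[ℂ] EuclideanSpace ℂ (Fin N)) := by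
    intro x
    have hmem : x - Pr x ∈ LinearMap.ker (Pr : EuclideanSpace ℂ (Fin N) →ₗ[ℂ] EuclideanSpace ℂ (Fin N)) := by
      rw [LinearMap.mem_ker, map_sub]
      have : Pr (Pr x) = Pr x := congrFun (congrArg DFunLike.coe hPr) x
      rw [ContinuousLinearMap.coe_coe, this, sub_self]
    rw [hPker] at hmem
    exact hmem
  have part1 : ContinuousLinearMap.adjoint Pr * (S * J * Pr) =
      ContinuousLinearMap.adjoint Pr * (S * J) := by
    refine ContinuousLinearMap.ext fun x => ext_inner_right ℂ fun y => ?_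
    simp only [ContinuousLinearMap.mul_apply, ContinuousLinearMap.adjoint_inner_left]
    have := key _ (hJr x) y
    have hsub : (inner ℂ (S (J x) - S (J (Pr x))) (Pr y) : ℂ) = 0 := by
      rw [← map_sub, ← map_sub]; exact this
    rw [inner_sub_left] at hsub
    linear_combination -hsub
  refine ⟨part1, ?_⟩
  apply ContinuousLinearMap.opNorm_le_bound _ (div_nonneg (norm_nonneg _) hc.le)
  intro x
  have hp1x : ContinuousLinearMap.adjoint Pr (S (J (Pr x))) =
      ContinuousLinearMap.adjoint Pr (S (J x)) :=
    congrFun (congrArg DFunLike.coe part1) x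
  have h1 : c * ‖Pr x‖ ^ 2 ≤ (inner ℂ (S (J (Pr x))) (Pr x) : ℂ).re := hpos _ (hPk x)
  have h2 : (inner ℂ (S (J (Pr x))) (Pr x) : ℂ) = inner ℂ (S (J x)) (Pr x) := by
    rw [← ContinuousLinearMap.adjoint_inner_left Pr, hp1x,
      ContinuousLinearMap.adjoint_inner_left]
  have h3 : (inner ℂ (S (J x)) (Pr x) : ℂ).re ≤ ‖S * J‖ * ‖x‖ * ‖Pr x‖ := by
    calc (inner ℂ (S (J x)) (Pr x) : ℂ).re ≤ ‖(inner ℂ (S (J x)) (Pr x) : ℂ)‖ :=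
          Complex.re_le_norm _
      _ ≤ ‖S (J x)‖ * ‖Pr x‖ := norm_inner_le_norm _ _
      _ = ‖(S * J) x‖ * ‖Pr x‖ := rfl
      _ ≤ (‖S * J‖ * ‖x‖) * ‖Pr x‖ := by
          gcongr; exact ContinuousLinearMap.le_opNorm _ _
  have h4 : c * ‖Pr x‖ ^ 2 ≤ ‖S * J‖ * ‖x‖ * ‖Pr x‖ := by
    rw [h2] at h1; linarith
  rcases eq_or_lt_of_le (norm_nonneg (Pr x)) with h0 | h0
  · rw [← h0]
    positivity
  · rw [div_mul_eq_mul_div, le_div_iff₀ hc]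
    nlinarith [sq_nonneg (‖Pr x‖), h4]
end
end

section
/- Let L, S, J be matrices with SL Hermitian, J invertible, and Re(SJu, u) ≥ c|u|² for all u ∈ ker L with c > 0. Then for a vector f: Sf is orthogonal to ker L if and only if f lies in the range of L. -/
noncomputable section

/-- If SL is Hermitian, J invertible and Re(SJu,u) ≥ c|u|² on ker L, then for any
vector f, S f ⊥ ker L if and only if f ∈ range L. -/
theorem stmt_11 (N : ℕ)
    (L S J : EuclideanSpace ℂ (Fin N) →L[ℂ] EuclideanSpace ℂ (Fin N))
    (c : ℝ) (hc : 0 < c) (hJ : IsUnit J)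
    (hSL : IsSelfAdjoint (S * L))
    (hpos : ∀ u ∈ LinearMap.ker (L : EuclideanSpace ℂ (Fin N) →ₗ[ℂ] EuclideanSpace ℂ (Fin N)), c * ‖u‖ ^ 2 ≤ (inner ℂ (S (J u)) u : ℂ).re)
    (f : EuclideanSpace ℂ (Fin N)) :
    S f ∈ Submodule.orthogonal (LinearMap.ker (L : EuclideanSpace ℂ (Fin N) →ₗ[ℂ] EuclideanSpace ℂ (Fin N))) ↔ f ∈ LinearMap.range (L : EuclideanSpace ℂ (Fin N) →ₗ[ℂ] EuclideanSpace ℂ (Fin N)) := by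
  classical
  set K : Submodule ℂ (EuclideanSpace ℂ (Fin N)) := LinearMap.ker (L : EuclideanSpace ℂ (Fin N) →ₗ[ℂ] EuclideanSpace ℂ (Fin N)) with hKdef
  have hsym : ((S * L :
      EuclideanSpace ℂ (Fin N) →L[ℂ] EuclideanSpace ℂ (Fin N)) :
      EuclideanSpace ℂ (Fin N) →ₗ[ℂ] EuclideanSpace ℂ (Fin N)).IsSymmetric :=
    hSL.isSymmetric
  -- inner ℂ (S (L g)) u = 0 whenever u ∈ K
  have hSLker : ∀ u ∈ K, ∀ g : EuclideanSpace ℂ (Fin N),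
      (inner ℂ (S (L g)) u : ℂ) = 0 := by
    intro u hu g
    have h1 : (inner ℂ ((S * L) g) u : ℂ) = inner ℂ g ((S * L) u) := hsym g u
    have h2 : L u = 0 := hu
    simpa [ContinuousLinearMap.mul_apply, h2] using h1
  have hJinj : Function.Injective J := by
    obtain ⟨u, hu⟩ := hJ
    intro x y hxy
    have h1 : ((↑u⁻¹ : EuclideanSpace ℂ (Fin N) →L[ℂ] EuclideanSpace ℂ (Fin N)) * J)
        = (1 : EuclideanSpace ℂ (Fin N) →L[ℂ] EuclideanSpace ℂ (Fin N)) := by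
      rw [← hu]; exact u.inv_mul
    calc x = ((↑u⁻¹ : EuclideanSpace ℂ (Fin N) →L[ℂ] EuclideanSpace ℂ (Fin N)) * J) x := by
          rw [h1]; rfl
    _ = ((↑u⁻¹ : EuclideanSpace ℂ (Fin N) →L[ℂ] EuclideanSpace ℂ (Fin N)) * J) y := by
          simp only [ContinuousLinearMap.mul_apply, hxy]
    _ = y := by rw [h1]; rfl
  have hzero : ∀ w ∈ K, (inner ℂ (S (J w)) w : ℂ) = 0 → w = 0 := by
    intro w hw h0
    have hle := hpos w hw
    rw [h0] at hle
    simp only [Complex.zero_re] at hle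
    have h2 : ‖w‖ ^ 2 ≤ 0 := by nlinarith
    have h3 : ‖w‖ = 0 := by nlinarith [norm_nonneg w, sq_nonneg ‖w‖]
    simpa using h3
  set q : Submodule ℂ (EuclideanSpace ℂ (Fin N)) :=
    K.map (J : EuclideanSpace ℂ (Fin N) →ₗ[ℂ] EuclideanSpace ℂ (Fin N)) with hqdef
  have hdisj : Disjoint (LinearMap.range (L : EuclideanSpace ℂ (Fin N) →ₗ[ℂ] EuclideanSpace ℂ (Fin N))) q := by
    rw [Submodule.disjoint_def]
    intro x hx hx'
    obtain ⟨g, hg⟩ := hx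
    obtain ⟨w, hw, hwx⟩ := hx'
    have hJw : J w = x := hwx
    have h0 : (inner ℂ (S (J w)) w : ℂ) = 0 := by
      rw [hJw, ← hg]
      exact hSLker w hw g
    have hw0 : w = 0 := hzero w hw h0
    rw [← hJw, hw0]
    simp
  have hqdim : Module.finrank ℂ q = Module.finrank ℂ K :=
    (LinearEquiv.finrank_eq (Submodule.equivMapOfInjective
      (J : EuclideanSpace ℂ (Fin N) →ₗ[ℂ] EuclideanSpace ℂ (Fin N)) hJinj K)).symm
  have hrank : Module.finrank ℂ (LinearMap.range (L : EuclideanSpace ℂ (Fin N) →ₗ[ℂ] EuclideanSpace ℂ (Fin N))) + Module.finrank ℂ K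
      = Module.finrank ℂ (EuclideanSpace ℂ (Fin N)) :=
    LinearMap.finrank_range_add_finrank_ker
      (L : EuclideanSpace ℂ (Fin N) →ₗ[ℂ] EuclideanSpace ℂ (Fin N))
  have htop : LinearMap.range (L : EuclideanSpace ℂ (Fin N) →ₗ[ℂ] EuclideanSpace ℂ (Fin N)) ⊔ q = ⊤ := by
    apply Submodule.eq_top_of_finrank_eq
    have hsum := Submodule.finrank_sup_add_finrank_inf_eq (LinearMap.range (L : EuclideanSpace ℂ (Fin N) →ₗ[ℂ] EuclideanSpace ℂ (Fin N))) q
    rw [hdisj.eq_bot] at hsum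
    simp only [finrank_bot, add_zero] at hsum
    rw [hsum, hqdim, hrank]
  constructor
  · intro h
    have hfmem : f ∈ LinearMap.range (L : EuclideanSpace ℂ (Fin N) →ₗ[ℂ] EuclideanSpace ℂ (Fin N)) ⊔ q := htop ▸ Submodule.mem_top
    obtain ⟨a, ha, b, hb, hab⟩ := Submodule.mem_sup.mp hfmem
    obtain ⟨g, hg⟩ := ha
    obtain ⟨w, hw, hwb⟩ := hb
    have hJw : J w = b := hwb
    have horth : (inner ℂ (S f) w : ℂ) = 0 := by
      have := (Submodule.mem_orthogonal K (S f)).mp h w hw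
      exact inner_eq_zero_symm.mp this
    have hfe : f = L g + J w := by rw [show L g = a from hg, hJw]; exact hab.symm
    have hsplit : (inner ℂ (S f) w : ℂ)
        = inner ℂ (S (L g)) w + inner ℂ (S (J w)) w := by
      rw [hfe]
      simp [inner_add_left]
    have h0 : (inner ℂ (S (J w)) w : ℂ) = 0 := by
      have hz := hSLker w hw g
      rw [horth, hz] at hsplit
      linear_combination -hsplit
    have hw0 : w = 0 := hzero w hw h0
    refine ⟨g, ?_⟩
    rw [hfe, hw0]
    simp
  · rintro ⟨g, rfl⟩
    rw [Submodule.mem_orthogonal]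
    intro u hu
    exact inner_eq_zero_symm.mp (hSLker u hu g)
end
end

section
/- Let SL be Hermitian, and let J₀, J₁ be matrices such that Jₜ = (1−t)J₀ + tJ₁ is invertible for all t ∈ [0,1], the restriction of S Jₜ to ker L is Hermitian for all t, (S J₀ u, u) ≥ c|u|² on ker L, and 0 is a semi-simple eigenvalue of Jₜ⁻¹L for all t ∈ [0,1). Then (S Jₜ u, u) ≥ (1−t)c|u|² for all u ∈ ker L and t ∈ [0,1]. -/
noncomputable section

set_option maxHeartbeats 1000000 in
/-- Positivity of a symmetrizer propagates along a segment of invertible matrices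
Jₜ = (1-t)J₀ + tJ₁ as long as 0 stays a semi-simple eigenvalue of Jₜ⁻¹L. -/
theorem stmt_12 (N : ℕ)
    (L S J₀ J₁ : EuclideanSpace ℂ (Fin N) →L[ℂ] EuclideanSpace ℂ (Fin N))
    (c : ℝ) (hc : 0 < c)
    (Jt : ℝ → (EuclideanSpace ℂ (Fin N) →L[ℂ] EuclideanSpace ℂ (Fin N)))
    (hJt : ∀ t : ℝ, Jt t = (((1 - t : ℝ)) : ℂ) • J₀ + ((t : ℝ) : ℂ) • J₁)
    (hSL : IsSelfAdjoint (S * L))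
    (hinv : ∀ t ∈ Set.Icc (0 : ℝ) 1, IsUnit (Jt t))
    (hsym : ∀ t ∈ Set.Icc (0 : ℝ) 1, ∀ u ∈ LinearMap.ker (L : EuclideanSpace ℂ (Fin N) →ₗ[ℂ] EuclideanSpace ℂ (Fin N)), ∀ v ∈ LinearMap.ker (L : EuclideanSpace ℂ (Fin N) →ₗ[ℂ] EuclideanSpace ℂ (Fin N)),
      (inner ℂ (S (Jt t u)) v : ℂ) = inner ℂ u (S (Jt t v)))
    (hpos0 : ∀ u ∈ LinearMap.ker (L : EuclideanSpace ℂ (Fin N) →ₗ[ℂ] EuclideanSpace ℂ (Fin N)), c * ‖u‖ ^ 2 ≤ (inner ℂ (S (J₀ u)) u : ℂ).re)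
    (hss : ∀ t ∈ Set.Ico (0 : ℝ) 1,
      LinearMap.ker (L : EuclideanSpace ℂ (Fin N) →ₗ[ℂ] EuclideanSpace ℂ (Fin N)) ⊓
        (LinearMap.range (L : EuclideanSpace ℂ (Fin N) →ₗ[ℂ] EuclideanSpace ℂ (Fin N))).comap
          (Jt t : EuclideanSpace ℂ (Fin N) →ₗ[ℂ] EuclideanSpace ℂ (Fin N)) = ⊥) :
    ∀ t ∈ Set.Icc (0 : ℝ) 1, ∀ u ∈ LinearMap.ker (L : EuclideanSpace ℂ (Fin N) →ₗ[ℂ] EuclideanSpace ℂ (Fin N)),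
      (1 - t) * c * ‖u‖ ^ 2 ≤ (inner ℂ (S (Jt t u)) u : ℂ).re := by
  classical
  set E := EuclideanSpace ℂ (Fin N)
  haveI hfd : FiniteDimensional ℂ E := by
    show FiniteDimensional ℂ (EuclideanSpace ℂ (Fin N)); infer_instance
  haveI hps : ProperSpace E := by
    show ProperSpace (EuclideanSpace ℂ (Fin N)); infer_instance
  set K : Submodule ℂ E := LinearMap.ker (L : E →ₗ[ℂ] E) with hK
  -- the quadratic forms
  set p : E → ℝ := fun u => (inner ℂ (S (J₀ u)) u : ℂ).re with hp
  set r : E → ℝ := fun u => (inner ℂ (S (J₁ u)) u : ℂ).re with hr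
  set q : ℝ → E → ℝ := fun t u => (inner ℂ (S (Jt t u)) u : ℂ).re with hqdef
  -- affine decomposition
  have hq : ∀ t u, q t u = (1 - t) * p u + t * r u := by
    intro t u
    simp only [hqdef, hp, hr, hJt t, ContinuousLinearMap.add_apply,
      ContinuousLinearMap.coe_smul', Pi.smul_apply, map_add, map_smul, inner_add_left,
      inner_smul_left, Complex.conj_ofReal, Complex.add_re, Complex.mul_re,
      Complex.ofReal_re, Complex.ofReal_im]
    ring
  -- scaling
  have hscale : ∀ t (a : ℝ) u, q t (((a : ℂ)) • u) = a ^ 2 * q t u := by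
    intro t a u
    simp only [hqdef, map_smul, inner_smul_left, inner_smul_right, Complex.conj_ofReal,
      Complex.mul_re, Complex.ofReal_re, Complex.ofReal_im]
    ring
  -- nondegeneracy via semisimplicity
  have hnondeg : ∀ t ∈ Set.Ico (0 : ℝ) 1, ∀ u ∈ K,
      (∀ v ∈ K, (inner ℂ (S (Jt t u)) v : ℂ) = 0) → u = 0 := by
    intro t ht u hu hrad
    have htI : t ∈ Set.Icc (0:ℝ) 1 := ⟨ht.1, le_of_lt ht.2⟩
    obtain ⟨Ju, hJu⟩ := hinv t htI
    have hone : ∀ z : E, (↑Ju⁻¹ : E →L[ℂ] E) ((Jt t) z) = z := by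
      intro z
      have h1 : ((↑Ju⁻¹ : E →L[ℂ] E) * (Jt t)) z = (1 : E →L[ℂ] E) z := by
        rw [← hJu, Ju.inv_mul]
      simpa [ContinuousLinearMap.mul_apply] using h1
    have hinj : Function.Injective ((Jt t : E →ₗ[ℂ] E)) := by
      intro x y hxy
      have h2 := congrArg (fun z => (↑Ju⁻¹ : E →L[ℂ] E) z) hxy
      simpa [hone] using h2
    set W : Submodule ℂ E := K.map ((Jt t : E →ₗ[ℂ] E)) with hW
    set R : Submodule ℂ E := LinearMap.range (L : E →ₗ[ℂ] E) with hR
    have hWRinf : W ⊓ R = ⊥ := by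
      rw [eq_bot_iff]
      rintro x ⟨hxW, hxR⟩
      obtain ⟨k, hk, rfl⟩ := hxW
      have hk0 : k ∈ K ⊓ R.comap ((Jt t : E →ₗ[ℂ] E)) := ⟨hk, hxR⟩
      rw [hss t ht] at hk0
      simp only [Submodule.mem_bot] at hk0
      simp [hk0]
    have hfinW : Module.finrank ℂ W = Module.finrank ℂ K :=
      (LinearEquiv.finrank_eq (Submodule.equivMapOfInjective _ hinj K)).symm
    have hrank : Module.finrank ℂ R + Module.finrank ℂ K = Module.finrank ℂ E := by
      have h := LinearMap.finrank_range_add_finrank_ker (L : E →ₗ[ℂ] E)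
      have e1 : LinearMap.range (L : E →ₗ[ℂ] E) = R := rfl
      have e2 : LinearMap.ker (L : E →ₗ[ℂ] E) = K := rfl
      rw [e1, e2] at h
      exact h
    have htop : W ⊔ R = ⊤ := by
      apply Submodule.eq_top_of_finrank_eq
      have hs := Submodule.finrank_sup_add_finrank_inf_eq W R
      rw [hWRinf] at hs
      simp only [finrank_bot, add_zero] at hs
      omega
    have hperp : ∀ x : E, (inner ℂ (S x) u : ℂ) = 0 := by
      intro x
      have hx : x ∈ W ⊔ R := htop ▸ Submodule.mem_top
      obtain ⟨w, hw, z, hz, rfl⟩ := Submodule.mem_sup.mp hx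
      obtain ⟨v, hv, rfl⟩ := hw
      obtain ⟨y, rfl⟩ := hz
      have hterm1 : (inner ℂ (S ((Jt t) v)) u : ℂ) = 0 := by
        have h3 := hsym t htI v hv u hu
        rw [h3, ← inner_conj_symm]
        rw [hrad v hv]
        simp
      have hterm2 : (inner ℂ (S (L y)) u : ℂ) = 0 := by
        have h4 : (inner ℂ ((S * L) y) u : ℂ) = inner ℂ y ((S * L) u) := by
          rw [← ContinuousLinearMap.adjoint_inner_right, ← ContinuousLinearMap.star_eq_adjoint, hSL]
        have h5 : L u = 0 := hu
        have h6 : (S * L) u = 0 := by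
          simp [ContinuousLinearMap.mul_apply, h5]
        simp only [ContinuousLinearMap.mul_apply] at h4 h6
        rw [h4, h6, inner_zero_right]
      have : ((Jt t : E →ₗ[ℂ] E)) v = (Jt t) v := rfl
      rw [this] at *
      rw [map_add, inner_add_left, hterm1, zero_add]; exact hterm2
    have h7 : c * ‖u‖ ^ 2 ≤ 0 := by
      have := hpos0 u hu
      rw [hperp (J₀ u)] at this
      simpa using this
    have h8 : ‖u‖ ^ 2 ≤ 0 := by nlinarith
    have h9 : ‖u‖ = 0 := by nlinarith [sq_nonneg ‖u‖, norm_nonneg u]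
    exact norm_eq_zero.mp h9
  -- Cauchy-Schwarz for the PSD hermitian form: null vector is radical
  have hCS : ∀ t ∈ Set.Icc (0 : ℝ) 1, (∀ v ∈ K, 0 ≤ q t v) → ∀ u ∈ K, q t u = 0 →
      ∀ v ∈ K, (inner ℂ (S (Jt t u)) v : ℂ) = 0 := by
    intro t ht hpsd u hu hqu v hv
    by_contra hb
    set b : ℂ := (inner ℂ (S ((Jt t) u)) v : ℂ) with hbdef
    have hherm : ∀ x ∈ K, ∀ y ∈ K,
        (inner ℂ (S ((Jt t) x)) y : ℂ) = starRingEnd ℂ (inner ℂ (S ((Jt t) y)) x : ℂ) := by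
      intro x hx y hy
      rw [hsym t ht x hx y hy, ← inner_conj_symm]
    have huu : (inner ℂ (S ((Jt t) u)) u : ℂ) = 0 := by
      have h1 := hherm u hu u hu
      have h2 : (inner ℂ (S ((Jt t) u)) u : ℂ).im = 0 := by
        have h2a := congrArg Complex.im h1
        simp only [Complex.conj_im] at h2a
        linarith
      exact Complex.ext hqu h2
    have hvu : (inner ℂ (S ((Jt t) v)) u : ℂ) = starRingEnd ℂ b := hherm v hv u hu
    set C : ℝ := q t v with hCdef
    have hC0 : 0 ≤ C := hpsd v hv
    have hvv : (inner ℂ (S ((Jt t) v)) v : ℂ) = (C : ℂ) := by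
      have h1 := hherm v hv v hv
      have h2 : (inner ℂ (S ((Jt t) v)) v : ℂ).im = 0 := by
        have h2a := congrArg Complex.im h1
        simp only [Complex.conj_im] at h2a
        linarith
      exact Complex.ext rfl h2
    set s : ℝ := 1 / (C + 1) with hs
    have hCpos : (0:ℝ) < C + 1 := by linarith
    have hspos : 0 < s := by positivity
    set a : ℂ := ((-s : ℝ) : ℂ) * starRingEnd ℂ b with ha
    have hw : u + a • v ∈ K := K.add_mem hu (K.smul_mem _ hv)
    have hqw : 0 ≤ q t (u + a • v) := hpsd _ hw
    set nb : ℝ := Complex.normSq b with hnb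
    have hnbpos : 0 < nb := Complex.normSq_pos.mpr hb
    have hexp : (inner ℂ (S ((Jt t) (u + a • v))) (u + a • v) : ℂ)
        = ((-2 * s * nb + s ^ 2 * nb * C : ℝ) : ℂ) := by
      have e1 : (inner ℂ (S ((Jt t) (u + a • v))) (u + a • v) : ℂ)
          = b * a + starRingEnd ℂ a * starRingEnd ℂ b
            + starRingEnd ℂ a * a * (inner ℂ (S ((Jt t) v)) v : ℂ) := by
        simp only [map_add, map_smul, inner_add_left, inner_add_right, inner_smul_left,
          inner_smul_right, huu, hvu, ← hbdef]
        ring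
      rw [e1, hvv, ha]
      simp only [map_mul, Complex.conj_conj, Complex.conj_ofReal]
      have hmc2 : b * starRingEnd ℂ b = (nb : ℂ) := by rw [hnb]; exact Complex.mul_conj b
      push_cast
      linear_combination (-(s:ℂ) - (s:ℂ) + (s:ℂ)^2 * (C:ℂ)) * hmc2
    have hval : q t (u + a • v) = -2 * s * nb + s ^ 2 * nb * C := by
      show (inner ℂ (S ((Jt t) (u + a • v))) (u + a • v) : ℂ).re = _
      rw [hexp, Complex.ofReal_re]
    rw [hval] at hqw
    have hsC : s * C < 2 := by
      rw [hs, div_mul_eq_mul_div, div_lt_iff₀ hCpos]; nlinarith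
    nlinarith [mul_pos hspos hnbpos]
  -- main positivity on [0,1)
  have hq00 : ∀ t, q t (0 : E) = 0 := by
    intro t; simp [hqdef]
  have hpos : ∀ t ∈ Set.Ico (0 : ℝ) 1, ∀ u ∈ K, 0 ≤ q t u := by
    by_contra hcon
    push_neg at hcon
    obtain ⟨t₁, ht₁, u₁, hu₁, hq₁⟩ := hcon
    have hu₁ne : u₁ ≠ 0 := by
      intro h; rw [h, hq00] at hq₁; exact absurd hq₁ (lt_irrefl 0)
    have hn₁pos : (0:ℝ) < ‖u₁‖ := norm_pos_iff.mpr hu₁ne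
    set Sp : Set E := {u | u ∈ K ∧ ‖u‖ = 1} with hSp
    have hSpc : IsCompact Sp := by
      have hclosed : IsClosed Sp := by
        have h1 : Sp = (K : Set E) ∩ Metric.sphere 0 1 := by
          ext w; simp [hSp, Set.mem_setOf_eq, Metric.mem_sphere, dist_zero_right]
        rw [h1]
        exact K.closed_of_finiteDimensional.inter Metric.isClosed_sphere
      have hbdd : Bornology.IsBounded Sp := by
        apply (Metric.isBounded_closedBall (x := (0:E)) (r := 1)).subset
        intro w hw
        simp only [Metric.mem_closedBall, dist_zero_right]
        exact le_of_eq hw.2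
      exact Metric.isCompact_of_isClosed_isBounded hclosed hbdd
    -- normalized bad vector
    set u' : E := ((‖u₁‖⁻¹ : ℝ) : ℂ) • u₁ with hu'
    have hu'K : u' ∈ K := K.smul_mem _ hu₁
    have hu'1 : ‖u'‖ = 1 := by
      rw [hu', norm_smul, Complex.norm_real, Real.norm_eq_abs,
        abs_of_pos (inv_pos.mpr hn₁pos), inv_mul_cancel₀ (ne_of_gt hn₁pos)]
    have hu'Sp : u' ∈ Sp := ⟨hu'K, hu'1⟩
    have hSpne : Sp.Nonempty := ⟨u', hu'Sp⟩
    have hq₁' : q t₁ u' < 0 := by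
      rw [hu', hscale]
      exact mul_neg_of_pos_of_neg (by positivity) hq₁
    -- continuity in u
    have hqcont : ∀ t, Continuous (q t) := by
      intro t
      exact Complex.continuous_re.comp
        ((S.continuous.comp (Jt t).continuous).inner continuous_id)
    have himg : ∀ t, IsCompact (q t '' Sp) := fun t => hSpc.image (hqcont t)
    have himgne : ∀ t, (q t '' Sp).Nonempty := fun t => hSpne.image _
    set lam : ℝ → ℝ := fun t => sInf (q t '' Sp) with hlam
    have hlam_mem : ∀ t, ∃ w ∈ Sp, q t w = lam t := by
      intro t
      have := (himg t).sInf_mem (himgne t)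
      obtain ⟨w, hw, hweq⟩ := this
      exact ⟨w, hw, hweq⟩
    have hlam_le : ∀ t, ∀ w ∈ Sp, lam t ≤ q t w := by
      intro t w hw
      exact csInf_le (himg t).bddBelow ⟨w, hw, rfl⟩
    -- bounds on p, r over the sphere
    have habs : ∀ (A : E →L[ℂ] E) (w : E), ‖w‖ = 1 → |(inner ℂ (A w) w : ℂ).re| ≤ ‖A‖ := by
      intro A w hw1
      calc |(inner ℂ (A w) w : ℂ).re| ≤ ‖(inner ℂ (A w) w : ℂ)‖ := Complex.abs_re_le_norm _
        _ ≤ ‖A w‖ * ‖w‖ := norm_inner_le_norm _ _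
        _ = ‖A w‖ := by rw [hw1, mul_one]
        _ ≤ ‖A‖ * ‖w‖ := A.le_opNorm w
        _ = ‖A‖ := by rw [hw1, mul_one]
    set M : ℝ := ‖S.comp J₀‖ + ‖S.comp J₁‖ with hM
    have hM0 : 0 ≤ M := by positivity
    have hdiff : ∀ w ∈ Sp, ∀ t t' : ℝ, |q t w - q t' w| ≤ M * |t - t'| := by
      intro w hw t t'
      have hpw : |p w| ≤ ‖S.comp J₀‖ := habs (S.comp J₀) w hw.2
      have hrw : |r w| ≤ ‖S.comp J₁‖ := habs (S.comp J₁) w hw.2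
      have he : q t w - q t' w = (t - t') * (r w - p w) := by
        rw [hq t w, hq t' w]; ring
      rw [he, abs_mul]
      have hp2 := abs_le.mp hpw
      have hr2 := abs_le.mp hrw
      have h1 : |r w - p w| ≤ M := abs_le.mpr ⟨by rw [hM]; linarith, by rw [hM]; linarith⟩
      calc |t - t'| * |r w - p w| ≤ |t - t'| * M :=
            mul_le_mul_of_nonneg_left h1 (abs_nonneg _)
        _ = M * |t - t'| := mul_comm _ _
    have hlamlip : ∀ t t' : ℝ, lam t ≤ lam t' + M * |t - t'| := by
      intro t t'
      obtain ⟨w, hw, hweq⟩ := hlam_mem t'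
      have h1 : lam t ≤ q t w := hlam_le t w hw
      have h2 : q t w - q t' w ≤ M * |t - t'| :=
        (le_abs_self _).trans (hdiff w hw t t')
      rw [hweq] at h2
      linarith
    have hlamcont : Continuous lam := by
      have hlw : LipschitzWith (Real.toNNReal M) lam := by
        apply LipschitzWith.of_dist_le_mul
        intro t t'
        rw [Real.dist_eq, Real.dist_eq, Real.coe_toNNReal _ hM0]
        have h1 := hlamlip t t'
        have h2 := hlamlip t' t
        rw [abs_sub_comm] at h2
        exact abs_le.mpr ⟨by linarith, by linarith⟩
      exact hlw.continuous
    have hlam0 : c ≤ lam 0 := by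
      apply le_csInf (himgne 0)
      rintro x ⟨w, hw, rfl⟩
      have h1 := hpos0 w hw.1
      have h2 : q 0 w = p w := by rw [hq]; ring
      rw [h2]
      calc c = c * ‖w‖ ^ 2 := by rw [hw.2]; ring
        _ ≤ p w := h1
    have hlamt₁ : lam t₁ < 0 := lt_of_le_of_lt (hlam_le t₁ u' hu'Sp) hq₁'
    have hivt : (0:ℝ) ∈ lam '' Set.Icc 0 t₁ := by
      apply intermediate_value_Icc' ht₁.1 hlamcont.continuousOn
      exact ⟨le_of_lt hlamt₁, by linarith⟩
    obtain ⟨t₀, ht₀, hlamt₀⟩ := hivt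
    have ht₀I : t₀ ∈ Set.Ico (0:ℝ) 1 := ⟨ht₀.1, lt_of_le_of_lt ht₀.2 ht₁.2⟩
    obtain ⟨u₀, hu₀Sp, hqu₀⟩ := hlam_mem t₀
    have hpsd : ∀ v ∈ K, 0 ≤ q t₀ v := by
      intro v hv
      by_cases hv0 : v = 0
      · rw [hv0, hq00]
      · have hnv : (0:ℝ) < ‖v‖ := norm_pos_iff.mpr hv0
        have hvSp : ((‖v‖⁻¹ : ℝ) : ℂ) • v ∈ Sp := by
          refine ⟨K.smul_mem _ hv, ?_⟩
          rw [norm_smul, Complex.norm_real, Real.norm_eq_abs,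
            abs_of_pos (inv_pos.mpr hnv), inv_mul_cancel₀ (ne_of_gt hnv)]
        have h1 : 0 ≤ q t₀ (((‖v‖⁻¹ : ℝ) : ℂ) • v) := by
          rw [← hlamt₀]
          exact hlam_le t₀ _ hvSp
        rw [hscale] at h1
        have hinvsq : 0 < (‖v‖⁻¹) ^ 2 := by positivity
        nlinarith
    have hq₀0 : q t₀ u₀ = 0 := by rw [hqu₀, hlamt₀]
    have hrad := hCS t₀ ⟨ht₀I.1, le_of_lt ht₀I.2⟩ hpsd u₀ hu₀Sp.1 hq₀0
    have hu₀0 := hnondeg t₀ ht₀I u₀ hu₀Sp.1 hrad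
    rw [hu₀0] at hu₀Sp
    have hbad : ‖(0:E)‖ = 1 := hu₀Sp.2
    simp at hbad
  -- positivity of r on K
  have hr0 : ∀ u ∈ K, 0 ≤ r u := by
    intro u hu
    by_contra hneg
    push_neg at hneg
    set ε : ℝ := -r u with hε
    have hεpos : 0 < ε := by rw [hε]; linarith
    set P : ℝ := p u with hP
    have hne : (0:ℝ) < |P| + 1 := by positivity
    set δ : ℝ := ε / (4 * (|P| + 1)) with hδ
    have hδpos : 0 < δ := by positivity
    set t : ℝ := max (1/2) (1 - δ) with htdef
    have ht1 : t < 1 := max_lt (by norm_num) (by linarith)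
    have hthalf : (1/2 : ℝ) ≤ t := le_max_left _ _
    have ht0 : (0:ℝ) ≤ t := by linarith
    have h1t : 1 - t ≤ δ := by
      have h := le_max_right (1/2 : ℝ) (1 - δ)
      rw [← htdef] at h
      linarith
    have h1tnn : 0 ≤ 1 - t := by linarith
    have hqt := hpos t ⟨ht0, ht1⟩ u hu
    rw [hq] at hqt
    have hru : r u = -ε := by rw [hε]; ring
    have hδP : δ * (|P| + 1) = ε / 4 := by
      rw [hδ]; field_simp
    have hPa : P ≤ |P| + 1 := by
      have h := le_abs_self P; linarith
    have hPb : (1 - t) * P ≤ ε / 4 := by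
      calc (1 - t) * P ≤ (1 - t) * (|P| + 1) := mul_le_mul_of_nonneg_left hPa h1tnn
        _ ≤ δ * (|P| + 1) := mul_le_mul_of_nonneg_right h1t (le_of_lt hne)
        _ = ε / 4 := hδP
    have htε : ε / 2 ≤ t * ε := by nlinarith
    rw [hru, ← hP] at hqt
    nlinarith [htε, hPb, hεpos]
  -- conclusion
  intro t ht u hu
  have h1 : (inner ℂ (S (Jt t u)) u : ℂ).re = q t u := rfl
  rw [h1, hq t u]
  have h2 : c * ‖u‖ ^ 2 ≤ p u := hpos0 u hu
  have h3 : 0 ≤ r u := hr0 u hu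
  have h4 : (0:ℝ) ≤ 1 - t := by linarith [ht.2]
  nlinarith [ht.1, mul_le_mul_of_nonneg_left h2 h4, mul_nonneg ht.1 h3]
end
end

section
/- Let A depend Lipschitz-continuously on a parameter a with ‖A(a) − A(a′)‖ ≤ K|a − a′|, have only real eigenvalues, and have spectral projectors uniformly bounded by C. Then the eigenvalues λ₁(a) ≤ … ≤ λ_N(a), listed in increasing order with multiplicity, are Lipschitz functions of a with constant at most CK. -/
noncomputable section

open Polynomial Set Filter

set_option maxHeartbeats 1000000
set_option synthInstance.maxHeartbeats 1000000

-- Monotone tuples with equal multisets of values agree.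
lemma mono_eq_of_multiset_map_eq : ∀ {N : ℕ} {α β : Fin N → ℝ}, Monotone α → Monotone β →
    Multiset.map α Finset.univ.val = Multiset.map β Finset.univ.val → α = β := by
  intro N
  induction N with
  | zero => intro α β _ _ _; funext i; exact i.elim0
  | succ n ih =>
    intro α β hα hβ h
    have hmem : ∀ (p q : Fin (n+1) → ℝ), Multiset.map p Finset.univ.val
        = Multiset.map q Finset.univ.val → ∀ i₀, ∃ k, q k = p i₀ := by
      intro p q hh i₀
      have : p i₀ ∈ Multiset.map q Finset.univ.val := by
        rw [← hh]
        exact Multiset.mem_map_of_mem _ (Finset.mem_univ_val i₀)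
      obtain ⟨k, _, hk⟩ := Multiset.mem_map.1 this
      exact ⟨k, hk⟩
    have h0 : α 0 = β 0 := by
      obtain ⟨k, hk⟩ := hmem α β h 0
      obtain ⟨k', hk'⟩ := hmem β α h.symm 0
      exact le_antisymm (hk' ▸ hα (Fin.zero_le k')) (hk ▸ hβ (Fin.zero_le k))
    have hsplit : ∀ (p : Fin (n+1) → ℝ), Multiset.map p Finset.univ.val
        = p 0 ::ₘ Multiset.map (p ∘ Fin.succ) Finset.univ.val := by
      intro p
      rw [Fin.univ_succ, Finset.cons_val, Multiset.map_cons]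
      congr 1
      rw [Finset.map_val, Multiset.map_map]
      rfl
    have htail : Multiset.map (α ∘ Fin.succ) Finset.univ.val
        = Multiset.map (β ∘ Fin.succ) Finset.univ.val := by
      have h2 := h
      rw [hsplit α, hsplit β, h0] at h2
      exact (Multiset.cons_inj_right _).1 h2
    have htl := ih (hα.comp (Fin.strictMono_succ.monotone))
      (hβ.comp (Fin.strictMono_succ.monotone)) htail
    funext i
    refine Fin.cases h0 (fun i => ?_) i
    exact congrFun htl i

-- Evaluating the characteristic polynomial of a matrix.
lemma eval_charpoly_det {m : Type*} [Fintype m] [DecidableEq m] (M : Matrix m m ℂ) (x : ℂ) :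
    M.charpoly.eval x = (x • (1 : Matrix m m ℂ) - M).det := by
  rw [Matrix.charpoly, eval_det, Matrix.matPolyEquiv_charmatrix]
  congr 1
  rw [eval_sub, eval_X, eval_C]
  congr 1
  rw [Matrix.scalar_apply, Matrix.smul_one_eq_diagonal]


/-- If A(a) is Lipschitz in a, with real semi-simple eigenvalues and uniformly
bounded spectral projectors, then the increasingly ordered eigenvalues are
Lipschitz functions of a with constant CK. -/
theorem stmt_13 (n N : ℕ) (Ω : Set (EuclideanSpace ℝ (Fin n)))
    (hΩo : IsOpen Ω) (hΩc : Convex ℝ Ω)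
    (A : EuclideanSpace ℝ (Fin n) →
      (EuclideanSpace ℂ (Fin N) →L[ℂ] EuclideanSpace ℂ (Fin N)))
    (K C : ℝ) (hK : 0 < K) (hC : 0 < C)
    (hLip : ∀ a ∈ Ω, ∀ a' ∈ Ω, ‖A a - A a'‖ ≤ K * ‖a - a'‖)
    (μ : EuclideanSpace ℝ (Fin n) → Fin N → ℝ)
    (hmono : ∀ a ∈ Ω, Monotone (μ a))
    (hchar : ∀ a ∈ Ω,
      LinearMap.charpoly
          ((A a : EuclideanSpace ℂ (Fin N) →ₗ[ℂ] EuclideanSpace ℂ (Fin N))) =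
        ∏ j, (Polynomial.X - Polynomial.C ((μ a j : ℝ) : ℂ)))
    (hss : ∀ a ∈ Ω, ∀ z : ℂ,
      LinearMap.ker ((A a - z • (1 : EuclideanSpace ℂ (Fin N) →L[ℂ] EuclideanSpace ℂ (Fin N)) : EuclideanSpace ℂ (Fin N) →ₗ[ℂ] EuclideanSpace ℂ (Fin N))) ⊓ LinearMap.range ((A a - z • (1 : EuclideanSpace ℂ (Fin N) →L[ℂ] EuclideanSpace ℂ (Fin N)) : EuclideanSpace ℂ (Fin N) →ₗ[ℂ] EuclideanSpace ℂ (Fin N))) = ⊥)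
    (hproj : ∀ a ∈ Ω, ∀ z : ℂ,
      ∀ Pr : EuclideanSpace ℂ (Fin N) →L[ℂ] EuclideanSpace ℂ (Fin N),
        Pr * Pr = Pr →
        LinearMap.range (Pr : EuclideanSpace ℂ (Fin N) →ₗ[ℂ] EuclideanSpace ℂ (Fin N)) = LinearMap.ker ((A a - z • (1 : EuclideanSpace ℂ (Fin N) →L[ℂ] EuclideanSpace ℂ (Fin N)) : EuclideanSpace ℂ (Fin N) →ₗ[ℂ] EuclideanSpace ℂ (Fin N))) →
        LinearMap.ker (Pr : EuclideanSpace ℂ (Fin N) →ₗ[ℂ] EuclideanSpace ℂ (Fin N)) = LinearMap.range ((A a - z • (1 : EuclideanSpace ℂ (Fin N) →L[ℂ] EuclideanSpace ℂ (Fin N)) : EuclideanSpace ℂ (Fin N) →ₗ[ℂ] EuclideanSpace ℂ (Fin N))) →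
        ‖Pr‖ ≤ C) :
    ∀ j, ∀ a ∈ Ω, ∀ a' ∈ Ω, |μ a j - μ a' j| ≤ C * K * ‖a - a'‖ := by
  classical
  intro j a ha a' ha'
  set L := ‖a' - a‖ with hLdef
  have hL0 : 0 ≤ L := norm_nonneg _
  set γ : ℝ → EuclideanSpace ℝ (Fin n) := fun t => a + t • (a' - a) with hγ
  have hγΩ : ∀ t ∈ Icc (0:ℝ) 1, γ t ∈ Ω := fun t ht => hΩc.add_smul_sub_mem ha ha' ht
  have hγdist : ∀ s t : ℝ, ‖γ s - γ t‖ = |s - t| * L := by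
    intro s t
    have h1 : γ s - γ t = (s - t) • (a' - a) := by
      simp only [hγ]
      module
    rw [h1, norm_smul, Real.norm_eq_abs]
  have hALip : ∀ s ∈ Icc (0:ℝ) 1, ∀ t ∈ Icc (0:ℝ) 1,
      ‖A (γ s) - A (γ t)‖ ≤ K * L * |s - t| := by
    intro s hs t ht
    calc ‖A (γ s) - A (γ t)‖ ≤ K * ‖γ s - γ t‖ := hLip _ (hγΩ s hs) _ (hγΩ t ht)
    _ = K * L * |s - t| := by rw [hγdist]; ring
  set g : ℝ → Fin N → ℝ := fun t => μ (γ t) with hg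
  -- determinant-product formula
  have hdet : ∀ b ∈ Ω, ∀ x : ℂ,
      LinearMap.det (x • (1 : EuclideanSpace ℂ (Fin N) →ₗ[ℂ] EuclideanSpace ℂ (Fin N))
        - (A b : EuclideanSpace ℂ (Fin N) →ₗ[ℂ] EuclideanSpace ℂ (Fin N)))
        = ∏ k, (x - (μ b k : ℂ)) := by
    intro b hb x
    set f := (A b : EuclideanSpace ℂ (Fin N) →ₗ[ℂ] EuclideanSpace ℂ (Fin N))
    set bE := Module.finBasis ℂ (EuclideanSpace ℂ (Fin N))
    have h1 : LinearMap.det (x • (1 : EuclideanSpace ℂ (Fin N) →ₗ[ℂ] EuclideanSpace ℂ (Fin N)) - f)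
        = ((LinearMap.toMatrix bE bE) (x • (1 : EuclideanSpace ℂ (Fin N) →ₗ[ℂ]
            EuclideanSpace ℂ (Fin N)) - f)).det :=
      (LinearMap.det_toMatrix _ _).symm
    rw [h1, map_sub, map_smul, LinearMap.toMatrix_one, ← eval_charpoly_det,
      LinearMap.charpoly_toMatrix, hchar b hb]
    simp [eval_prod]
  -- eigenvector existence
  have heig : ∀ b ∈ Ω, ∀ k : Fin N, ∃ v : EuclideanSpace ℂ (Fin N),
      ‖v‖ = 1 ∧ A b v = (μ b k : ℂ) • v := by
    intro b hb k
    have hdet0 : LinearMap.det ((μ b k : ℂ) • (1 : EuclideanSpace ℂ (Fin N) →ₗ[ℂ]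
        EuclideanSpace ℂ (Fin N)) - (A b : EuclideanSpace ℂ (Fin N) →ₗ[ℂ]
        EuclideanSpace ℂ (Fin N))) = 0 := by
      rw [hdet b hb]
      exact Finset.prod_eq_zero (Finset.mem_univ k) (sub_self _)
    have hlt := LinearMap.bot_lt_ker_of_det_eq_zero hdet0
    obtain ⟨v, hvker, hv0'⟩ := SetLike.exists_of_lt hlt
    have hv0 : v ≠ 0 := by simpa using hv0'
    have hvek : A b v = (μ b k : ℂ) • v := by
      have h2 : (μ b k : ℂ) • v - A b v = 0 := by simpa using LinearMap.mem_ker.1 hvker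
      exact (sub_eq_zero.1 h2).symm
    refine ⟨(‖v‖⁻¹ : ℝ) • v, ?_, ?_⟩
    · rw [norm_smul, Real.norm_eq_abs, abs_inv, abs_norm]
      exact inv_mul_cancel₀ (norm_ne_zero_iff.2 hv0)
    · rw [(A b).map_smul_of_tower, hvek, smul_comm]
  -- no eigenvector for non-eigenvalues
  have hinj : ∀ b ∈ Ω, ∀ x : ℂ, (∀ k, x ≠ (μ b k : ℂ)) →
      ∀ v : EuclideanSpace ℂ (Fin N), A b v = x • v → v = 0 := by
    intro b hb x hx v hv
    set f := (A b : EuclideanSpace ℂ (Fin N) →ₗ[ℂ] EuclideanSpace ℂ (Fin N))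
    have hdet' : LinearMap.det (x • (1 : EuclideanSpace ℂ (Fin N) →ₗ[ℂ]
        EuclideanSpace ℂ (Fin N)) - f) ≠ 0 := by
      rw [hdet b hb]
      rw [Finset.prod_ne_zero_iff]
      intro k _
      exact sub_ne_zero.2 (hx k)
    set bE := Module.finBasis ℂ (EuclideanSpace ℂ (Fin N))
    set q := x • (1 : EuclideanSpace ℂ (Fin N) →ₗ[ℂ] EuclideanSpace ℂ (Fin N)) - f with hq
    have h1 : ((LinearMap.toMatrix bE bE) q).det ≠ 0 := by
      rw [LinearMap.det_toMatrix]
      exact hdet'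
    have h2 : IsUnit ((LinearMap.toMatrix bE bE) q) :=
      (Matrix.isUnit_iff_isUnit_det _).2 (isUnit_iff_ne_zero.2 h1)
    have h2' : IsUnit ((LinearMap.toMatrixAlgEquiv bE) q) := by
      have : (LinearMap.toMatrixAlgEquiv bE) q = (LinearMap.toMatrix bE bE) q := rfl
      rw [this]; exact h2
    have h3 : IsUnit q := by
      have h4 := h2'.map (LinearMap.toMatrixAlgEquiv bE).symm
      rwa [AlgEquiv.symm_apply_apply] at h4
    have hker : LinearMap.ker q = ⊥ := (LinearMap.isUnit_iff_ker_eq_bot q).1 h3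
    have hvk : v ∈ LinearMap.ker q := by
      rw [LinearMap.mem_ker]
      show x • v - A b v = 0
      rw [hv, sub_self]
    rw [hker] at hvk
    simpa using hvk
  -- eigenvalue bound by operator norm
  have hbound : ∀ b ∈ Ω, ∀ k, |μ b k| ≤ ‖A b‖ := by
    intro b hb k
    obtain ⟨v, hv1, hv⟩ := heig b hb k
    have h1 := (A b).le_opNorm v
    rw [hv, norm_smul, hv1, mul_one, mul_one, Complex.norm_real, Real.norm_eq_abs] at h1
    exact h1
  -- CLM determinant formula
  have hdetL : ∀ b ∈ Ω, ∀ x : ℂ,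
      ((x • (1 : EuclideanSpace ℂ (Fin N) →L[ℂ] EuclideanSpace ℂ (Fin N)) - A b)).det
        = ∏ k, (x - (μ b k : ℂ)) := by
    intro b hb x
    have hco : ((x • (1 : EuclideanSpace ℂ (Fin N) →L[ℂ] EuclideanSpace ℂ (Fin N)) - A b :
        EuclideanSpace ℂ (Fin N) →L[ℂ] EuclideanSpace ℂ (Fin N)) :
        EuclideanSpace ℂ (Fin N) →ₗ[ℂ] EuclideanSpace ℂ (Fin N))
        = x • (1 : EuclideanSpace ℂ (Fin N) →ₗ[ℂ] EuclideanSpace ℂ (Fin N))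
          - (A b : EuclideanSpace ℂ (Fin N) →ₗ[ℂ] EuclideanSpace ℂ (Fin N)) := by
      ext y
      simp
    rw [ContinuousLinearMap.det, hco]
    exact hdet b hb x
  -- continuity of ordered eigenvalues along the segment
  have hcont : ∀ t ∈ Icc (0:ℝ) 1, ∀ η > 0, ∃ δ > 0, ∀ s ∈ Icc (0:ℝ) 1,
      |s - t| < δ → dist (g s) (g t) ≤ η := by
    intro t ht η hη
    by_contra hcon
    push_neg at hcon
    have hseq : ∀ m : ℕ, ∃ s, s ∈ Icc (0:ℝ) 1 ∧ |s - t| < 1/(m+1) ∧ η < dist (g s) (g t) := by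
      intro m
      obtain ⟨s, hs1, hs2, hs3⟩ := hcon (1/(m+1)) (by positivity)
      exact ⟨s, hs1, hs2, hs3⟩
    choose s hsIcc hsclose hsfar using hseq
    set R := ‖A (γ t)‖ + K * L with hR
    have hR0 : 0 ≤ R := by positivity
    have hRb : ∀ m : ℕ, g (s m) ∈ Metric.closedBall (0 : Fin N → ℝ) R := by
      intro m
      rw [mem_closedBall_zero_iff]
      rw [pi_norm_le_iff_of_nonneg hR0]
      intro k
      rw [Real.norm_eq_abs]
      have h1 : |g (s m) k| ≤ ‖A (γ (s m))‖ := hbound _ (hγΩ _ (hsIcc m)) k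
      have h2 := norm_sub_norm_le (A (γ (s m))) (A (γ t))
      have h3 : ‖A (γ (s m)) - A (γ t)‖ ≤ K * L * |s m - t| := hALip _ (hsIcc m) t ht
      have h4 : |s m - t| ≤ 1 := by
        have hs := hsIcc m
        rw [abs_le]
        constructor <;> [linarith [hs.1, ht.2]; linarith [hs.2, ht.1]]
      nlinarith [mul_nonneg (mul_nonneg hK.le hL0) (abs_nonneg (s m - t)),
        mul_le_mul_of_nonneg_left h4 (mul_nonneg hK.le hL0)]
    obtain ⟨ν, _, φ, hφmono, hφtend⟩ :=
      tendsto_subseq_of_bounded Metric.isBounded_closedBall hRb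
    have hstend : Tendsto (fun m => s (φ m)) atTop (nhds t) := by
      rw [tendsto_iff_dist_tendsto_zero]
      apply squeeze_zero (g := fun m : ℕ => 1/((m:ℝ)+1)) (fun m => dist_nonneg)
      · intro m
        rw [Real.dist_eq]
        refine le_trans (le_of_lt (hsclose (φ m))) ?_
        have h5 : (m:ℝ) ≤ (φ m : ℝ) := Nat.cast_le.2 hφmono.le_apply
        apply one_div_le_one_div_of_le (by positivity) (by linarith)
      · exact tendsto_one_div_add_atTop_nhds_zero_nat
    have hcoord : ∀ k, Tendsto (fun m => g (s (φ m)) k) atTop (nhds (ν k)) := by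
      intro k
      exact ((continuous_apply k).tendsto ν).comp hφtend
    have hνmono : Monotone ν := by
      intro i k hik
      refine le_of_tendsto_of_tendsto' (hcoord i) (hcoord k) (fun m => ?_)
      exact hmono _ (hγΩ _ (hsIcc (φ m))) hik
    have hAtend : Tendsto (fun m => A (γ (s (φ m)))) atTop (nhds (A (γ t))) := by
      rw [tendsto_iff_dist_tendsto_zero]
      apply squeeze_zero (g := fun m : ℕ => K * L * dist (s (φ m)) t) (fun m => dist_nonneg)
      · intro m
        rw [dist_eq_norm, Real.dist_eq]
        exact hALip _ (hsIcc (φ m)) t ht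
      · have h6 : Tendsto (fun m => dist (s (φ m)) t) atTop (nhds 0) := by
          rw [← tendsto_iff_dist_tendsto_zero]
          exact hstend
        simpa using h6.const_mul (K * L)
    have hpoly : ∀ x : ℝ, (∏ k, ((x:ℂ) - (ν k : ℂ))) = ∏ k, ((x:ℂ) - (g t k : ℂ)) := by
      intro x
      have hD : Continuous fun f : EuclideanSpace ℂ (Fin N) →L[ℂ] EuclideanSpace ℂ (Fin N) =>
          ((x:ℂ) • (1 : EuclideanSpace ℂ (Fin N) →L[ℂ] EuclideanSpace ℂ (Fin N)) - f).det :=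
        ContinuousLinearMap.continuous_det.comp (continuous_const.sub continuous_id)
      have hlim1 : Tendsto (fun m => ∏ k, ((x:ℂ) - (g (s (φ m)) k : ℂ))) atTop
          (nhds (∏ k, ((x:ℂ) - (g t k : ℂ)))) := by
        have h7 := (hD.tendsto _).comp hAtend
        have h8 : ∀ m, ((x:ℂ) • (1 : EuclideanSpace ℂ (Fin N) →L[ℂ]
            EuclideanSpace ℂ (Fin N)) - A (γ (s (φ m)))).det
            = ∏ k, ((x:ℂ) - (g (s (φ m)) k : ℂ)) := fun m => hdetL _ (hγΩ _ (hsIcc (φ m))) _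
        have h9 : ((x:ℂ) • (1 : EuclideanSpace ℂ (Fin N) →L[ℂ]
            EuclideanSpace ℂ (Fin N)) - A (γ t)).det = ∏ k, ((x:ℂ) - (g t k : ℂ)) :=
          hdetL _ (hγΩ t ht) _
        rw [← h9]
        exact h7.congr h8
      have hlim2 : Tendsto (fun m => ∏ k, ((x:ℂ) - (g (s (φ m)) k : ℂ))) atTop
          (nhds (∏ k, ((x:ℂ) - (ν k : ℂ)))) := by
        have hcp : Continuous fun y : Fin N → ℝ => ∏ k, ((x:ℂ) - (y k : ℂ)) := by
          apply continuous_finset_prod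
          intro k _
          exact continuous_const.sub (Complex.continuous_ofReal.comp (continuous_apply k))
        exact (hcp.tendsto _).comp hφtend
      exact tendsto_nhds_unique hlim2 hlim1
    have hνeq : ν = g t := by
      apply mono_eq_of_multiset_map_eq hνmono (hmono _ (hγΩ t ht))
      have hP : (∏ k, (X - Polynomial.C ((ν k : ℝ) : ℂ)))
          = ∏ k, (X - Polynomial.C ((g t k : ℝ) : ℂ)) := by
        apply Polynomial.eq_of_infinite_eval_eq
        apply Set.Infinite.mono (s := Set.range (fun r : ℝ => (r : ℂ)))
        · rintro _ ⟨r, rfl⟩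
          simp only [Set.mem_setOf_eq, eval_prod, eval_sub, eval_X, eval_C]
          exact hpoly r
        · exact Set.infinite_range_of_injective Complex.ofReal_injective
      have hroots : Multiset.map (fun k => ((ν k : ℝ) : ℂ)) Finset.univ.val
          = Multiset.map (fun k => ((g t k : ℝ) : ℂ)) Finset.univ.val := by
        have hr1 : ∀ (f : Fin N → ℝ), (∏ k, (X - Polynomial.C ((f k : ℝ) : ℂ))).roots
            = Multiset.map (fun k => ((f k : ℝ) : ℂ)) Finset.univ.val := by
          intro f
          rw [Finset.prod_eq_multiset_prod]
          rw [show Multiset.map (fun k => X - Polynomial.C ((f k : ℝ) : ℂ)) Finset.univ.val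
            = Multiset.map (fun r => X - Polynomial.C r)
              (Multiset.map (fun k => ((f k : ℝ) : ℂ)) Finset.univ.val) by
            rw [Multiset.map_map]; rfl]
          exact roots_multiset_prod_X_sub_C _
        rw [← hr1 ν, ← hr1 (g t), hP]
      have : Multiset.map (Complex.ofReal ∘ ν) Finset.univ.val
          = Multiset.map (Complex.ofReal ∘ (g t)) Finset.univ.val := hroots
      rw [← Multiset.map_map, ← Multiset.map_map] at this
      exact Multiset.map_injective Complex.ofReal_injective this
    have hfar : η ≤ dist ν (g t) := by
      have hd : Tendsto (fun m => dist (g (s (φ m))) (g t)) atTop (nhds (dist ν (g t))) :=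
        hφtend.dist tendsto_const_nhds
      exact ge_of_tendsto' hd (fun m => le_of_lt (hsfar (φ m)))
    rw [hνeq] at hfar
    simp at hfar
    linarith
  -- local sharp estimate
  have hloc : ∀ ε > 0, ∀ t ∈ Icc (0:ℝ) 1, ∃ δ > 0, ∀ s ∈ Icc (0:ℝ) 1,
      |s - t| < δ → |g s j - g t j| ≤ (C + ε) * (K * L) * |s - t| := by
    intro ε hε t ht
    have hγt : γ t ∈ Ω := hγΩ t ht
    set lam : ℝ := g t j with hlam
    set zc : ℂ := (lam : ℂ) with hzc
    set T := A (γ t) with hT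
    set Kk : Submodule ℂ (EuclideanSpace ℂ (Fin N)) := LinearMap.ker ((T - zc • (1 : EuclideanSpace ℂ (Fin N) →L[ℂ] EuclideanSpace ℂ (Fin N)) : EuclideanSpace ℂ (Fin N) →ₗ[ℂ] EuclideanSpace ℂ (Fin N))) with hKk
    set W : Submodule ℂ (EuclideanSpace ℂ (Fin N)) := LinearMap.range ((T - zc • (1 : EuclideanSpace ℂ (Fin N) →L[ℂ] EuclideanSpace ℂ (Fin N)) : EuclideanSpace ℂ (Fin N) →ₗ[ℂ] EuclideanSpace ℂ (Fin N))) with hW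
    have happ : ∀ v, (T - zc • 1) v = T v - zc • v := by intro v; simp
    have happ2 : ∀ (s' : ℝ) (v : EuclideanSpace ℂ (Fin N)),
        (A (γ s') - T) v = A (γ s') v - T v := by intro s' v; simp
    -- gap
    have hgapex : ∃ gap : ℝ, 0 < gap ∧ ∀ k, g t k ≠ lam → gap ≤ |g t k - lam| := by
      by_cases hex : ∃ k, g t k ≠ lam
      · set F := Finset.univ.filter (fun k => g t k ≠ lam) with hF
        have hFne : F.Nonempty := by
          obtain ⟨k, hk⟩ := hex
          exact ⟨k, by simp [hF, hk]⟩
        refine ⟨F.inf' hFne (fun k => |g t k - lam|), ?_, ?_⟩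
        · rw [Finset.lt_inf'_iff]
          intro k hk
          rw [hF, Finset.mem_filter] at hk
          exact abs_pos.2 (sub_ne_zero.2 hk.2)
        · intro k hk
          exact Finset.inf'_le _ (by simp [hF, hk])
      · push_neg at hex
        exact ⟨1, one_pos, fun k hk => absurd (hex k) hk⟩
    obtain ⟨gap, hgap0, hgapk⟩ := hgapex
    -- complementarity
    have hdisj : Kk ⊓ W = ⊥ := hss (γ t) hγt zc
    have hcompl : IsCompl Kk W := by
      constructor
      · rw [disjoint_iff]
        exact hdisj
      · rw [codisjoint_iff]
        apply Submodule.eq_top_of_finrank_eq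
        have h1 := Submodule.finrank_sup_add_finrank_inf_eq Kk W
        rw [hdisj] at h1
        have h2 : Module.finrank ℂ W + Module.finrank ℂ Kk
            = Module.finrank ℂ (EuclideanSpace ℂ (Fin N)) :=
          LinearMap.finrank_range_add_finrank_ker
            ((T - zc • 1 : EuclideanSpace ℂ (Fin N) →L[ℂ] EuclideanSpace ℂ (Fin N)) :
              EuclideanSpace ℂ (Fin N) →ₗ[ℂ] EuclideanSpace ℂ (Fin N))
        rw [finrank_bot, add_zero] at h1
        omega
    -- the spectral projector
    set Pl := Kk.subtype ∘ₗ (Kk.linearProjOfIsCompl W hcompl) with hPl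
    set P : EuclideanSpace ℂ (Fin N) →L[ℂ] EuclideanSpace ℂ (Fin N) :=
      LinearMap.toContinuousLinearMap Pl with hP
    have hPapp : ∀ y, P y = Kk.subtype ((Kk.linearProjOfIsCompl W hcompl) y) := fun y => rfl
    have hPmemK : ∀ y, P y ∈ Kk := by
      intro y
      rw [hPapp]
      exact Submodule.coe_mem _
    have hPleft : ∀ y ∈ Kk, P y = y := by
      intro y hy
      rw [hPapp]
      exact congrArg Subtype.val (Submodule.linearProjOfIsCompl_apply_left hcompl ⟨y, hy⟩)
    have hPright : ∀ y ∈ W, P y = 0 := by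
      intro y hy
      rw [hPapp]
      have h3 := Submodule.linearProjOfIsCompl_apply_right hcompl (⟨y, hy⟩ : W)
      rw [show (Kk.linearProjOfIsCompl W hcompl) y = 0 from h3]
      exact map_zero _
    have hPidem : P * P = P := by
      refine ContinuousLinearMap.ext fun y => ?_
      rw [ContinuousLinearMap.mul_apply]
      exact hPleft _ (hPmemK y)
    have hPrange : LinearMap.range (P : EuclideanSpace ℂ (Fin N) →ₗ[ℂ] EuclideanSpace ℂ (Fin N)) = Kk := by
      apply le_antisymm
      · rintro _ ⟨y, rfl⟩
        exact hPmemK y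
      · intro y hy
        exact ⟨y, hPleft y hy⟩
    have hPker : LinearMap.ker (P : EuclideanSpace ℂ (Fin N) →ₗ[ℂ] EuclideanSpace ℂ (Fin N)) = W := by
      apply le_antisymm
      · intro y hy
        have h3 : P y = 0 := hy
        rw [hPapp] at h3
        have h4 : (Kk.linearProjOfIsCompl W hcompl) y = 0 := Subtype.coe_injective (by simpa using h3)
        exact (Submodule.linearProjOfIsCompl_apply_eq_zero_iff hcompl).1 h4
      · intro y hy
        exact LinearMap.mem_ker.2 (hPright y hy)
    have hPnorm : ‖P‖ ≤ C := hproj (γ t) hγt zc P hPidem hPrange hPker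
    -- membership in Kk
    have hKmem : ∀ v, v ∈ Kk ↔ T v = zc • v := by
      intro v
      rw [hKk, LinearMap.mem_ker]
      constructor
      · intro h5
        have h6 : T v - zc • v = 0 := by rw [← happ]; exact h5
        exact sub_eq_zero.1 h6
      · intro h5
        show (T - zc • 1) v = 0
        rw [happ, h5, sub_self]
    -- uniform injectivity modulus on W
    have hmt : ∃ mt : ℝ, 0 < mt ∧ ∀ z : ℝ, |z - lam| ≤ gap/2 → ∀ w ∈ W,
        mt * ‖w‖ ≤ ‖T w - (z:ℂ) • w‖ := by
      by_cases hWbot : W = ⊥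
      · refine ⟨1, one_pos, ?_⟩
        intro z hz w hw
        rw [hWbot] at hw
        simp only [Submodule.mem_bot] at hw
        subst hw
        simp
      · obtain ⟨x₀, hx₀W, hx₀0⟩ := Submodule.exists_mem_ne_zero_of_ne_bot hWbot
        set u := (‖x₀‖⁻¹ : ℝ) • x₀ with hu
        have huW : u ∈ W := Submodule.smul_of_tower_mem W _ hx₀W
        have hun : ‖u‖ = 1 := by
          rw [hu, norm_smul, Real.norm_eq_abs, abs_inv, abs_norm]
          exact inv_mul_cancel₀ (norm_ne_zero_iff.2 hx₀0)
        set S : Set (EuclideanSpace ℂ (Fin N)) := {w | w ∈ W ∧ ‖w‖ = 1} with hS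
        have hScomp : IsCompact S := by
          have h6 : S = (W : Set (EuclideanSpace ℂ (Fin N))) ∩ Metric.sphere 0 1 := by
            ext w
            simp [hS, Set.mem_inter_iff, mem_sphere_zero_iff_norm]
          rw [h6]
          exact (isCompact_sphere 0 1).inter_left (Submodule.closed_of_finiteDimensional W)
        set Kset : Set (ℝ × EuclideanSpace ℂ (Fin N)) :=
          (Icc (lam - gap/2) (lam + gap/2)) ×ˢ S with hKset
        have hKsetc : IsCompact Kset := (isCompact_Icc).prod hScomp
        have hKsetne : Kset.Nonempty :=
          ⟨(lam, u), Set.mk_mem_prod ⟨by linarith, by linarith⟩ ⟨huW, hun⟩⟩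
        have hfc : Continuous fun p : ℝ × EuclideanSpace ℂ (Fin N) =>
            ‖T p.2 - (p.1:ℂ) • p.2‖ := by
          apply Continuous.norm
          exact (T.continuous.comp continuous_snd).sub
            ((Complex.continuous_ofReal.comp continuous_fst).smul continuous_snd)
        obtain ⟨⟨z₀, w₀⟩, hz₀mem, hmin⟩ := hKsetc.exists_isMinOn hKsetne hfc.continuousOn
        set mt := ‖T w₀ - (z₀:ℂ) • w₀‖ with hmtdef
        have hz₀I : z₀ ∈ Icc (lam - gap/2) (lam + gap/2) := hz₀mem.1
        have hw₀S : w₀ ∈ W ∧ ‖w₀‖ = 1 := hz₀mem.2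
        have hmt0 : 0 < mt := by
          rcases eq_or_lt_of_le (norm_nonneg (T w₀ - (z₀:ℂ) • w₀)) with h7 | h7
          · exfalso
            have h8 : T w₀ = (z₀:ℂ) • w₀ := by
              have h8' : ‖T w₀ - (z₀:ℂ) • w₀‖ = 0 := h7.symm
              rw [norm_eq_zero] at h8'
              exact sub_eq_zero.1 h8'
            by_cases hzlam : z₀ = lam
            · have h9 : w₀ ∈ Kk := (hKmem w₀).2 (by rw [h8, hzlam])
              have h10 : w₀ ∈ Kk ⊓ W := ⟨h9, hw₀S.1⟩
              rw [hdisj] at h10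
              rw [Submodule.mem_bot] at h10
              rw [h10] at hw₀S
              simp at hw₀S
            · have h11 : ∀ k, (z₀:ℂ) ≠ (μ (γ t) k : ℂ) := by
                intro k hk
                have hzk : z₀ = g t k := Complex.ofReal_injective hk
                by_cases hklam : g t k = lam
                · exact hzlam (by rw [hzk, hklam])
                · have h11' := hgapk k hklam
                  have habs : |z₀ - lam| ≤ gap/2 :=
                    abs_le.2 ⟨by linarith [hz₀I.1], by linarith [hz₀I.2]⟩
                  rw [← hzk] at h11'
                  linarith [habs, h11']
              have h12 := hinj (γ t) hγt (z₀:ℂ) h11 w₀ h8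
              rw [h12] at hw₀S
              simp at hw₀S
          · exact h7
        refine ⟨mt, hmt0, ?_⟩
        intro z hz w hw
        rcases eq_or_ne w 0 with rfl | hw0
        · simp
        · have hwS : (‖w‖⁻¹ : ℝ) • w ∈ S := ⟨Submodule.smul_of_tower_mem W _ hw, by
            rw [norm_smul, Real.norm_eq_abs, abs_inv, abs_norm]
            exact inv_mul_cancel₀ (norm_ne_zero_iff.2 hw0)⟩
          have hzI : z ∈ Icc (lam - gap/2) (lam + gap/2) := by
            have h13' := abs_le.1 hz
            exact ⟨by linarith [h13'.1], by linarith [h13'.2]⟩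
          have h13 := (isMinOn_iff.1 hmin) _ (Set.mk_mem_prod hzI hwS)
          have h14 : ‖T ((‖w‖⁻¹ : ℝ) • w) - (z:ℂ) • ((‖w‖⁻¹ : ℝ) • w)‖
              = ‖w‖⁻¹ * ‖T w - (z:ℂ) • w‖ := by
            rw [T.map_smul_of_tower,
              show (z:ℂ) • ((‖w‖⁻¹ : ℝ) • w) = (‖w‖⁻¹ : ℝ) • ((z:ℂ) • w) from smul_comm _ _ _,
              ← smul_sub, norm_smul, Real.norm_eq_abs, abs_inv, abs_norm]
          rw [h14] at h13
          have hwpos : 0 < ‖w‖ := norm_pos_iff.2 hw0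
          calc mt * ‖w‖ ≤ (‖w‖⁻¹ * ‖T w - (z:ℂ) • w‖) * ‖w‖ := by nlinarith [h13]
            _ = ‖T w - (z:ℂ) • w‖ := by field_simp
    obtain ⟨mt, hmt0, hmtb⟩ := hmt
    -- choose parameters
    have hCε : 0 < C + ε := by linarith
    set η := min (gap/2) (ε * mt/(2*C*(C+ε))) with hηdef
    have hη0 : 0 < η := lt_min (by linarith) (by positivity)
    set dbound := ε * mt/(2*(C+ε)) with hdb
    have hdb0 : 0 < dbound := by positivity
    obtain ⟨δ₁, hδ₁0, hδ₁⟩ := hcont t ht η hη0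
    set δ := min δ₁ (dbound/(K*L+1)) with hδdef
    have hKL : 0 ≤ K * L := mul_nonneg hK.le hL0
    have hKL1 : 0 < K*L+1 := by linarith
    have hδ0 : 0 < δ := lt_min hδ₁0 (by positivity)
    refine ⟨δ, hδ0, ?_⟩
    intro s hs hsδ
    set lam' := g s j with hlam'
    have hγs : γ s ∈ Ω := hγΩ s hs
    have hηs : |lam' - lam| ≤ η := by
      have h15 := hδ₁ s hs (lt_of_lt_of_le hsδ (min_le_left _ _))
      calc |lam' - lam| = dist (g s j) (g t j) := by rw [Real.dist_eq]
        _ ≤ dist (g s) (g t) := dist_le_pi_dist _ _ j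
        _ ≤ η := h15
    have hΔ : ‖A (γ s) - T‖ ≤ K * L * |s - t| := hALip s hs t ht
    have hΔb : ‖A (γ s) - T‖ ≤ dbound := by
      refine le_trans hΔ ?_
      have h16 : |s - t| ≤ δ := le_of_lt hsδ
      have h17 : δ ≤ dbound/(K*L+1) := min_le_right _ _
      calc K * L * |s - t| ≤ K * L * (dbound/(K*L+1)) := by
            apply mul_le_mul_of_nonneg_left (le_trans h16 h17) hKL
        _ = dbound * (K*L) / (K*L+1) := by ring
        _ ≤ dbound * (K*L+1) / (K*L+1) := by gcongr <;> linarith [hdb0.le]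
        _ = dbound := by field_simp
    -- eigenvector for A (γ s)
    obtain ⟨v, hv1, hv⟩ := heig (γ s) hγs j
    have hPW : ∀ y, P ((T - zc • 1) y) = 0 := by
      intro y
      apply hPright
      exact ⟨y, rfl⟩
    have hPT : ∀ y, P (T y) = zc • P y := by
      intro y
      have h19 := hPW y
      rw [happ] at h19
      have h20 : P (T y) - zc • P y = 0 := by
        rw [← map_smul, ← map_sub]
        exact h19
      exact sub_eq_zero.1 h20
    have hkey : ((lam' : ℂ) - zc) • P v = P ((A (γ s) - T) v) := by
      have h21 : (A (γ s) - T) v = (lam' : ℂ) • v - T v := by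
        rw [happ2, hv]
      rw [h21, map_sub, map_smul, hPT, sub_smul]
    have hPv_up : |lam' - lam| * ‖P v‖ ≤ C * ‖A (γ s) - T‖ := by
      have h22 : ‖((lam' : ℂ) - zc) • P v‖ = |lam' - lam| * ‖P v‖ := by
        rw [norm_smul]
        congr 1
        rw [hzc, show ((lam' : ℝ):ℂ) - ((lam : ℝ):ℂ) = (((lam' - lam : ℝ)):ℂ) by push_cast; ring,
          Complex.norm_real, Real.norm_eq_abs]
      calc |lam' - lam| * ‖P v‖ = ‖((lam' : ℂ) - zc) • P v‖ := h22.symm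
        _ = ‖P ((A (γ s) - T) v)‖ := by rw [hkey]
        _ ≤ ‖P‖ * ‖(A (γ s) - T) v‖ := P.le_opNorm _
        _ ≤ ‖P‖ * (‖A (γ s) - T‖ * ‖v‖) :=
            mul_le_mul_of_nonneg_left ((A (γ s) - T).le_opNorm v) (norm_nonneg P)
        _ ≤ C * ‖A (γ s) - T‖ := by
            rw [hv1, mul_one]
            exact mul_le_mul_of_nonneg_right hPnorm (norm_nonneg _)
    set w := v - P v with hwdef
    have hwW : w ∈ W := by
      rw [← hPker, LinearMap.mem_ker]
      show P w = 0
      rw [hwdef, map_sub, hPleft _ (hPmemK v), sub_self]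
    have hTwkey : T w - (lam' : ℂ) • w = -((lam' : ℂ) • v - T v) - ((zc - (lam' : ℂ)) • P v) := by
      have hTPv : T (P v) = zc • P v := (hKmem (P v)).1 (hPmemK v)
      rw [hwdef, map_sub, hTPv, smul_sub]
      module
    have hmt_applied : mt * ‖w‖ ≤ ‖A (γ s) - T‖ + C * η := by
      have h25 := hmtb lam' (le_trans hηs (min_le_left _ _)) w hwW
      have h26 : ‖T w - (lam' : ℂ) • w‖ ≤ ‖A (γ s) - T‖ + C * η := by
        rw [hTwkey]
        have h24 : (lam' : ℂ) • v - T v = (A (γ s) - T) v := by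
          rw [happ2, hv]
        rw [h24]
        have h27 : ‖zc - (lam' : ℂ)‖ = |lam - lam'| := by
          rw [hzc, show ((lam : ℝ):ℂ) - ((lam' : ℝ):ℂ) = (((lam - lam' : ℝ)):ℂ) by push_cast; ring,
            Complex.norm_real, Real.norm_eq_abs]
        have h28 : ‖P v‖ ≤ C := by
          calc ‖P v‖ ≤ ‖P‖ * ‖v‖ := P.le_opNorm v
            _ = ‖P‖ := by rw [hv1, mul_one]
            _ ≤ C := hPnorm
        have h29 : |lam - lam'| ≤ η := by rw [abs_sub_comm]; exact hηs
        calc ‖-((A (γ s) - T) v) - ((zc - (lam' : ℂ)) • P v)‖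
            ≤ ‖-((A (γ s) - T) v)‖ + ‖(zc - (lam' : ℂ)) • P v‖ := norm_sub_le _ _
          _ = ‖(A (γ s) - T) v‖ + ‖zc - (lam' : ℂ)‖ * ‖P v‖ := by rw [norm_neg, norm_smul]
          _ ≤ ‖A (γ s) - T‖ * ‖v‖ + ‖zc - (lam' : ℂ)‖ * ‖P v‖ := by
              have := (A (γ s) - T).le_opNorm v
              linarith
          _ ≤ ‖A (γ s) - T‖ + C * η := by
              rw [hv1, mul_one, h27]
              nlinarith [norm_nonneg (P v), hη0.le, hC.le, h28, h29,
                abs_nonneg (lam - lam')]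
      linarith [h25, h26]
    have hPv_low : C/(C+ε) ≤ ‖P v‖ := by
      rw [mul_comm] at hmt_applied
      have h30 : ‖w‖ ≤ (‖A (γ s) - T‖ + C * η)/mt := by
        rw [le_div_iff₀ hmt0]
        linarith [hmt_applied]
      have h32 : C * η ≤ C * (ε * mt/(2*C*(C+ε))) :=
        mul_le_mul_of_nonneg_left (min_le_right _ _) hC.le
      have h33 : C * (ε * mt/(2*C*(C+ε))) = ε * mt/(2*(C+ε)) := by
        field_simp
      have h34 : ‖w‖ ≤ ε/(C+ε) := by
        have hid : ε * mt/(C+ε) = ε * mt/(2*(C+ε)) + ε * mt/(2*(C+ε)) := by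
          field_simp
          ring
        calc ‖w‖ ≤ (‖A (γ s) - T‖ + C * η)/mt := h30
          _ ≤ (ε * mt/(C+ε))/mt := by
              refine div_le_div_of_nonneg_right ?_ hmt0.le
              rw [hid]
              linarith [hΔb, h32, h33]
          _ = ε/(C+ε) := by
              field_simp
      have h36 : 1 - ‖w‖ ≤ ‖P v‖ := by
        have h37 := norm_sub_norm_le v (v - P v)
        rw [sub_sub_cancel] at h37
        rw [hv1] at h37
        rw [hwdef]
        linarith
      have h38 : 1 - ε/(C+ε) = C/(C+ε) := by field_simp; ring
      linarith [h34, h36]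
    have hfinal : |lam' - lam| ≤ (C + ε) * ‖A (γ s) - T‖ := by
      have h39 : |lam' - lam| * (C/(C+ε)) ≤ C * ‖A (γ s) - T‖ := by
        calc |lam' - lam| * (C/(C+ε)) ≤ |lam' - lam| * ‖P v‖ :=
              mul_le_mul_of_nonneg_left hPv_low (abs_nonneg _)
          _ ≤ C * ‖A (γ s) - T‖ := hPv_up
      have h41 : |lam' - lam| = (|lam' - lam| * (C/(C+ε))) * ((C+ε)/C) := by
        field_simp
      rw [h41]
      calc (|lam' - lam| * (C/(C+ε))) * ((C+ε)/C)
          ≤ (C * ‖A (γ s) - T‖) * ((C+ε)/C) :=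
            mul_le_mul_of_nonneg_right h39 (by positivity)
        _ = (C+ε) * ‖A (γ s) - T‖ := by
            field_simp
    calc |g s j - g t j| = |lam' - lam| := rfl
      _ ≤ (C+ε) * ‖A (γ s) - T‖ := hfinal
      _ ≤ (C+ε) * (K*L*|s-t|) := mul_le_mul_of_nonneg_left hΔ hCε.le
      _ = (C+ε) * (K*L) * |s-t| := by ring
  -- local-to-global
  have hglob : ∀ ε > 0, |g 1 j - g 0 j| ≤ (C + ε) * (K * L) := by
    intro ε hε
    set M := (C + ε) * (K * L) with hM
    have hM0 : 0 ≤ M := mul_nonneg (by linarith) (mul_nonneg hK.le hL0)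
    set Ts : Set ℝ := {t | t ∈ Icc (0:ℝ) 1 ∧ |g t j - g 0 j| ≤ M * t} with hTs
    have h0T : (0:ℝ) ∈ Ts := ⟨⟨le_refl 0, zero_le_one⟩, by simp⟩
    have hTne : Ts.Nonempty := ⟨0, h0T⟩
    have hTbdd : BddAbove Ts := ⟨1, fun t ht => ht.1.2⟩
    set c := sSup Ts with hc
    have hc0 : 0 ≤ c := le_csSup hTbdd h0T
    have hc1 : c ≤ 1 := csSup_le hTne (fun t ht => ht.1.2)
    have hcIcc : c ∈ Icc (0:ℝ) 1 := ⟨hc0, hc1⟩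
    have hcT : c ∈ Ts := by
      obtain ⟨δ, hδ0, hδ⟩ := hloc ε hε c hcIcc
      obtain ⟨t₀, ht₀T, ht₀gt⟩ := exists_lt_of_lt_csSup hTne (by linarith : c - δ < c)
      have ht₀le : t₀ ≤ c := le_csSup hTbdd ht₀T
      have h42 := hδ t₀ ht₀T.1 (by rw [abs_sub_comm, abs_of_nonneg (by linarith)]; linarith)
      refine ⟨hcIcc, ?_⟩
      have h43 : |g c j - g 0 j| ≤ |g c j - g t₀ j| + |g t₀ j - g 0 j| := abs_sub_le _ _ _
      have h44 : |g c j - g t₀ j| ≤ M * (c - t₀) := by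
        rw [abs_sub_comm]
        calc |g t₀ j - g c j| ≤ (C+ε)*(K*L)*|t₀ - c| := h42
          _ = M * (c - t₀) := by rw [← hM, abs_sub_comm, abs_of_nonneg (by linarith)]
      have h45 : |g t₀ j - g 0 j| ≤ M * t₀ := ht₀T.2
      nlinarith [h43, h44, h45]
    by_cases hceq : c = 1
    · have h46 := hcT.2
      rw [hceq] at h46
      simpa using h46
    · exfalso
      have hclt : c < 1 := lt_of_le_of_ne hc1 hceq
      obtain ⟨δ, hδ0, hδ⟩ := hloc ε hε c hcIcc
      set s₁ := min 1 (c + δ/2) with hs₁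
      have hs₁Icc : s₁ ∈ Icc (0:ℝ) 1 := ⟨le_min (by linarith) (by linarith), min_le_left _ _⟩
      have hs₁gt : c < s₁ := lt_min hclt (by linarith)
      have hs₁close : |s₁ - c| < δ := by
        rw [abs_of_nonneg (by linarith)]
        have h47 : s₁ ≤ c + δ/2 := min_le_right _ _
        linarith
      have h46 := hδ s₁ hs₁Icc hs₁close
      have hs₁T : s₁ ∈ Ts := by
        refine ⟨hs₁Icc, ?_⟩
        have h47 : |g s₁ j - g 0 j| ≤ |g s₁ j - g c j| + |g c j - g 0 j| := abs_sub_le _ _ _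
        have h48 : |g s₁ j - g c j| ≤ M * (s₁ - c) := by
          calc |g s₁ j - g c j| ≤ (C+ε)*(K*L)*|s₁ - c| := h46
            _ = M * (s₁ - c) := by rw [← hM, abs_of_nonneg (by linarith)]
        nlinarith [hcT.2]
      have := le_csSup hTbdd hs₁T
      linarith
  -- conclusion
  have hγ0 : γ 0 = a := by simp [hγ]
  have hγ1 : γ 1 = a' := by simp [hγ]
  have hfin : |μ a j - μ a' j| ≤ C * K * L := by
    apply le_of_forall_pos_le_add
    intro δ hδ
    have hKL : 0 ≤ K * L := mul_nonneg hK.le hL0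
    have hKL1 : 0 < K*L+1 := by linarith
    set ε := δ/(K*L+1) with hε'
    have hε0 : 0 < ε := div_pos hδ hKL1
    have h49 := hglob ε hε0
    have h49' : |μ (γ 1) j - μ (γ 0) j| ≤ (C + ε) * (K * L) := h49
    rw [hγ0, hγ1] at h49'
    have h51 : ε * (K*L) ≤ δ := by
      rw [hε']
      calc δ/(K*L+1) * (K*L) ≤ δ/(K*L+1) * (K*L+1) := by
            apply mul_le_mul_of_nonneg_left (by linarith) (by positivity)
        _ = δ := by field_simp
    calc |μ a j - μ a' j| = |μ a' j - μ a j| := abs_sub_comm _ _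
      _ ≤ (C + ε) * (K * L) := h49'
      _ = C*K*L + ε*(K*L) := by ring
      _ ≤ C * K * L + δ := by linarith
  have hnorm : ‖a - a'‖ = L := by rw [hLdef, norm_sub_rev]
  rw [hnorm]
  exact hfin
end
end

section
/- Under the uniform strong hyperbolicity hypothesis, the spectral projector Π_Λ(a) onto the group Λ(a) of eigenvalues near a cluster satisfies the Lipschitz bound ‖Π_Λ(a) − Π_Λ(a′)‖ ≤ C K δ⁻¹ |a − a′|, where δ is the spectral gap separating the cluster from the rest of the spectrum. -/
noncomputable section

set_option linter.unusedSectionVars false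
set_option maxHeartbeats 1000000

namespace SpectralAux

open Module Submodule

variable {V : Type*} [NormedAddCommGroup V] [NormedSpace ℂ V] [FiniteDimensional ℂ V]

lemma coe_sub_smul_one (B : V →L[ℂ] V) (z : ℂ) :
    ((B - z • 1 : V →L[ℂ] V) : V →ₗ[ℂ] V) = (B : V →ₗ[ℂ] V) - z • 1 := by
  ext x; simp

lemma ker_clm (B : V →L[ℂ] V) (z : ℂ) :
    LinearMap.ker ((B - z • 1 : V →L[ℂ] V) : V →ₗ[ℂ] V) = LinearMap.ker ((B : V →ₗ[ℂ] V) - z • 1) := by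
  rw [coe_sub_smul_one]

lemma range_clm (B : V →L[ℂ] V) (z : ℂ) :
    LinearMap.range ((B - z • 1 : V →L[ℂ] V) : V →ₗ[ℂ] V) = LinearMap.range ((B : V →ₗ[ℂ] V) - z • 1) := by
  rw [coe_sub_smul_one]

theorem eigproj (B : V →L[ℂ] V)
    (hss : ∀ z : ℂ, LinearMap.ker ((B - z • 1 : V →L[ℂ] V) : V →ₗ[ℂ] V) ⊓ LinearMap.range ((B - z • 1 : V →L[ℂ] V) : V →ₗ[ℂ] V) = ⊥) :
    ∃ (S : Finset ℂ) (Q : ℂ → (V →L[ℂ] V)),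
      S.card ≤ Module.finrank ℂ V ∧
      (∀ μ : ℂ, μ ∈ S ↔ Module.End.HasEigenvalue (B : V →ₗ[ℂ] V) μ) ∧
      (∑ μ ∈ S, Q μ) = 1 ∧
      (∀ μ : ℂ, Q μ * Q μ = Q μ) ∧
      (∀ μ : ℂ, LinearMap.range (Q μ : V →ₗ[ℂ] V) = LinearMap.ker ((B - μ • 1 : V →L[ℂ] V) : V →ₗ[ℂ] V)) ∧
      (∀ μ : ℂ, LinearMap.ker (Q μ : V →ₗ[ℂ] V) = LinearMap.range ((B - μ • 1 : V →L[ℂ] V) : V →ₗ[ℂ] V)) ∧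
      (∀ μ : ℂ, B * Q μ = μ • Q μ) ∧
      (∀ μ : ℂ, Q μ * B = μ • Q μ) ∧
      (∀ lam μ : ℂ, lam ≠ μ → Q lam * Q μ = 0) := by
  classical
  set f : Module.End ℂ V := (B : V →ₗ[ℂ] V) with hf
  -- semisimplicity: powers of (f - μ) have the same kernel
  have hpow : ∀ (μ : ℂ) (k : ℕ) (x : V), ((f - μ • 1) ^ k) x = 0 → (f - μ • 1) x = 0 := by
    intro μ k
    induction k with
    | zero =>
        intro x hx
        simp only [pow_zero, Module.End.one_apply] at hx
        simp [hx]
    | succ k ih =>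
        intro x hx
        rw [pow_succ] at hx
        have hx' : ((f - μ • 1) ^ k) ((f - μ • 1) x) = 0 := by
          simpa [Module.End.mul_apply] using hx
        have h1 : (f - μ • 1) ((f - μ • 1) x) = 0 := ih _ hx'
        have hker : (f - μ • 1) x ∈ LinearMap.ker (f - μ • 1) := h1
        have hrange : (f - μ • 1) x ∈ LinearMap.range (f - μ • 1) :=
          LinearMap.mem_range_self _ x
        have hbot := hss μ
        rw [ker_clm, range_clm] at hbot
        have : (f - μ • 1) x ∈ (⊥ : Submodule ℂ V) := by
          rw [← hbot]; exact ⟨hker, hrange⟩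
        simpa using this
  have hmax : ∀ μ : ℂ, Module.End.maxGenEigenspace f μ = Module.End.eigenspace f μ := by
    intro μ
    apply le_antisymm
    · intro x hx
      rw [Module.End.mem_maxGenEigenspace] at hx
      obtain ⟨k, hk⟩ := hx
      have := hpow μ k x hk
      rw [Module.End.eigenspace_def]
      exact this
    · exact Module.End.genEigenspace_le_maximal f μ 1
  have htop : ⨆ μ : ℂ, Module.End.eigenspace f μ = ⊤ := by
    have := Module.End.iSup_maxGenEigenspace_eq_top f
    simpa [hmax] using this
  have hind : iSupIndep (Module.End.eigenspace f) := Module.End.eigenspaces_iSupIndep f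
  set E : ℂ → Submodule ℂ V := Module.End.eigenspace f with hE
  set Kc : ℂ → Submodule ℂ V := fun μ => ⨆ (w : ℂ) (_ : w ≠ μ), E w with hKc
  have hEle : ∀ {w μ : ℂ}, w ≠ μ → E w ≤ Kc μ := by
    intro w μ hw
    exact le_iSup₂ (f := fun (w : ℂ) (_ : w ≠ μ) => E w) w hw
  have hcompl : ∀ μ : ℂ, IsCompl (E μ) (Kc μ) := by
    intro μ
    constructor
    · exact hind μ
    · rw [codisjoint_iff]
      apply le_antisymm le_top
      rw [← htop]
      apply iSup_le
      intro w
      by_cases hw : w = μ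
      · subst hw; exact le_sup_left
      · exact le_trans (hEle hw) le_sup_right
  -- eigenspaces are f-invariant, hence so is Kc
  have hEinv : ∀ (w : ℂ), Submodule.map f (E w) ≤ E w := by
    intro w
    rintro _ ⟨y, hy, rfl⟩
    rw [SetLike.mem_coe] at hy
    rw [hE, Module.End.mem_eigenspace_iff] at hy ⊢
    rw [hy, map_smul, hy]
  have hKcinv : ∀ (μ : ℂ) (y : V), y ∈ Kc μ → f y ∈ Kc μ := by
    intro μ y hy
    have : Submodule.map f (Kc μ) ≤ Kc μ := by
      rw [hKc]
      simp only [Submodule.map_iSup]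
      exact iSup₂_le fun w hw => le_trans (hEinv w) (hEle hw)
    exact this ⟨y, hy, rfl⟩
  -- the projectors
  set Q : ℂ → (V →L[ℂ] V) := fun μ =>
    LinearMap.toContinuousLinearMap
      ((E μ).subtype ∘ₗ Submodule.projectionOnto (E μ) (Kc μ) (hcompl μ)) with hQ
  have hQapply : ∀ (μ : ℂ) (x : V),
      Q μ x = (Submodule.projectionOnto (E μ) (Kc μ) (hcompl μ) x : V) := by
    intro μ x; rfl
  have hQleft : ∀ (μ : ℂ) (x : V), x ∈ E μ → Q μ x = x := by
    intro μ x hx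
    rw [hQapply]
    rw [Submodule.projectionOnto_apply_left (hcompl μ) ⟨x, hx⟩]
  have hQright : ∀ (μ : ℂ) (x : V), x ∈ Kc μ → Q μ x = 0 := by
    intro μ x hx
    rw [hQapply, Submodule.projectionOnto_apply_of_mem_right (hcompl μ) hx]
    rfl
  have hQmem : ∀ (μ : ℂ) (x : V), Q μ x ∈ E μ := by
    intro μ x
    rw [hQapply]
    exact (Submodule.projectionOnto (E μ) (Kc μ) (hcompl μ) x).2
  have hQrange : ∀ μ : ℂ, LinearMap.range (Q μ : V →ₗ[ℂ] V) = E μ := by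
    intro μ
    apply le_antisymm
    · rintro _ ⟨x, rfl⟩; exact hQmem μ x
    · intro x hx
      exact ⟨x, hQleft μ x hx⟩
  have hQker : ∀ μ : ℂ, LinearMap.ker (Q μ : V →ₗ[ℂ] V) = Kc μ := by
    intro μ
    ext x
    simp only [LinearMap.mem_ker, ContinuousLinearMap.coe_coe]
    constructor
    · intro hx
      rw [hQapply] at hx
      have : Submodule.projectionOnto (E μ) (Kc μ) (hcompl μ) x = 0 := by
        exact_mod_cast Subtype.ext hx
      rwa [Submodule.projectionOnto_apply_eq_zero_iff] at this
    · intro hx; exact hQright μ x hx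
  have hidem : ∀ μ : ℂ, Q μ * Q μ = Q μ := by
    intro μ
    ext x
    rw [ContinuousLinearMap.mul_apply]
    exact hQleft μ _ (hQmem μ x)
  have hBQ : ∀ μ : ℂ, B * Q μ = μ • Q μ := by
    intro μ
    ext x
    rw [ContinuousLinearMap.mul_apply, ContinuousLinearMap.smul_apply]
    have := hQmem μ x
    rw [hE, Module.End.mem_eigenspace_iff] at this
    exact this
  have hQB : ∀ μ : ℂ, Q μ * B = μ • Q μ := by
    intro μ
    ext x
    rw [ContinuousLinearMap.mul_apply, ContinuousLinearMap.smul_apply]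
    have hdec : x = Q μ x + (x - Q μ x) := by abel
    have hmem2 : x - Q μ x ∈ Kc μ := by
      rw [← hQker μ, LinearMap.mem_ker, ContinuousLinearMap.coe_coe, map_sub]
      have : Q μ (Q μ x) = Q μ x := hQleft μ _ (hQmem μ x)
      rw [this, sub_self]
    have hBx : B x = B (Q μ x) + B (x - Q μ x) := by
      nth_rewrite 1 [hdec]; rw [map_add]
    rw [hBx, map_add]
    have h1 : B (Q μ x) = μ • Q μ x := by
      have := hQmem μ x
      rw [hE, Module.End.mem_eigenspace_iff] at this
      exact this
    have h2 : Q μ (B (x - Q μ x)) = 0 := by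
      apply hQright
      exact hKcinv μ _ hmem2
    rw [h1, map_smul, hQleft μ _ (hQmem μ x), h2, add_zero]
  have horth : ∀ lam μ : ℂ, lam ≠ μ → Q lam * Q μ = 0 := by
    intro lam μ hne
    ext x
    rw [ContinuousLinearMap.mul_apply]
    have : Q μ x ∈ Kc lam := hEle (Ne.symm hne) (hQmem μ x)
    rw [hQright lam _ this]; rfl
  -- range and kernel in CLM form
  have hQrange' : ∀ μ : ℂ, LinearMap.range (Q μ : V →ₗ[ℂ] V) = LinearMap.ker ((B - μ • 1 : V →L[ℂ] V) : V →ₗ[ℂ] V) := by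
    intro μ
    rw [hQrange, ker_clm, hE, ← Module.End.eigenspace_def]
  have hKcRange : ∀ μ : ℂ, Kc μ = LinearMap.range (f - μ • 1) := by
    intro μ
    have hle : Kc μ ≤ LinearMap.range (f - μ • 1) := by
      rw [hKc]
      apply iSup₂_le
      intro w hw
      intro x hx
      refine ⟨(w - μ)⁻¹ • x, ?_⟩
      rw [hE, Module.End.mem_eigenspace_iff] at hx
      have hwμ : w - μ ≠ 0 := sub_ne_zero.mpr hw
      rw [map_smul, LinearMap.sub_apply, hx, LinearMap.smul_apply, Module.End.one_apply,
        ← sub_smul, smul_smul, inv_mul_cancel₀ hwμ, one_smul]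
    apply Submodule.eq_of_le_of_finrank_eq hle
    have h1 : finrank ℂ (E μ) + finrank ℂ (Kc μ) = finrank ℂ V :=
      Submodule.finrank_add_eq_of_isCompl (hcompl μ)
    have h2 : finrank ℂ (LinearMap.range (f - μ • 1)) +
        finrank ℂ (LinearMap.ker (f - μ • 1)) = finrank ℂ V :=
      LinearMap.finrank_range_add_finrank_ker (f - μ • 1)
    have h3 : LinearMap.ker (f - μ • 1) = E μ := by
      rw [hE, Module.End.eigenspace_def]
    rw [h3] at h2
    omega
  have hQker' : ∀ μ : ℂ, LinearMap.ker (Q μ : V →ₗ[ℂ] V) = LinearMap.range ((B - μ • 1 : V →L[ℂ] V) : V →ₗ[ℂ] V) := by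
    intro μ
    rw [hQker, range_clm, hKcRange]
  -- the finite set of eigenvalues
  haveI hft : Fintype {μ : ℂ // E μ ≠ ⊥} := hind.fintypeNeBotOfFiniteDimensional
  haveI hft2 : Fintype ↥{μ : ℂ | E μ ≠ ⊥} := hft
  have hfin : ({μ : ℂ | E μ ≠ ⊥}).Finite := Set.toFinite _
  set S : Finset ℂ := hfin.toFinset with hS
  have hmemS : ∀ μ : ℂ, μ ∈ S ↔ E μ ≠ ⊥ := by
    intro μ; rw [hS, Set.Finite.mem_toFinset]; exact Iff.rfl
  have hcard : S.card ≤ finrank ℂ V := by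
    have h1 := hind.subtype_ne_bot_le_finrank (p := E)
    rw [hS, Set.Finite.card_toFinset]
    exact (Subsingleton.elim hft hft2) ▸ h1
  have hmemS' : ∀ μ : ℂ, μ ∈ S ↔ Module.End.HasEigenvalue f μ := by
    intro μ
    rw [hmemS μ, Module.End.hasEigenvalue_iff]
  -- sum of projectors is one
  have hsum : (∑ μ ∈ S, Q μ) = 1 := by
    ext x
    rw [ContinuousLinearMap.sum_apply, ContinuousLinearMap.one_apply]
    have hx : x ∈ ⨆ μ : ℂ, E μ := by rw [htop]; trivial
    refine Submodule.iSup_induction (motive := fun x => ∑ μ ∈ S, Q μ x = x) E hx ?_ ?_ ?_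
    · intro w y hyw
      by_cases hw : E w = ⊥
      · have hy0 : y = 0 := by rw [hw] at hyw; simpa using hyw
        subst hy0
        simp
      · have hwS : w ∈ S := (hmemS w).2 hw
        rw [Finset.sum_eq_single w]
        · exact hQleft w y hyw
        · intro μ hμ hne
          exact hQright μ y (hEle (Ne.symm hne) hyw)
        · intro h; exact absurd hwS h
    · simp
    · intro y z hy hz
      simp only [map_add]
      rw [Finset.sum_add_distrib, hy, hz]
  exact ⟨S, Q, hcard, hmemS', hsum, hidem, hQrange', hQker', hBQ, hQB, horth⟩
theorem sylv_core (B B' D R : V →L[ℂ] V) (S S' : Finset ℂ) (Q Q' : ℂ → (V →L[ℂ] V))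
    (Cp δ : ℝ) (hδ : 0 < δ) (hCp : 0 ≤ Cp)
    (hQ1 : (∑ μ ∈ S, Q μ) = 1) (hQ'1 : (∑ lam ∈ S', Q' lam) = 1)
    (hQBl : ∀ μ ∈ S, B * Q μ = μ • Q μ)
    (hQ'B'r : ∀ lam ∈ S', Q' lam * B' = lam • Q' lam)
    (hQn : ∀ μ ∈ S, ‖Q μ‖ ≤ Cp) (hQ'n : ∀ lam ∈ S', ‖Q' lam‖ ≤ Cp)
    (key : B' * D - D * B = R)
    (hvan : ∀ lam ∈ S', ∀ μ ∈ S,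
      Q' lam * D * Q μ = 0 ∨ δ / 2 ≤ ‖lam - μ‖) :
    ‖D‖ ≤ (S'.card : ℝ) * (S.card : ℝ) * Cp ^ 2 * (2 / δ) * ‖R‖ := by
  have hRnn : (0:ℝ) ≤ ‖R‖ := norm_nonneg _
  have termbd : ∀ lam ∈ S', ∀ μ ∈ S,
      ‖Q' lam * D * Q μ‖ ≤ Cp ^ 2 * (2 / δ) * ‖R‖ := by
    intro lam hlam μ hμ
    rcases hvan lam hlam μ hμ with h0 | hgap
    · rw [h0, norm_zero]
      positivity
    · have hne : lam - μ ≠ 0 := by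
        intro h
        rw [h, norm_zero] at hgap
        linarith
      have e1 : Q' lam * (B' * D - D * B) * Q μ
          = lam • (Q' lam * D * Q μ) - μ • (Q' lam * D * Q μ) := by
        rw [mul_sub, sub_mul]
        congr 1
        · rw [← mul_assoc, hQ'B'r lam hlam, smul_mul_assoc, smul_mul_assoc]
        · rw [← mul_assoc, mul_assoc (Q' lam * D) B (Q μ), hQBl μ hμ, mul_smul_comm]
      have h1 : (lam - μ) • (Q' lam * D * Q μ) = Q' lam * R * Q μ := by
        rw [← key, e1, sub_smul]
      have h2 : Q' lam * D * Q μ = (lam - μ)⁻¹ • (Q' lam * R * Q μ) := by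
        rw [← h1, smul_smul, inv_mul_cancel₀ hne, one_smul]
      have h3 : ‖(lam - μ)⁻¹‖ ≤ 2 / δ := by
        rw [norm_inv]
        have h4 : 0 < ‖lam - μ‖ := norm_pos_iff.mpr hne
        rw [← inv_le_inv₀ h4 (by linarith : (0:ℝ) < δ/2)] at hgap
        calc ‖lam - μ‖⁻¹ ≤ (δ/2)⁻¹ := hgap
          _ = 2 / δ := by rw [div_eq_mul_inv, mul_inv, inv_inv, mul_comm, div_eq_mul_inv]
      have h5 : ‖Q' lam * R * Q μ‖ ≤ Cp ^ 2 * ‖R‖ := by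
        calc ‖Q' lam * R * Q μ‖ ≤ ‖Q' lam * R‖ * ‖Q μ‖ := norm_mul_le _ _
          _ ≤ ‖Q' lam‖ * ‖R‖ * ‖Q μ‖ := by
              apply mul_le_mul_of_nonneg_right (norm_mul_le _ _) (norm_nonneg _)
          _ ≤ Cp * ‖R‖ * Cp := by
              apply mul_le_mul (mul_le_mul_of_nonneg_right (hQ'n lam hlam) hRnn)
                (hQn μ hμ) (norm_nonneg _)
              positivity
          _ = Cp ^ 2 * ‖R‖ := by ring
      calc ‖Q' lam * D * Q μ‖ = ‖(lam - μ)⁻¹ • (Q' lam * R * Q μ)‖ := by rw [← h2]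
        _ ≤ ‖(lam - μ)⁻¹‖ * ‖Q' lam * R * Q μ‖ := ContinuousLinearMap.opNorm_smul_le _ _
        _ ≤ (2/δ) * (Cp ^ 2 * ‖R‖) := by
            apply mul_le_mul h3 h5 (norm_nonneg _)
            positivity
        _ = Cp ^ 2 * (2 / δ) * ‖R‖ := by ring
  have hDsum : D = ∑ lam ∈ S', ∑ μ ∈ S, Q' lam * D * Q μ := by
    have h0 : D = (∑ lam ∈ S', Q' lam) * D * (∑ μ ∈ S, Q μ) := by
      rw [hQ'1, hQ1, one_mul, mul_one]
    calc D = (∑ lam ∈ S', Q' lam) * D * (∑ μ ∈ S, Q μ) := h0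
      _ = ∑ lam ∈ S', Q' lam * D * (∑ μ ∈ S, Q μ) := by
          rw [Finset.sum_mul, Finset.sum_mul]
      _ = ∑ lam ∈ S', ∑ μ ∈ S, Q' lam * D * Q μ := by
          apply Finset.sum_congr rfl
          intro lam _
          rw [Finset.mul_sum]
  calc ‖D‖ = ‖∑ lam ∈ S', ∑ μ ∈ S, Q' lam * D * Q μ‖ := by rw [← hDsum]
    _ ≤ ∑ lam ∈ S', ‖∑ μ ∈ S, Q' lam * D * Q μ‖ := norm_sum_le _ _
    _ ≤ ∑ lam ∈ S', ∑ μ ∈ S, ‖Q' lam * D * Q μ‖ :=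
        Finset.sum_le_sum fun lam _ => norm_sum_le _ _
    _ ≤ ∑ lam ∈ S', ∑ μ ∈ S, Cp ^ 2 * (2 / δ) * ‖R‖ :=
        Finset.sum_le_sum fun lam hlam =>
          Finset.sum_le_sum fun μ hμ => termbd lam hlam μ hμ
    _ = (S'.card : ℝ) * (S.card : ℝ) * Cp ^ 2 * (2 / δ) * ‖R‖ := by
        rw [Finset.sum_const, Finset.sum_const, nsmul_eq_mul, nsmul_eq_mul]
        ring

theorem sylv (B B' P P' : V →L[ℂ] V) (S S' : Finset ℂ) (Q Q' : ℂ → (V →L[ℂ] V))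
    (Cp δ : ℝ) (hδ : 0 < δ) (hCp : 0 ≤ Cp)
    (hQ1 : (∑ μ ∈ S, Q μ) = 1) (hQ'1 : (∑ lam ∈ S', Q' lam) = 1)
    (hQBl : ∀ μ ∈ S, B * Q μ = μ • Q μ)
    (hQ'B'r : ∀ lam ∈ S', Q' lam * B' = lam • Q' lam)
    (hQn : ∀ μ ∈ S, ‖Q μ‖ ≤ Cp) (hQ'n : ∀ lam ∈ S', ‖Q' lam‖ ≤ Cp)
    (hBP : B * P = P * B) (hB'P' : B' * P' = P' * B')
    (hvan : ∀ lam ∈ S', ∀ μ ∈ S,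
      Q' lam * (P' * (1 - P)) * Q μ = 0 ∨ δ / 2 ≤ ‖lam - μ‖) :
    ‖P' * (1 - P)‖ ≤ (S'.card : ℝ) * (S.card : ℝ) * Cp ^ 2 * (2 / δ) *
      ‖P' * (B' - B) * (1 - P)‖ := by
  apply sylv_core B B' (P' * (1 - P)) (P' * (B' - B) * (1 - P)) S S' Q Q' Cp δ hδ hCp
    hQ1 hQ'1 hQBl hQ'B'r hQn hQ'n _ hvan
  have c1 : B' * (P' * (1 - P)) = P' * B' * (1 - P) := by rw [← mul_assoc, hB'P']
  have c2 : (P' * (1 - P)) * B = P' * B * (1 - P) := by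
    have : (1 - P) * B = B * (1 - P) := by
      rw [sub_mul, mul_sub, one_mul, mul_one, hBP]
    rw [mul_assoc, this, ← mul_assoc]
  rw [c1, c2]
  noncomm_ring


end SpectralAux

end

noncomputable section

set_option maxHeartbeats 1600000
set_option linter.unusedSectionVars false

open SpectralAux

/-- Lipschitz dependence of the spectral projector onto a cluster of eigenvalues,
with constant proportional to K/δ, δ being the spectral gap isolating the cluster. -/
theorem stmt_14 (n N : ℕ) (Ω : Set (EuclideanSpace ℝ (Fin n)))
    (A : EuclideanSpace ℝ (Fin n) →
      (EuclideanSpace ℂ (Fin N) →L[ℂ] EuclideanSpace ℂ (Fin N)))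
    (K Cproj δ : ℝ) (hK : 0 < K) (hC : 0 < Cproj) (hδ : 0 < δ)
    (hLip : ∀ a ∈ Ω, ∀ a' ∈ Ω, ‖A a - A a'‖ ≤ K * ‖a - a'‖)
    (hreal : ∀ a ∈ Ω, ∀ z : ℂ,
      Module.End.HasEigenvalue
        ((A a : EuclideanSpace ℂ (Fin N) →ₗ[ℂ] EuclideanSpace ℂ (Fin N))) z →
        z.im = 0)
    (hss : ∀ a ∈ Ω, ∀ z : ℂ,
      LinearMap.ker ((A a - z • (1 : EuclideanSpace ℂ (Fin N) →L[ℂ] EuclideanSpace ℂ (Fin N)) : EuclideanSpace ℂ (Fin N) →L[ℂ] EuclideanSpace ℂ (Fin N)) : EuclideanSpace ℂ (Fin N) →ₗ[ℂ] EuclideanSpace ℂ (Fin N)) ⊓ LinearMap.range ((A a - z • (1 : EuclideanSpace ℂ (Fin N) →L[ℂ] EuclideanSpace ℂ (Fin N)) : EuclideanSpace ℂ (Fin N) →L[ℂ] EuclideanSpace ℂ (Fin N)) : EuclideanSpace ℂ (Fin N) →ₗ[ℂ] EuclideanSpace ℂ (Fin N)) = ⊥)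
    (hproj : ∀ a ∈ Ω, ∀ z : ℂ,
      ∀ Pr : EuclideanSpace ℂ (Fin N) →L[ℂ] EuclideanSpace ℂ (Fin N),
        Pr * Pr = Pr →
        LinearMap.range (Pr : EuclideanSpace ℂ (Fin N) →ₗ[ℂ] EuclideanSpace ℂ (Fin N)) = LinearMap.ker ((A a - z • (1 : EuclideanSpace ℂ (Fin N) →L[ℂ] EuclideanSpace ℂ (Fin N)) : EuclideanSpace ℂ (Fin N) →L[ℂ] EuclideanSpace ℂ (Fin N)) : EuclideanSpace ℂ (Fin N) →ₗ[ℂ] EuclideanSpace ℂ (Fin N)) →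
        LinearMap.ker (Pr : EuclideanSpace ℂ (Fin N) →ₗ[ℂ] EuclideanSpace ℂ (Fin N)) = LinearMap.range ((A a - z • (1 : EuclideanSpace ℂ (Fin N) →L[ℂ] EuclideanSpace ℂ (Fin N)) : EuclideanSpace ℂ (Fin N) →L[ℂ] EuclideanSpace ℂ (Fin N)) : EuclideanSpace ℂ (Fin N) →ₗ[ℂ] EuclideanSpace ℂ (Fin N)) →
        ‖Pr‖ ≤ Cproj)
    (a₀ : EuclideanSpace ℝ (Fin n)) (ha₀ : a₀ ∈ Ω)
    (Λ : Set ℝ)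
    (hΛ : ∀ lam ∈ Λ,
      Module.End.HasEigenvalue
        ((A a₀ : EuclideanSpace ℂ (Fin N) →ₗ[ℂ] EuclideanSpace ℂ (Fin N)))
        ((lam : ℝ) : ℂ))
    (hgap : ∀ lam ∈ Λ, ∀ lam' : ℝ,
      Module.End.HasEigenvalue
        ((A a₀ : EuclideanSpace ℂ (Fin N) →ₗ[ℂ] EuclideanSpace ℂ (Fin N)))
        ((lam' : ℝ) : ℂ) →
      lam' ∉ Λ → δ ≤ |lam - lam'|)
    (ω : Set (EuclideanSpace ℝ (Fin n))) (hωΩ : ω ⊆ Ω) (hωnhd : ω ∈ nhds a₀)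
    (hmove : ∀ a ∈ ω, ∀ z : ℂ,
      Module.End.HasEigenvalue
        ((A a : EuclideanSpace ℂ (Fin N) →ₗ[ℂ] EuclideanSpace ℂ (Fin N))) z →
      ∃ lam : ℝ,
        Module.End.HasEigenvalue
          ((A a₀ : EuclideanSpace ℂ (Fin N) →ₗ[ℂ] EuclideanSpace ℂ (Fin N)))
          ((lam : ℝ) : ℂ) ∧ ‖z - (lam : ℂ)‖ ≤ δ / 4)
    (P : EuclideanSpace ℝ (Fin n) →
      (EuclideanSpace ℂ (Fin N) →L[ℂ] EuclideanSpace ℂ (Fin N)))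
    (hPidem : ∀ a ∈ ω, P a * P a = P a)
    (hPrange : ∀ a ∈ ω,
      LinearMap.range (P a : EuclideanSpace ℂ (Fin N) →ₗ[ℂ] EuclideanSpace ℂ (Fin N)) =
        ⨆ (lam : ℝ) (_ : ∃ mu ∈ Λ, |lam - mu| ≤ δ / 4),
          LinearMap.ker ((A a - ((lam : ℝ) : ℂ) • (1 : EuclideanSpace ℂ (Fin N) →L[ℂ] EuclideanSpace ℂ (Fin N)) :
            EuclideanSpace ℂ (Fin N) →L[ℂ] EuclideanSpace ℂ (Fin N)) : EuclideanSpace ℂ (Fin N) →ₗ[ℂ] EuclideanSpace ℂ (Fin N)))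
    (hPker : ∀ a ∈ ω,
      LinearMap.ker (P a : EuclideanSpace ℂ (Fin N) →ₗ[ℂ] EuclideanSpace ℂ (Fin N)) =
        ⨆ (lam : ℝ) (_ :
          Module.End.HasEigenvalue
            ((A a : EuclideanSpace ℂ (Fin N) →ₗ[ℂ] EuclideanSpace ℂ (Fin N)))
            ((lam : ℝ) : ℂ) ∧ ∀ mu ∈ Λ, δ / 4 < |lam - mu|),
          LinearMap.ker ((A a - ((lam : ℝ) : ℂ) • (1 : EuclideanSpace ℂ (Fin N) →L[ℂ] EuclideanSpace ℂ (Fin N)) :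
            EuclideanSpace ℂ (Fin N) →L[ℂ] EuclideanSpace ℂ (Fin N)) : EuclideanSpace ℂ (Fin N) →ₗ[ℂ] EuclideanSpace ℂ (Fin N))) :
    ∃ C' : ℝ, 0 < C' ∧
      ∀ a ∈ ω, ∀ a' ∈ ω, ‖P a - P a'‖ ≤ C' * K * δ⁻¹ * ‖a - a'‖ := by
  classical
  -- the eigenprojector package at each point of ω
  have hpack := fun (a : EuclideanSpace ℝ (Fin n)) (ha : a ∈ ω) =>
    SpectralAux.eigproj (A a) (hss a (hωΩ ha))
  choose S Q hcard hmem hsum hidem hrange hker hBQ hQB horth using hpack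
  have hQnorm : ∀ (a) (ha : a ∈ ω) (μ : ℂ), ‖Q a ha μ‖ ≤ Cproj := fun a ha μ =>
    hproj a (hωΩ ha) μ (Q a ha μ) (hidem a ha μ) (hrange a ha μ) (hker a ha μ)
  -- all eigenvalues are real
  have hrealS : ∀ (a) (ha : a ∈ ω) (μ : ℂ), μ ∈ S a ha → μ = ((μ.re : ℝ) : ℂ) := by
    intro a ha μ hμ
    have him := hreal a (hωΩ ha) μ ((hmem a ha μ).1 hμ)
    apply Complex.ext <;> simp [him]
  set Near : ℂ → Prop := fun μ => ∃ mu ∈ Λ, |μ.re - mu| ≤ δ / 4 with hNear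
  -- action of P a on the eigenprojectors
  have hfix : ∀ (a) (ha : a ∈ ω) (x : EuclideanSpace ℂ (Fin N)),
      x ∈ LinearMap.range (P a : EuclideanSpace ℂ (Fin N) →ₗ[ℂ] EuclideanSpace ℂ (Fin N)) → P a x = x := by
    intro a ha x hx
    obtain ⟨y, rfl⟩ := hx
    show P a (P a y) = P a y
    calc P a (P a y) = (P a * P a) y := rfl
      _ = P a y := by rw [hPidem a ha]
  have hPQnear : ∀ (a) (ha : a ∈ ω) (μ : ℂ), μ ∈ S a ha → Near μ →
      P a * Q a ha μ = Q a ha μ := by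
    intro a ha μ hμ hN
    have hle : LinearMap.range (Q a ha μ : EuclideanSpace ℂ (Fin N) →ₗ[ℂ] EuclideanSpace ℂ (Fin N)) ≤ LinearMap.range (P a : EuclideanSpace ℂ (Fin N) →ₗ[ℂ] EuclideanSpace ℂ (Fin N)) := by
      rw [hrange a ha μ, hPrange a ha]
      have hμr := hrealS a ha μ hμ
      have : LinearMap.ker ((A a - μ • (1 : EuclideanSpace ℂ (Fin N) →L[ℂ] EuclideanSpace ℂ (Fin N)) : EuclideanSpace ℂ (Fin N) →L[ℂ] EuclideanSpace ℂ (Fin N)) : EuclideanSpace ℂ (Fin N) →ₗ[ℂ] EuclideanSpace ℂ (Fin N)) = LinearMap.ker ((A a - ((μ.re : ℝ) : ℂ) • (1 : EuclideanSpace ℂ (Fin N) →L[ℂ] EuclideanSpace ℂ (Fin N)) : EuclideanSpace ℂ (Fin N) →L[ℂ] EuclideanSpace ℂ (Fin N)) : EuclideanSpace ℂ (Fin N) →ₗ[ℂ] EuclideanSpace ℂ (Fin N)) := by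
        rw [← hμr]
      rw [this]
      exact le_iSup₂ (f := fun (lam : ℝ) (_ : ∃ mu ∈ Λ, |lam - mu| ≤ δ / 4) =>
        LinearMap.ker ((A a - ((lam : ℝ) : ℂ) • (1 : EuclideanSpace ℂ (Fin N) →L[ℂ] EuclideanSpace ℂ (Fin N)) : EuclideanSpace ℂ (Fin N) →L[ℂ] EuclideanSpace ℂ (Fin N)) : EuclideanSpace ℂ (Fin N) →ₗ[ℂ] EuclideanSpace ℂ (Fin N))) μ.re hN
    refine ContinuousLinearMap.ext fun x => ?_
    exact hfix a ha _ (hle (LinearMap.mem_range_self _ x))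
  have hPQfar : ∀ (a) (ha : a ∈ ω) (μ : ℂ), μ ∈ S a ha → ¬ Near μ →
      P a * Q a ha μ = 0 := by
    intro a ha μ hμ hN
    have hcond : Module.End.HasEigenvalue
        ((A a : EuclideanSpace ℂ (Fin N) →ₗ[ℂ] EuclideanSpace ℂ (Fin N)))
        ((μ.re : ℝ) : ℂ) ∧ ∀ mu ∈ Λ, δ / 4 < |μ.re - mu| := by
      constructor
      · have := (hmem a ha μ).1 hμ
        rwa [hrealS a ha μ hμ] at this
      · intro mu hmu
        by_contra hcon
        exact hN ⟨mu, hmu, le_of_not_gt hcon⟩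
    have hle : LinearMap.range (Q a ha μ : EuclideanSpace ℂ (Fin N) →ₗ[ℂ] EuclideanSpace ℂ (Fin N)) ≤ LinearMap.ker (P a : EuclideanSpace ℂ (Fin N) →ₗ[ℂ] EuclideanSpace ℂ (Fin N)) := by
      rw [hrange a ha μ, hPker a ha]
      have hμr := hrealS a ha μ hμ
      have heq : LinearMap.ker ((A a - μ • (1 : EuclideanSpace ℂ (Fin N) →L[ℂ] EuclideanSpace ℂ (Fin N)) : EuclideanSpace ℂ (Fin N) →L[ℂ] EuclideanSpace ℂ (Fin N)) : EuclideanSpace ℂ (Fin N) →ₗ[ℂ] EuclideanSpace ℂ (Fin N)) = LinearMap.ker ((A a - ((μ.re : ℝ) : ℂ) • (1 : EuclideanSpace ℂ (Fin N) →L[ℂ] EuclideanSpace ℂ (Fin N)) : EuclideanSpace ℂ (Fin N) →L[ℂ] EuclideanSpace ℂ (Fin N)) : EuclideanSpace ℂ (Fin N) →ₗ[ℂ] EuclideanSpace ℂ (Fin N)) := by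
        rw [← hμr]
      rw [heq]
      exact le_iSup₂ (f := fun (lam : ℝ) (_ : Module.End.HasEigenvalue
            ((A a : EuclideanSpace ℂ (Fin N) →ₗ[ℂ] EuclideanSpace ℂ (Fin N)))
            ((lam : ℝ) : ℂ) ∧ ∀ mu ∈ Λ, δ / 4 < |lam - mu|) =>
        LinearMap.ker ((A a - ((lam : ℝ) : ℂ) • (1 : EuclideanSpace ℂ (Fin N) →L[ℂ] EuclideanSpace ℂ (Fin N)) : EuclideanSpace ℂ (Fin N) →L[ℂ] EuclideanSpace ℂ (Fin N)) : EuclideanSpace ℂ (Fin N) →ₗ[ℂ] EuclideanSpace ℂ (Fin N))) μ.re hcond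
    refine ContinuousLinearMap.ext fun x => ?_
    have : Q a ha μ x ∈ LinearMap.ker (P a : EuclideanSpace ℂ (Fin N) →ₗ[ℂ] EuclideanSpace ℂ (Fin N)) := hle (LinearMap.mem_range_self _ x)
    simpa using this
  -- P a is the sum of the eigenprojectors of the eigenvalues near the cluster
  have hPsum : ∀ (a) (ha : a ∈ ω),
      P a = ∑ μ ∈ (S a ha).filter (fun μ => Near μ), Q a ha μ := by
    intro a ha
    calc P a = P a * ∑ μ ∈ S a ha, Q a ha μ := by rw [hsum a ha, mul_one]
      _ = ∑ μ ∈ S a ha, P a * Q a ha μ := Finset.mul_sum _ _ _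
      _ = ∑ μ ∈ S a ha, if Near μ then Q a ha μ else 0 := by
          apply Finset.sum_congr rfl
          intro μ hμ
          by_cases hN : Near μ
          · rw [if_pos hN, hPQnear a ha μ hμ hN]
          · rw [if_neg hN, hPQfar a ha μ hμ hN]
      _ = ∑ μ ∈ (S a ha).filter (fun μ => Near μ), Q a ha μ := (Finset.sum_filter _ _).symm
  -- P a commutes with A a
  have hPB : ∀ (a) (ha : a ∈ ω), A a * P a = P a * A a := by
    intro a ha
    rw [hPsum a ha, Finset.mul_sum, Finset.sum_mul]
    apply Finset.sum_congr rfl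
    intro μ _
    rw [hBQ a ha μ, hQB a ha μ]
  -- action of the eigenprojectors on P a (from the right)
  have hQPnear : ∀ (a) (ha : a ∈ ω) (lam : ℂ), lam ∈ S a ha → Near lam →
      Q a ha lam * P a = Q a ha lam := by
    intro a ha lam hlam hN
    rw [hPsum a ha, Finset.mul_sum]
    rw [Finset.sum_eq_single lam]
    · exact hidem a ha lam
    · intro μ hμ hne
      exact horth a ha lam μ (Ne.symm hne)
    · intro hcon
      exact absurd (Finset.mem_filter.2 ⟨hlam, hN⟩) hcon
  have hQPfar : ∀ (a) (ha : a ∈ ω) (lam : ℂ), ¬ Near lam →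
      Q a ha lam * P a = 0 := by
    intro a ha lam hN
    rw [hPsum a ha, Finset.mul_sum]
    apply Finset.sum_eq_zero
    intro μ hμ
    have hμN : Near μ := (Finset.mem_filter.1 hμ).2
    have hne : lam ≠ μ := fun h => hN (h ▸ hμN)
    exact horth a ha lam μ hne
  -- norm bound on P a
  have hfr : Module.finrank ℂ (EuclideanSpace ℂ (Fin N)) = N := by
    simp [finrank_euclideanSpace]
  have hPnorm : ∀ (a) (ha : a ∈ ω), ‖P a‖ ≤ (N : ℝ) * Cproj := by
    intro a ha
    rw [hPsum a ha]
    calc ‖∑ μ ∈ (S a ha).filter (fun μ => Near μ), Q a ha μ‖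
        ≤ ∑ μ ∈ (S a ha).filter (fun μ => Near μ), ‖Q a ha μ‖ := norm_sum_le _ _
      _ ≤ ∑ μ ∈ (S a ha).filter (fun μ => Near μ), Cproj :=
          Finset.sum_le_sum fun μ _ => hQnorm a ha μ
      _ = ((S a ha).filter (fun μ => Near μ)).card * Cproj := by
          rw [Finset.sum_const, nsmul_eq_mul]
      _ ≤ (N : ℝ) * Cproj := by
          apply mul_le_mul_of_nonneg_right _ hC.le
          have h1 : ((S a ha).filter (fun μ => Near μ)).card ≤ (S a ha).card :=
            Finset.card_filter_le _ _
          have h2 := hcard a ha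
          rw [hfr] at h2
          exact_mod_cast le_trans h1 h2
  -- spectral gap between near and far eigenvalues at different points of ω
  have hre_le : ∀ z : ℂ, |z.re| ≤ ‖z‖ := fun z => Complex.abs_re_le_norm z
  have hgapgen : ∀ (b) (hb : b ∈ ω) (c) (hc : c ∈ ω) (lam μ : ℂ),
      lam ∈ S b hb → μ ∈ S c hc → Near lam → ¬ Near μ → δ / 2 ≤ ‖lam - μ‖ := by
    intro b hb c hc lam μ hlamS hμS hNl hNm
    obtain ⟨mu, hmuΛ, hmu⟩ := hNl
    obtain ⟨ν₀, hν₀eig, hν₀close⟩ := hmove c hc μ ((hmem c hc μ).1 hμS)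
    have hre : |μ.re - ν₀| ≤ δ / 4 := by
      have := hre_le (μ - (ν₀ : ℂ))
      simp only [Complex.sub_re, Complex.ofReal_re] at this
      exact le_trans this hν₀close
    have hν₀Λ : ν₀ ∉ Λ := fun h => hNm ⟨ν₀, h, hre⟩
    have hg := hgap mu hmuΛ ν₀ hν₀eig hν₀Λ
    have t1 : |mu - ν₀| ≤ |mu - lam.re| + |lam.re - ν₀| := abs_sub_le _ _ _
    have t2 : |lam.re - ν₀| ≤ |lam.re - μ.re| + |μ.re - ν₀| := abs_sub_le _ _ _
    have t3 : |mu - lam.re| = |lam.re - mu| := abs_sub_comm _ _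
    have t4 : |lam.re - μ.re| ≤ ‖lam - μ‖ := by
      have := hre_le (lam - μ)
      simpa [Complex.sub_re] using this
    linarith
  -- the two Sylvester estimates
  refine ⟨4 * (N : ℝ) ^ 2 * Cproj ^ 2 * ((N : ℝ) * Cproj) * (1 + (N : ℝ) * Cproj) + 1,
    by positivity, ?_⟩
  intro a ha a' ha'
  have hAK : ‖A a' - A a‖ ≤ K * ‖a - a'‖ := by
    have := hLip a' (hωΩ ha') a (hωΩ ha)
    rwa [norm_sub_rev a a']
  have honele : ‖(1 : EuclideanSpace ℂ (Fin N) →L[ℂ] EuclideanSpace ℂ (Fin N))‖ ≤ 1 := by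
    rw [ContinuousLinearMap.one_def]
    exact ContinuousLinearMap.norm_id_le
  have hone_sub : ∀ (b) (hb : b ∈ ω),
      ‖(1 : EuclideanSpace ℂ (Fin N) →L[ℂ] EuclideanSpace ℂ (Fin N)) - P b‖
        ≤ 1 + (N : ℝ) * Cproj := by
    intro b hb
    calc ‖(1 : EuclideanSpace ℂ (Fin N) →L[ℂ] EuclideanSpace ℂ (Fin N)) - P b‖
        ≤ ‖(1 : EuclideanSpace ℂ (Fin N) →L[ℂ] EuclideanSpace ℂ (Fin N))‖ + ‖P b‖ :=
          norm_sub_le _ _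
      _ ≤ 1 + (N : ℝ) * Cproj := add_le_add honele (hPnorm b hb)
  -- assoc helper
  have hassoc : ∀ (x b c y : EuclideanSpace ℂ (Fin N) →L[ℂ] EuclideanSpace ℂ (Fin N)),
      x * (b * c) * y = (x * b) * (c * y) := by
    intro x b c y
    rw [← mul_assoc, mul_assoc (x * b) c y]
  -- first estimate : D = P a' * (1 - P a)
  have hvan1 : ∀ lam ∈ S a' ha', ∀ μ ∈ S a ha,
      Q a' ha' lam * (P a' * (1 - P a)) * Q a ha μ = 0 ∨ δ / 2 ≤ ‖lam - μ‖ := by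
    intro lam hlam μ hμ
    by_cases hNl : Near lam
    · by_cases hNm : Near μ
      · left
        rw [hassoc, sub_mul, one_mul, hPQnear a ha μ hμ hNm, sub_self, mul_zero]
      · right
        exact hgapgen a' ha' a ha lam μ hlam hμ hNl hNm
    · left
      rw [hassoc, ← mul_assoc, hQPfar a' ha' lam hNl, zero_mul, zero_mul]
  have bound1 := SpectralAux.sylv (A a) (A a') (P a) (P a')
    (S a ha) (S a' ha') (Q a ha) (Q a' ha') Cproj δ hδ hC.le
    (hsum a ha) (hsum a' ha')
    (fun μ _ => hBQ a ha μ) (fun lam _ => hQB a' ha' lam)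
    (fun μ _ => hQnorm a ha μ) (fun lam _ => hQnorm a' ha' lam)
    (hPB a ha) (hPB a' ha') hvan1
  -- second estimate : D = (1 - P a') * P a
  have hcomm1 : ∀ (b) (hb : b ∈ ω), A b * (1 - P b) = (1 - P b) * A b := by
    intro b hb
    rw [mul_sub, sub_mul, mul_one, one_mul, hPB b hb]
  have hvan2 : ∀ lam ∈ S a' ha', ∀ μ ∈ S a ha,
      Q a' ha' lam * ((1 - P a') * (1 - (1 - P a))) * Q a ha μ = 0 ∨ δ / 2 ≤ ‖lam - μ‖ := by
    intro lam hlam μ hμ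
    rw [sub_sub_cancel]
    by_cases hNl : Near lam
    · left
      rw [hassoc, ← mul_assoc, mul_sub, mul_one, hQPnear a' ha' lam hlam hNl, sub_self,
        zero_mul, zero_mul]
    · by_cases hNm : Near μ
      · right
        have := hgapgen a ha a' ha' μ lam hμ hlam hNm hNl
        rwa [norm_sub_rev] at this
      · left
        rw [hassoc, hPQfar a ha μ hμ hNm, mul_zero]
  have bound2 := SpectralAux.sylv (A a) (A a') (1 - P a) (1 - P a')
    (S a ha) (S a' ha') (Q a ha) (Q a' ha') Cproj δ hδ hC.le
    (hsum a ha) (hsum a' ha')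
    (fun μ _ => hBQ a ha μ) (fun lam _ => hQB a' ha' lam)
    (fun μ _ => hQnorm a ha μ) (fun lam _ => hQnorm a' ha' lam)
    (hcomm1 a ha) (hcomm1 a' ha') hvan2
  rw [sub_sub_cancel] at bound2
  -- norms of the right-hand sides
  have hR1 : ‖P a' * (A a' - A a) * (1 - P a)‖ ≤
      ((N : ℝ) * Cproj) * (K * ‖a - a'‖) * (1 + (N : ℝ) * Cproj) := by
    calc ‖P a' * (A a' - A a) * (1 - P a)‖
        ≤ ‖P a' * (A a' - A a)‖ * ‖1 - P a‖ := norm_mul_le _ _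
      _ ≤ ‖P a'‖ * ‖A a' - A a‖ * ‖1 - P a‖ :=
          mul_le_mul_of_nonneg_right (norm_mul_le _ _) (norm_nonneg _)
      _ ≤ ((N : ℝ) * Cproj) * (K * ‖a - a'‖) * (1 + (N : ℝ) * Cproj) := by
          apply mul_le_mul _ (hone_sub a ha) (norm_nonneg _) (by positivity)
          apply mul_le_mul (hPnorm a' ha') hAK (norm_nonneg _) (by positivity)
  have hR2 : ‖(1 - P a') * (A a' - A a) * P a‖ ≤
      (1 + (N : ℝ) * Cproj) * (K * ‖a - a'‖) * ((N : ℝ) * Cproj) := by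
    calc ‖(1 - P a') * (A a' - A a) * P a‖
        ≤ ‖(1 - P a') * (A a' - A a)‖ * ‖P a‖ := norm_mul_le _ _
      _ ≤ ‖1 - P a'‖ * ‖A a' - A a‖ * ‖P a‖ :=
          mul_le_mul_of_nonneg_right (norm_mul_le _ _) (norm_nonneg _)
      _ ≤ (1 + (N : ℝ) * Cproj) * (K * ‖a - a'‖) * ((N : ℝ) * Cproj) := by
          apply mul_le_mul _ (hPnorm a ha) (norm_nonneg _) (by positivity)
          apply mul_le_mul (hone_sub a' ha') hAK (norm_nonneg _) (by positivity)
  -- cardinality bounds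
  have hc1 : ((S a ha).card : ℝ) ≤ (N : ℝ) := by
    have := hcard a ha; rw [hfr] at this; exact_mod_cast this
  have hc2 : ((S a' ha').card : ℝ) ≤ (N : ℝ) := by
    have := hcard a' ha'; rw [hfr] at this; exact_mod_cast this
  -- combine
  have hsplit : P a - P a' = (1 - P a') * P a - P a' * (1 - P a) := by
    rw [sub_mul, mul_sub, one_mul, mul_one]
    abel
  have hT1 : ‖P a' * (1 - P a)‖ ≤ (N : ℝ) * (N : ℝ) * Cproj ^ 2 * (2 / δ) *
      (((N : ℝ) * Cproj) * (K * ‖a - a'‖) * (1 + (N : ℝ) * Cproj)) := by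
    refine le_trans bound1 ?_
    gcongr <;> first | exact hR1 | exact hc1 | exact hc2 | positivity
  have hT2 : ‖(1 - P a') * P a‖ ≤ (N : ℝ) * (N : ℝ) * Cproj ^ 2 * (2 / δ) *
      (((N : ℝ) * Cproj) * (K * ‖a - a'‖) * (1 + (N : ℝ) * Cproj)) := by
    refine le_trans bound2 ?_
    have hR2' : ‖(1 - P a') * (A a' - A a) * P a‖ ≤
        ((N : ℝ) * Cproj) * (K * ‖a - a'‖) * (1 + (N : ℝ) * Cproj) := by
      refine le_trans hR2 (le_of_eq ?_); ring
    gcongr <;> first | exact hR2' | exact hc1 | exact hc2 | positivity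
  have htotal : ‖P a - P a'‖ ≤ 2 * ((N : ℝ) * (N : ℝ) * Cproj ^ 2 * (2 / δ) *
      (((N : ℝ) * Cproj) * (K * ‖a - a'‖) * (1 + (N : ℝ) * Cproj))) := by
    rw [hsplit]
    calc ‖(1 - P a') * P a - P a' * (1 - P a)‖
        ≤ ‖(1 - P a') * P a‖ + ‖P a' * (1 - P a)‖ := norm_sub_le _ _
      _ ≤ _ := by linarith
  refine le_trans htotal ?_
  have heq : 2 * ((N : ℝ) * (N : ℝ) * Cproj ^ 2 * (2 / δ) *
      (((N : ℝ) * Cproj) * (K * ‖a - a'‖) * (1 + (N : ℝ) * Cproj))) =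
      (4 * (N : ℝ) ^ 2 * Cproj ^ 2 * ((N : ℝ) * Cproj) * (1 + (N : ℝ) * Cproj)) *
        K * δ⁻¹ * ‖a - a'‖ := by
    field_simp
    ring
  rw [heq]
  have hrest : (0 : ℝ) ≤ K * δ⁻¹ * ‖a - a'‖ := by positivity
  nlinarith [hrest]
end
end

section
/- (Key combinatorial matrix lemma) Let S₁,…,S_m and p₁,…,p_m be matrices and μ₁,…,μ_m distinct real numbers with ‖Sⱼ‖ ≤ K₁, ‖Sⱼ − Sₖ‖ ≤ K₁|μⱼ − μₖ|, and for every proper nonempty subset J ⊂ {1,…,m}, ‖Σ_{j∈J} pⱼ‖ ≤ K₂ ε (min_{j∈J, k∉J} |μⱼ − μₖ|)⁻¹, and Σⱼ pⱼ = 0. Then ‖Σⱼ Sⱼ pⱼ‖ ≤ C_m K₁ K₂ ε, where C_m depends only on m. -/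
noncomputable section

/-- Key combinatorial matrix lemma: there is a constant C_m depending only on m
such that ‖Σ Sⱼ pⱼ‖ ≤ C_m K₁ K₂ ε whenever the Sⱼ are K₁-bounded and mutually
K₁|μⱼ-μₖ|-close, the partial sums of the pⱼ over proper nonempty subsets J
satisfy ‖Σ_{j∈J} pⱼ‖ ≤ K₂ ε (min_{j∈J,k∉J}|μⱼ-μₖ|)⁻¹, and Σ pⱼ = 0. -/
theorem stmt_15 (m : ℕ) (hm : 1 ≤ m) :
    ∃ Cm : ℝ, 0 < Cm ∧
      ∀ (N : ℕ)
        (S p : Fin m → (EuclideanSpace ℂ (Fin N) →L[ℂ] EuclideanSpace ℂ (Fin N)))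
        (μ : Fin m → ℝ) (K₁ K₂ ε : ℝ),
        0 < K₁ → 0 < K₂ → 0 < ε →
        Function.Injective μ →
        (∀ j, ‖S j‖ ≤ K₁) →
        (∀ j k, ‖S j - S k‖ ≤ K₁ * |μ j - μ k|) →
        (∀ J : Finset (Fin m), J.Nonempty → J ≠ Finset.univ →
          ∃ j ∈ J, ∃ k, k ∉ J ∧ ‖∑ i ∈ J, p i‖ * |μ j - μ k| ≤ K₂ * ε) →
        (∑ j, p j = 0) →
        ‖∑ j, S j * p j‖ ≤ Cm * K₁ * K₂ * ε := by
  refine ⟨m, by exact_mod_cast Nat.lt_of_lt_of_le Nat.zero_lt_one hm, ?_⟩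
  intro N S p μ K₁ K₂ ε hK₁ hK₂ hε hμinj hSbd hSlip hJ hsum
  set E := EuclideanSpace ℂ (Fin N)
  set σ : Equiv.Perm (Fin m) := Tuple.sort μ with hσ
  have hmono : Monotone (μ ∘ σ) := Tuple.monotone_sort μ
  set f : ℕ → (E →L[ℂ] E) := fun n => if h : n < m then S (σ ⟨n, h⟩) else 0 with hf
  set g : ℕ → (E →L[ℂ] E) := fun n => if h : n < m then p (σ ⟨n, h⟩) else 0 with hg
  -- rewrite the sum via the sorting permutation
  have key : ∑ j, S j * p j = ∑ i ∈ Finset.range m, f i • g i := by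
    rw [← Equiv.sum_comp σ (fun j => S j * p j), ← Fin.sum_univ_eq_sum_range]
    refine Finset.sum_congr rfl fun i _ => ?_
    simp [hf, hg, i.isLt, smul_eq_mul]
  have hGm : ∑ i ∈ Finset.range m, g i = 0 := by
    rw [← Fin.sum_univ_eq_sum_range]
    have : ∑ i : Fin m, g i = ∑ i : Fin m, p (σ i) := by
      refine Finset.sum_congr rfl fun i _ => ?_
      simp [hg, i.isLt]
    rw [this, Equiv.sum_comp σ p, hsum]
  rw [key, Finset.sum_range_by_parts f g m, hGm, smul_zero, zero_sub, norm_neg]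
  -- bound each term of the Abel sum
  have hterm : ∀ i ∈ Finset.range (m - 1),
      ‖(f (i + 1) - f i) • ∑ j ∈ Finset.range (i + 1), g j‖ ≤ K₁ * (K₂ * ε) := by
    intro i hi
    rw [Finset.mem_range] at hi
    have hi1 : i + 1 < m := by omega
    have hi0 : i < m := by omega
    set a : Fin m := ⟨i + 1, hi1⟩
    set b : Fin m := ⟨i, hi0⟩
    have hfa : f (i + 1) - f i = S (σ a) - S (σ b) := by simp [hf, hi1, hi0, a, b]
    -- the partial sum as a sum over a set J
    set T : Finset (Fin m) := Finset.univ.filter (fun t : Fin m => (t : ℕ) ≤ i) with hT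
    set J : Finset (Fin m) := T.image σ with hJdef
    have hrange : Finset.range (i + 1) = (Finset.range m).filter (fun n => n ≤ i) := by
      ext n; simp [Finset.mem_filter]; omega
    have hG : ∑ j ∈ Finset.range (i + 1), g j = ∑ k ∈ J, p k := by
      rw [hJdef, Finset.sum_image (fun x _ y _ h => σ.injective h), hrange,
        Finset.sum_filter, ← Fin.sum_univ_eq_sum_range (fun n => if n ≤ i then g n else 0),
        hT, Finset.sum_filter]
      refine Finset.sum_congr rfl fun t _ => ?_
      by_cases h : (t : ℕ) ≤ i <;> simp [h, hg, t.isLt]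
    have hbJ : σ b ∈ J := by
      rw [hJdef]
      exact Finset.mem_image_of_mem σ (by simp [hT, b])
    have haJ : σ a ∉ J := by
      rw [hJdef]
      intro h
      rcases Finset.mem_image.mp h with ⟨t, ht, hta⟩
      have h1 : t = a := σ.injective hta
      have h2 : (t : ℕ) = i + 1 := by rw [h1]
      rw [hT, Finset.mem_filter] at ht
      omega
    have hJne : J.Nonempty := ⟨σ b, hbJ⟩
    have hJprop : J ≠ Finset.univ := fun h => haJ (h ▸ Finset.mem_univ _)
    obtain ⟨j, hjJ, k, hkJ, hjk⟩ := hJ J hJne hJprop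
    -- monotonicity consequences
    have hjle : μ j ≤ μ (σ b) := by
      rcases Finset.mem_image.mp (hJdef ▸ hjJ) with ⟨t, ht, htj⟩
      rw [hT, Finset.mem_filter] at ht
      have : t ≤ b := ht.2
      calc μ j = (μ ∘ σ) t := by rw [← htj]; rfl
        _ ≤ (μ ∘ σ) b := hmono this
    have hkge : μ (σ a) ≤ μ k := by
      have hk : σ.symm k ∉ T := by
        intro h
        have h' := Finset.mem_image_of_mem σ h
        rw [Equiv.apply_symm_apply] at h'
        exact hkJ (hJdef ▸ h')
      rw [hT, Finset.mem_filter] at hk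
      have : a ≤ σ.symm k := by
        simp only [Finset.mem_univ, true_and, not_le] at hk
        exact Fin.mk_le_of_le_val hk
      calc μ (σ a) = (μ ∘ σ) a := rfl
        _ ≤ (μ ∘ σ) (σ.symm k) := hmono this
        _ = μ k := by simp
    have hab : μ (σ b) ≤ μ (σ a) := hmono (show b ≤ a by simp [a, b, Fin.le_def])
    have habs : |μ (σ a) - μ (σ b)| ≤ |μ j - μ k| := by
      rw [abs_of_nonneg (by linarith), abs_sub_comm, abs_of_nonneg (by linarith)]
      linarith
    -- now the norm estimate
    set G := ∑ j ∈ Finset.range (i + 1), g j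
    calc ‖(f (i + 1) - f i) • G‖ = ‖(S (σ a) - S (σ b)) * G‖ := by rw [hfa, smul_eq_mul]
      _ ≤ ‖S (σ a) - S (σ b)‖ * ‖G‖ := norm_mul_le _ _
      _ ≤ (K₁ * |μ (σ a) - μ (σ b)|) * ‖G‖ := by
          exact mul_le_mul_of_nonneg_right (hSlip _ _) (norm_nonneg _)
      _ = K₁ * (‖G‖ * |μ (σ a) - μ (σ b)|) := by ring
      _ ≤ K₁ * (‖G‖ * |μ j - μ k|) := by
          exact mul_le_mul_of_nonneg_left
            (mul_le_mul_of_nonneg_left habs (norm_nonneg _)) hK₁.le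
      _ ≤ K₁ * (K₂ * ε) := by
          refine mul_le_mul_of_nonneg_left ?_ hK₁.le
          rw [hG] at *
          exact hjk
  calc ‖∑ i ∈ Finset.range (m - 1), (f (i + 1) - f i) • ∑ j ∈ Finset.range (i + 1), g j‖
      ≤ ∑ i ∈ Finset.range (m - 1), ‖(f (i + 1) - f i) • ∑ j ∈ Finset.range (i + 1), g j‖ :=
        norm_sum_le _ _
    _ ≤ ∑ _i ∈ Finset.range (m - 1), K₁ * (K₂ * ε) := Finset.sum_le_sum hterm
    _ = (m - 1 : ℕ) * (K₁ * (K₂ * ε)) := by rw [Finset.sum_const, nsmul_eq_mul, Finset.card_range]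
    _ ≤ (m : ℝ) * K₁ * K₂ * ε := by
        have h1 : ((m - 1 : ℕ) : ℝ) ≤ (m : ℝ) := by exact_mod_cast Nat.sub_le m 1
        have h2 : (0 : ℝ) ≤ K₁ * (K₂ * ε) := by positivity
        nlinarith [mul_le_mul_of_nonneg_right h1 h2]
end
end

section
/- If L(ξ̃) is hyperbolic in direction ν with |ν′| = 1, ν′ in the hyperbolicity cone Γ(ν), then the ball centered at ν′ of radius |p_N(ν′)|/K is contained in Γ(ν), where p_N(ξ̃) = det L(ξ̃) and K = max_{|ξ̃| ≤ 2} |∇ p_N(ξ̃)|. -/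
noncomputable section

/-- If L is hyperbolic in the direction ν and ν' belongs to the hyperbolicity cone
Γ(ν) with |ν'| = 1, then the ball of radius |det L(ν')|/K around ν' is contained
in Γ(ν), where K bounds |∇ det L| on the ball of radius 2. -/
theorem stmt_16 (d N : ℕ) (A : Fin (d + 1) → Matrix (Fin N) (Fin N) ℂ)
    (p : EuclideanSpace ℝ (Fin (d + 1)) → ℂ)
    (hp : ∀ ξ, p ξ = Matrix.det (∑ j, ((ξ j : ℝ) : ℂ) • A j))
    (ν ν' : EuclideanSpace ℝ (Fin (d + 1)))
    (hνhyp : p ν ≠ 0 ∧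
      ∀ ξ : EuclideanSpace ℝ (Fin (d + 1)), ∀ τ : ℂ,
        Matrix.det (∑ j, (((ξ j : ℝ) : ℂ) + τ * ((ν j : ℝ) : ℂ)) • A j) = 0 →
        τ.im = 0)
    (K : ℝ) (hK0 : 0 < K)
    (hK : ∀ ξ : EuclideanSpace ℝ (Fin (d + 1)), ‖ξ‖ ≤ 2 → ‖fderiv ℝ p ξ‖ ≤ K)
    (hν' : ν' ∈ connectedComponentIn {ξ | p ξ ≠ 0} ν)
    (hν'1 : ‖ν'‖ = 1) :
    Metric.ball ν' (‖p ν'‖ / K) ⊆ connectedComponentIn {ξ | p ξ ≠ 0} ν := by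
  rcases Nat.eq_zero_or_pos N with hN | hN
  · -- N = 0 : p ≡ 1, the set is everything
    subst hN
    have hall : {ξ : EuclideanSpace ℝ (Fin (d + 1)) | p ξ ≠ 0} = Set.univ := by
      ext ξ; simp [hp, Matrix.det_fin_zero]
    rw [hall, connectedComponentIn_univ]
    have huniv : Convex ℝ (Set.univ : Set (EuclideanSpace ℝ (Fin (d + 1)))) := convex_univ
    exact fun x _ => huniv.isPreconnected.subset_connectedComponent
      (Set.mem_univ ν) (Set.mem_univ x)
  · haveI : Nonempty (Fin N) := ⟨⟨0, hN⟩⟩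
    -- differentiability of p
    have hdiff : Differentiable ℝ p := by
      have hpe : p = fun ξ => ∑ σ : Equiv.Perm (Fin N),
          ((Equiv.Perm.sign σ : ℤ) : ℂ) * ∏ i, ∑ j, ((ξ j : ℝ) : ℂ) * A j (σ i) i := by
        funext ξ
        simp [hp, Matrix.det_apply', Matrix.sum_apply]
      rw [hpe]
      apply Differentiable.fun_sum
      intro σ _
      apply Differentiable.const_mul
      intro x
      have h : ∀ i : Fin N, Differentiable ℝ
          (fun ξ : EuclideanSpace ℝ (Fin (d + 1)) => ∑ j, ((ξ j : ℝ) : ℂ) * A j (σ i) i) := by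
        intro i
        apply Differentiable.fun_sum
        intro j _
        exact (Complex.ofRealCLM.differentiable.comp
          (EuclideanSpace.proj j).differentiable).mul_const _
      exact (HasFDerivAt.finset_prod (fun i _ => ((h i) x).hasFDerivAt)).differentiableAt
    have hp0 : p 0 = 0 := by
      rw [hp]
      have hz : (∑ j, (((0 : EuclideanSpace ℝ (Fin (d + 1))) j : ℝ) : ℂ) • A j) = 0 := by
        simp
      rw [hz]
      exact Matrix.det_zero
    set s : Set (EuclideanSpace ℝ (Fin (d + 1))) := Metric.closedBall 0 2 with hs
    have hconv : Convex ℝ s := convex_closedBall _ _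
    have hdiffs : ∀ x ∈ s, DifferentiableAt ℝ p x := fun x _ => hdiff x
    have hbound : ∀ x ∈ s, ‖fderiv ℝ p x‖ ≤ K := by
      intro x hx
      exact hK x (mem_closedBall_zero_iff.mp hx)
    have mvt : ∀ x ∈ s, ∀ y ∈ s, ‖p y - p x‖ ≤ K * ‖y - x‖ := fun x hx y hy =>
      hconv.norm_image_sub_le_of_norm_fderiv_le hdiffs hbound hx hy
    have hν's : ν' ∈ s := by
      simp only [hs, Metric.mem_closedBall, dist_zero_right, hν'1]; norm_num
    have h0s : (0 : EuclideanSpace ℝ (Fin (d + 1))) ∈ s := by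
      simp [hs]
    -- ‖p ν'‖ ≤ K
    have hpK : ‖p ν'‖ ≤ K := by
      have := mvt 0 h0s ν' hν's
      rw [hp0, sub_zero, sub_zero, hν'1, mul_one] at this
      exact this
    have hrK : ‖p ν'‖ / K ≤ 1 := by
      rw [div_le_one hK0]; exact hpK
    have hne : p ν' ≠ 0 := connectedComponentIn_subset _ _ hν'
    have hr0 : 0 < ‖p ν'‖ / K := div_pos (norm_pos_iff.mpr hne) hK0
    -- the ball lies in the set
    have hball : Metric.ball ν' (‖p ν'‖ / K) ⊆ {ξ | p ξ ≠ 0} := by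
      intro ξ hξ
      have hξs : ξ ∈ s := by
        have hd : dist ξ ν' < ‖p ν'‖ / K := hξ
        have : ‖ξ‖ ≤ ‖ν'‖ + ‖ξ - ν'‖ := norm_le_insert' _ _
        simp only [hs, Metric.mem_closedBall, dist_zero_right]
        calc ‖ξ‖ ≤ ‖ν'‖ + ‖ξ - ν'‖ := this
          _ ≤ 1 + 1 := by
              rw [hν'1]
              gcongr
              calc ‖ξ - ν'‖ = dist ξ ν' := (dist_eq_norm _ _).symm
                _ ≤ ‖p ν'‖ / K := le_of_lt hd
                _ ≤ 1 := hrK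
          _ = 2 := by norm_num
      intro hξ0
      have h1 := mvt ν' hν's ξ hξs
      rw [hξ0, zero_sub, norm_neg] at h1
      have h2 : K * ‖ξ - ν'‖ < ‖p ν'‖ := by
        have hd : ‖ξ - ν'‖ < ‖p ν'‖ / K := by
          rw [← dist_eq_norm]; exact hξ
        calc K * ‖ξ - ν'‖ < K * (‖p ν'‖ / K) := by gcongr
          _ = ‖p ν'‖ := by field_simp
      exact absurd (h1.trans_lt h2) (lt_irrefl _)
    -- ball is preconnected and contains ν'
    have hmem : ν' ∈ Metric.ball ν' (‖p ν'‖ / K) := Metric.mem_ball_self hr0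
    have hpre : IsPreconnected (Metric.ball ν' (‖p ν'‖ / K)) :=
      (convex_ball ν' _).isPreconnected
    have := hpre.subset_connectedComponentIn hmem hball
    rw [connectedComponentIn_eq hν']; exact this
end
end
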